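/- arXiv:2002.06694 — 6 statements merged into one kernel-verified Lean document; each statement's English description precedes it below -/
import Mathlib

section
/- Under the Stochastic Ball Model, if η_min ≥ 6√k, then the tuple of true centers β* = (β*_1, …, β*_k) is a global minimum of the population k-means objective G, and every global minimum β of G satisfies β_i = β*_{π(i)} for all i ∈ [k] for some permutation π of [k]; i.e., β* is the unique global minimum up to permutation of its components. -/
open MeasureTheory Metric Set

noncomputable section

/-- Density of the uniform distribution on the closed ball of center `c` and radius `r`
in `ℝ^d`. -/
def unifBallDensity (d : ℕ) (c : EuclideanSpace ℝ (Fin d)) (r : ℝ)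
    (x : EuclideanSpace ℝ (Fin d)) : ℝ :=
  (Metric.closedBall c r).indicator
    (fun _ => ((volume (Metric.closedBall c r)).toReal)⁻¹) x

/-- Mixture density of the Stochastic Ball Model with true centers `βstar` and radius `r`. -/
def ballMixDensity (d k : ℕ) (βstar : Fin k → EuclideanSpace ℝ (Fin d)) (r : ℝ)
    (x : EuclideanSpace ℝ (Fin d)) : ℝ :=
  (1 / (k : ℝ)) * ∑ s : Fin k, unifBallDensity d (βstar s) r x

/-- Population k-means objective with data density `f`. -/
def kmeansObj (d k : ℕ) (f : EuclideanSpace ℝ (Fin d) → ℝ)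
    (β : Fin k → EuclideanSpace ℝ (Fin d)) : ℝ :=
  ∫ x, (⨅ j : Fin k, ‖x - β j‖ ^ 2) * f x

/-- Minimum pairwise distance among the true centers. -/
def Deltamin (d k : ℕ) (βstar : Fin k → EuclideanSpace ℝ (Fin d)) : ℝ :=
  sInf {y : ℝ | ∃ s s' : Fin k, s ≠ s' ∧ y = dist (βstar s) (βstar s')}

section Aux

variable {d k : ℕ}

local notation "E" => EuclideanSpace ℝ (Fin d)

/-- The k-means integrand is continuous. -/
lemma sbm_ball_cont (β : Fin k → E) (hk : 0 < k) :
    Continuous (fun x : E => ⨅ j : Fin k, ‖x - β j‖ ^ 2) := by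
  haveI : NeZero k := ⟨hk.ne'⟩
  have : (fun x : E => ⨅ j : Fin k, ‖x - β j‖ ^ 2)
      = fun x => Finset.univ.inf' Finset.univ_nonempty (fun j => ‖x - β j‖ ^ 2) := by
    funext x
    rw [Finset.inf'_univ_eq_ciInf]
  rw [this]
  apply Continuous.finset_inf'_apply
  intro j _
  exact ((continuous_id.sub continuous_const).norm.pow 2)

lemma sbm_ball_intble (β : Fin k → E) (hk : 0 < k) (c : E) (r : ℝ) :
    IntegrableOn (fun x : E => ⨅ j : Fin k, ‖x - β j‖ ^ 2) (closedBall c r) volume :=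
  (sbm_ball_cont β hk).continuousOn.integrableOn_compact (isCompact_closedBall c r)

/-- The integral of a linear functional over a centered ball vanishes. -/
lemma sbm_odd_integral (r : ℝ) (w : E) :
    ∫ x in closedBall (0 : E) r, (inner ℝ x w : ℝ) = 0 := by
  set F : E → ℝ := (closedBall (0 : E) r).indicator (fun x => (inner ℝ x w : ℝ)) with hF
  have h1 : ∫ x in closedBall (0 : E) r, (inner ℝ x w : ℝ) = ∫ x, F x :=
    (integral_indicator (measurableSet_closedBall)).symm
  have hodd : ∀ x : E, F (-x) = - F x := by
    intro x
    by_cases hx : x ∈ closedBall (0 : E) r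
    · have hx' : -x ∈ closedBall (0 : E) r := by
        simpa [mem_closedBall, dist_zero_right] using hx
      simp [hF, hx, hx', inner_neg_left]
    · have hx' : -x ∉ closedBall (0 : E) r := by
        simpa [mem_closedBall, dist_zero_right] using hx
      simp [hF, hx, hx']
  have h2 : ∫ x, F x = - ∫ x, F x := by
    conv_lhs => rw [← integral_neg_eq_self F volume]
    simp_rw [hodd]
    exact integral_neg F
  rw [h1]
  linarith [h2]

lemma sbm_translate_integral (c b : E) (r : ℝ) :
    ∫ x in closedBall c r, ‖x - b‖ ^ 2 =
      ∫ x in closedBall (0 : E) r, ‖x - (b - c)‖ ^ 2 := by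
  rw [← integral_indicator (measurableSet_closedBall),
      ← integral_indicator (measurableSet_closedBall)]
  rw [← integral_add_right_eq_self
    ((closedBall c r).indicator (fun x : E => ‖x - b‖ ^ 2)) c]
  congr 1
  funext x
  by_cases hx : x ∈ closedBall (0 : E) r
  · have hx' : x + c ∈ closedBall c r := by
      simpa [mem_closedBall, dist_eq_norm] using hx
    simp only [indicator_of_mem hx', indicator_of_mem hx]
    congr 1
    abel_nf
  · have hx' : x + c ∉ closedBall c r := by
      simpa [mem_closedBall, dist_eq_norm] using hx
    simp [indicator_of_notMem hx', indicator_of_notMem hx]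

/-- Bias-variance expansion of the second moment of a ball around an arbitrary point. -/
lemma sbm_expand_integral (c b : E) (r : ℝ) :
    ∫ x in closedBall c r, ‖x - b‖ ^ 2 =
      (∫ x in closedBall (0 : E) r, ‖x‖ ^ 2)
        + (volume (closedBall (0 : E) r)).toReal * ‖b - c‖ ^ 2 := by
  rw [sbm_translate_integral]
  set w := b - c with hw
  have hexp : ∀ x : E, ‖x - w‖ ^ 2 = ‖x‖ ^ 2 - 2 * (inner ℝ x w : ℝ) + ‖w‖ ^ 2 := by
    intro x
    exact norm_sub_sq_real x w
  simp_rw [hexp]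
  have h1 : IntegrableOn (fun x : E => ‖x‖ ^ 2) (closedBall (0 : E) r) volume :=
    (continuous_id.norm.pow 2).continuousOn.integrableOn_compact (isCompact_closedBall _ _)
  have h2 : IntegrableOn (fun x : E => 2 * (inner ℝ x w : ℝ)) (closedBall (0 : E) r) volume :=
    (continuous_const.mul ((continuous_id.inner continuous_const))).continuousOn.integrableOn_compact
      (isCompact_closedBall _ _)
  have h3 : IntegrableOn (fun _ : E => ‖w‖ ^ 2) (closedBall (0 : E) r) volume :=
    integrableOn_const measure_closedBall_lt_top.ne
  have h12 : IntegrableOn (fun x : E => ‖x‖ ^ 2 - 2 * (inner ℝ x w : ℝ))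
      (closedBall (0 : E) r) volume := h1.sub h2
  rw [integral_add h12 h3, integral_sub h1 h2, MeasureTheory.integral_const_mul,
    sbm_odd_integral, setIntegral_const]
  simp [smul_eq_mul, Measure.real]

/-- The second moment of a ball is strictly less than `vol * r^2`. -/
lemma sbm_m_lt (r : ℝ) (hr : 0 < r) :
    (∫ x in closedBall (0 : E) r, ‖x‖ ^ 2)
      < (volume (closedBall (0 : E) r)).toReal * r ^ 2 := by
  set S := closedBall (0 : E) r with hS
  set T := closedBall (0 : E) (r / 2) with hT
  have hTS : T ⊆ S := closedBall_subset_closedBall (by linarith)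
  have h1 : IntegrableOn (fun x : E => ‖x‖ ^ 2) S volume :=
    (continuous_id.norm.pow 2).continuousOn.integrableOn_compact (isCompact_closedBall _ _)
  have hSconst : ∫ _ in S, r ^ 2 = (volume S).toReal * r ^ 2 := by
    rw [setIntegral_const]; simp [smul_eq_mul, Measure.real]
  have hsub : IntegrableOn (fun x : E => r ^ 2 - ‖x‖ ^ 2) S volume :=
    (integrableOn_const measure_closedBall_lt_top.ne).sub h1
  have key : 0 < ∫ x in S, (r ^ 2 - ‖x‖ ^ 2) := by
    have hTpos : 0 < (volume T).toReal :=
      ENNReal.toReal_pos (measure_closedBall_pos volume _ (by linarith)).ne'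
        measure_closedBall_lt_top.ne
    have step1 : (volume T).toReal * (r ^ 2 - (r / 2) ^ 2)
        ≤ ∫ x in T, (r ^ 2 - ‖x‖ ^ 2) := by
      have := setIntegral_mono_on
        (f := fun _ : E => r ^ 2 - (r / 2) ^ 2) (g := fun x : E => r ^ 2 - ‖x‖ ^ 2)
        (μ := volume) (s := T)
        (integrableOn_const measure_closedBall_lt_top.ne)
        (hsub.mono_set hTS) measurableSet_closedBall ?_
      · calc (volume T).toReal * (r ^ 2 - (r / 2) ^ 2)
            = ∫ _ in T, (r ^ 2 - (r / 2) ^ 2) := by rw [setIntegral_const]; simp [smul_eq_mul, Measure.real]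
          _ ≤ _ := this
      · intro x hx
        rw [hT, mem_closedBall, dist_zero_right] at hx
        have : ‖x‖ ≤ r / 2 := hx
        have : ‖x‖ ^ 2 ≤ (r / 2) ^ 2 := pow_le_pow_left₀ (norm_nonneg _) this 2
        linarith
    have step2 : ∫ x in T, (r ^ 2 - ‖x‖ ^ 2) ≤ ∫ x in S, (r ^ 2 - ‖x‖ ^ 2) := by
      apply setIntegral_mono_set hsub
      · refine (ae_restrict_iff' measurableSet_closedBall).2 (ae_of_all _ fun x hx => ?_)
        rw [mem_closedBall, dist_zero_right] at hx
        have : ‖x‖ ^ 2 ≤ r ^ 2 := pow_le_pow_left₀ (norm_nonneg _) hx 2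
        simp only [Pi.zero_apply]
        linarith
      · exact HasSubset.Subset.eventuallyLE hTS
    have : 0 < (volume T).toReal * (r ^ 2 - (r / 2) ^ 2) := by
      apply mul_pos hTpos; nlinarith
    linarith
  have hconst : IntegrableOn (fun _ : E => r ^ 2) S volume :=
    integrableOn_const measure_closedBall_lt_top.ne
  rw [integral_sub hconst h1, hSconst] at key
  linarith

/-- The k-means objective as a normalized sum of per-ball integrals. -/
lemma sbm_kmeansObj_eq (βstar : Fin k → E) (r : ℝ) (hk : 0 < k) (β : Fin k → E) :
    kmeansObj d k (ballMixDensity d k βstar r) β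
      = (1 / (k : ℝ)) * ((volume (closedBall (0 : E) r)).toReal)⁻¹ *
          ∑ s : Fin k, ∫ x in closedBall (βstar s) r, ⨅ j : Fin k, ‖x - β j‖ ^ 2 := by
  set g : E → ℝ := fun x => ⨅ j : Fin k, ‖x - β j‖ ^ 2 with hg
  have hgc : Continuous g := sbm_ball_cont β hk
  have hV : ∀ s : Fin k, (volume (closedBall (βstar s) r)).toReal
      = (volume (closedBall (0 : E) r)).toReal := by
    intro s; rw [Measure.addHaar_closedBall_center]
  set V : ℝ := (volume (closedBall (0 : E) r)).toReal with hVdef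
  have hterm : ∀ s : Fin k,
      (fun x => g x * unifBallDensity d (βstar s) r x)
        = (closedBall (βstar s) r).indicator (fun x => g x * V⁻¹) := by
    intro s
    funext x
    unfold unifBallDensity
    by_cases hx : x ∈ closedBall (βstar s) r
    · simp [indicator_of_mem hx, hV s]
    · simp [indicator_of_notMem hx]
  have hint : ∀ s : Fin k,
      Integrable ((closedBall (βstar s) r).indicator (fun x => g x * V⁻¹)) volume := by
    intro s
    rw [integrable_indicator_iff measurableSet_closedBall]
    exact ((hgc.mul continuous_const)).continuousOn.integrableOn_compact
      (isCompact_closedBall _ _)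
  unfold kmeansObj ballMixDensity
  have hrw : (fun x => g x * ((1 / (k : ℝ)) * ∑ s : Fin k, unifBallDensity d (βstar s) r x))
      = fun x => (1 / (k : ℝ)) * ∑ s : Fin k,
          (closedBall (βstar s) r).indicator (fun x => g x * V⁻¹) x := by
    funext x
    rw [← mul_assoc, mul_comm (g x) (1 / (k:ℝ)), mul_assoc, Finset.mul_sum]
    congr 1
    refine Finset.sum_congr rfl fun s _ => ?_
    rw [← hterm s]
  rw [show (∫ x, (⨅ j : Fin k, ‖x - β j‖ ^ 2) * ((1 / (k : ℝ)) *
      ∑ s : Fin k, unifBallDensity d (βstar s) r x))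
    = ∫ x, (1 / (k : ℝ)) * ∑ s : Fin k,
        (closedBall (βstar s) r).indicator (fun x => g x * V⁻¹) x from by rw [← hrw]]
  rw [MeasureTheory.integral_const_mul, integral_finset_sum _ (fun s _ => hint s)]
  rw [mul_assoc]
  congr 1
  rw [Finset.mul_sum]
  refine Finset.sum_congr rfl fun s _ => ?_
  rw [integral_indicator measurableSet_closedBall, integral_mul_const]
  ring

lemma sbm_iInf_eq_single [NeZero k] (β : Fin k → E) (x : E) (j₀ : Fin k)
    (h : ∀ j, ‖x - β j₀‖ ≤ ‖x - β j‖) :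
    (⨅ j : Fin k, ‖x - β j‖ ^ 2) = ‖x - β j₀‖ ^ 2 := by
  refine le_antisymm (ciInf_le (Finite.bddBelow_range _) j₀) (le_ciInf fun j => ?_)
  exact pow_le_pow_left₀ (norm_nonneg _) (h j) 2

/-- If every ball has a candidate center nearby, the assignment of balls to nearby centers
is a permutation and determines the minimum on each ball. -/
lemma sbm_exists_perm (βstar β : Fin k → E) (r : ℝ) (hr : 0 < r) (hk : 2 ≤ k)
    (hΔ : ∀ s s' : Fin k, s ≠ s' → 6 * Real.sqrt k * r ≤ dist (βstar s) (βstar s'))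
    (hP : ∀ s : Fin k, ∃ j, dist (β j) (βstar s) ≤ (1 + Real.sqrt k) * r) :
    ∃ σ : Equiv.Perm (Fin k), ∀ s : Fin k,
      dist (β (σ s)) (βstar s) ≤ (1 + Real.sqrt k) * r ∧
      ∀ x ∈ closedBall (βstar s) r,
        (⨅ j : Fin k, ‖x - β j‖ ^ 2) = ‖x - β (σ s)‖ ^ 2 := by
  haveI : NeZero k := ⟨by omega⟩
  have hsq : 1 ≤ Real.sqrt k := by
    rw [show (1:ℝ) = Real.sqrt 1 from (Real.sqrt_one).symm]
    exact Real.sqrt_le_sqrt (by exact_mod_cast Nat.one_le_of_lt hk)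
  choose φ hφ using hP
  have hφinj : Function.Injective φ := by
    intro s s' h
    by_contra hne
    have h1 := hΔ s s' hne
    have h2 := dist_triangle (βstar s) (β (φ s)) (βstar s')
    have h3 := hφ s
    have h4 := hφ s'
    rw [dist_comm (βstar s) (β (φ s))] at h2
    rw [h] at h2 h3
    nlinarith
  have hbij : Function.Bijective φ := (Finite.injective_iff_bijective).mp hφinj
  refine ⟨Equiv.ofBijective φ hbij, fun s => ⟨hφ s, fun x hx => ?_⟩⟩
  have hσs : (Equiv.ofBijective φ hbij) s = φ s := rfl
  rw [hσs]
  apply sbm_iInf_eq_single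
  intro j
  obtain ⟨s', rfl⟩ := hbij.2 j
  by_cases hss : s' = s
  · subst hss; exact le_rfl
  · rw [mem_closedBall] at hx
    have h1 := hΔ s' s hss
    have h2 := dist_triangle4 (βstar s') (β (φ s')) x (βstar s)
    have h3 := hφ s'
    have h4 := hφ s
    have h5 : ‖x - β (φ s)‖ ≤ dist x (βstar s) + dist (βstar s) (β (φ s)) := by
      rw [show ‖x - β (φ s)‖ = dist x (β (φ s)) from (dist_eq_norm _ _).symm]
      exact dist_triangle _ _ _
    rw [show ‖x - β (φ s')‖ = dist (β (φ s')) x from by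
      rw [dist_comm, dist_eq_norm]]
    rw [dist_comm (βstar s) (β (φ s))] at h5
    rw [dist_comm (βstar s') (β (φ s'))] at h2
    nlinarith

end Aux

/-- Under the Stochastic Ball Model, if `η_min ≥ 6√k` then the true centers `βstar` are a
global minimum of the population k-means objective `G`, and every global minimum of `G`
is a permutation of the true centers. -/
theorem truth_is_unique_global_min (d k : ℕ) (hd : 1 ≤ d) (hk : 2 ≤ k)
    (βstar : Fin k → EuclideanSpace ℝ (Fin d)) (hinj : Function.Injective βstar)
    (r : ℝ) (hr : 0 < r)
    (hdisj : Pairwise fun s s' : Fin k =>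
      Disjoint (Metric.closedBall (βstar s) r) (Metric.closedBall (βstar s') r))
    (hsep : 6 * Real.sqrt k ≤ Deltamin d k βstar / r) :
    (∀ β : Fin k → EuclideanSpace ℝ (Fin d),
        kmeansObj d k (ballMixDensity d k βstar r) βstar ≤
          kmeansObj d k (ballMixDensity d k βstar r) β) ∧
      (∀ β : Fin k → EuclideanSpace ℝ (Fin d),
        (∀ β' : Fin k → EuclideanSpace ℝ (Fin d),
            kmeansObj d k (ballMixDensity d k βstar r) β ≤
              kmeansObj d k (ballMixDensity d k βstar r) β') →
          ∃ π : Equiv.Perm (Fin k), ∀ i : Fin k, β i = βstar (π i)) := by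
  haveI : NeZero k := ⟨by omega⟩
  have hk0 : 0 < k := by omega
  have hkR : (0:ℝ) < k := by exact_mod_cast hk0
  set V : ℝ := (volume (closedBall (0 : EuclideanSpace ℝ (Fin d)) r)).toReal with hVdef
  have hVpos : 0 < V :=
    ENNReal.toReal_pos (measure_closedBall_pos volume _ hr).ne' measure_closedBall_lt_top.ne
  set m : ℝ := ∫ x in closedBall (0 : EuclideanSpace ℝ (Fin d)) r, ‖x‖ ^ 2 with hmdef
  have hm0 : 0 ≤ m :=
    setIntegral_nonneg measurableSet_closedBall fun x _ => by positivity
  have hmlt : m < V * r ^ 2 := sbm_m_lt r hr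
  have hsq : 1 ≤ Real.sqrt k := by
    rw [show (1:ℝ) = Real.sqrt 1 from (Real.sqrt_one).symm]
    exact Real.sqrt_le_sqrt (by exact_mod_cast Nat.one_le_of_lt hk)
  have hpos : 0 < (1 / (k:ℝ)) * V⁻¹ := by positivity
  have hΔ : ∀ s s' : Fin k, s ≠ s' → 6 * Real.sqrt k * r ≤ dist (βstar s) (βstar s') := by
    intro s s' hss
    have hb : BddBelow {y : ℝ | ∃ s s' : Fin k, s ≠ s' ∧ y = dist (βstar s) (βstar s')} := by
      refine ⟨0, fun y hy => ?_⟩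
      obtain ⟨a, b, _, rfl⟩ := hy
      exact dist_nonneg
    have hle : Deltamin d k βstar ≤ dist (βstar s) (βstar s') :=
      csInf_le hb ⟨s, s', hss, rfl⟩
    have := (le_div_iff₀ hr).mp hsep
    linarith
  -- value of the objective at any configuration with a center near each ball
  have hGP : ∀ β : Fin k → EuclideanSpace ℝ (Fin d),
      (∀ s : Fin k, ∃ j, dist (β j) (βstar s) ≤ (1 + Real.sqrt k) * r) →
      ∃ σ : Equiv.Perm (Fin k),
        kmeansObj d k (ballMixDensity d k βstar r) β
          = (1 / (k:ℝ)) * V⁻¹ * ∑ s : Fin k, (m + V * ‖β (σ s) - βstar s‖ ^ 2) := by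
    intro β hP
    obtain ⟨σ, hσ⟩ := sbm_exists_perm βstar β r hr hk hΔ hP
    refine ⟨σ, ?_⟩
    rw [sbm_kmeansObj_eq βstar r hk0 β]
    congr 1
    refine Finset.sum_congr rfl fun s _ => ?_
    rw [setIntegral_congr_fun measurableSet_closedBall (fun x hx => (hσ s).2 x hx)]
    rw [sbm_expand_integral (βstar s) (β (σ s)) r]
  -- value of the objective at the truth
  have hGstar : kmeansObj d k (ballMixDensity d k βstar r) βstar
      = (1 / (k:ℝ)) * V⁻¹ * ((k:ℝ) * m) := by
    rw [sbm_kmeansObj_eq βstar r hk0 βstar]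
    congr 1
    have hterm : ∀ s : Fin k,
        (∫ x in closedBall (βstar s) r, ⨅ j : Fin k, ‖x - βstar j‖ ^ 2) = m := by
      intro s
      have heq : ∀ x ∈ closedBall (βstar s) r,
          (⨅ j : Fin k, ‖x - βstar j‖ ^ 2) = ‖x - βstar s‖ ^ 2 := by
        intro x hx
        apply sbm_iInf_eq_single
        intro j
        by_cases hjs : j = s
        · subst hjs; exact le_rfl
        · rw [mem_closedBall] at hx
          have h1 := hΔ s j (fun hc => hjs (hc.symm))
          have h2 := dist_triangle (βstar s) x (βstar j)
          have h3 : ‖x - βstar s‖ = dist x (βstar s) := (dist_eq_norm _ _).symm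
          have h4 : ‖x - βstar j‖ = dist x (βstar j) := (dist_eq_norm _ _).symm
          rw [dist_comm (βstar s) x] at h2
          rw [h3, h4]
          nlinarith
      rw [setIntegral_congr_fun measurableSet_closedBall heq,
        sbm_expand_integral (βstar s) (βstar s) r]
      simp [hmdef]
    rw [Finset.sum_congr rfl (fun s _ => hterm s), Finset.sum_const, Finset.card_univ,
      Fintype.card_fin, nsmul_eq_mul]
  -- strict lower bound in the bad case
  have hGlow : ∀ β : Fin k → EuclideanSpace ℝ (Fin d),
      (¬ ∀ s : Fin k, ∃ j, dist (β j) (βstar s) ≤ (1 + Real.sqrt k) * r) →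
      (1 / (k:ℝ)) * V⁻¹ * ((k:ℝ) * m) < kmeansObj d k (ballMixDensity d k βstar r) β := by
    intro β hnP
    push_neg at hnP
    obtain ⟨s, hs⟩ := hnP
    rw [sbm_kmeansObj_eq βstar r hk0 β]
    have hlow : ∀ x ∈ closedBall (βstar s) r,
        (k:ℝ) * r ^ 2 ≤ ⨅ j : Fin k, ‖x - β j‖ ^ 2 := by
      intro x hx
      refine le_ciInf fun j => ?_
      have h1 := hs j
      rw [mem_closedBall] at hx
      have h2 : Real.sqrt k * r ≤ ‖x - β j‖ := by
        have h6 := dist_triangle (β j) x (βstar s)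
        rw [show ‖x - β j‖ = dist (β j) x from by rw [dist_comm, dist_eq_norm]]
        linarith
      have h3 : (0:ℝ) ≤ Real.sqrt k * r := by positivity
      calc (k:ℝ) * r ^ 2 = (Real.sqrt k * r) ^ 2 := by
            rw [mul_pow, Real.sq_sqrt (Nat.cast_nonneg k)]
        _ ≤ ‖x - β j‖ ^ 2 := pow_le_pow_left₀ h3 h2 2
    have hIs : V * ((k:ℝ) * r ^ 2)
        ≤ ∫ x in closedBall (βstar s) r, ⨅ j : Fin k, ‖x - β j‖ ^ 2 := by
      have hc : ∫ _ in closedBall (βstar s) r, (k:ℝ) * r ^ 2 = V * ((k:ℝ) * r ^ 2) := by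
        rw [setIntegral_const]
        rw [hVdef, ← Measure.addHaar_closedBall_center volume (βstar s) r]
        simp [smul_eq_mul, Measure.real]
      rw [← hc]
      exact setIntegral_mono_on
        (integrableOn_const measure_closedBall_lt_top.ne)
        (sbm_ball_intble β hk0 (βstar s) r) measurableSet_closedBall hlow
    have hnn : ∀ s' : Fin k,
        0 ≤ ∫ x in closedBall (βstar s') r, ⨅ j : Fin k, ‖x - β j‖ ^ 2 := fun s' =>
      setIntegral_nonneg measurableSet_closedBall fun x _ => le_ciInf fun j => by positivity
    have hsum : V * ((k:ℝ) * r ^ 2)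
        ≤ ∑ s' : Fin k, ∫ x in closedBall (βstar s') r, ⨅ j : Fin k, ‖x - β j‖ ^ 2 :=
      le_trans hIs (Finset.single_le_sum (fun s' _ => hnn s') (Finset.mem_univ s))
    have h1 : (k:ℝ) * m < V * ((k:ℝ) * r ^ 2) := by nlinarith
    calc (1 / (k:ℝ)) * V⁻¹ * ((k:ℝ) * m)
        < (1 / (k:ℝ)) * V⁻¹ * (V * ((k:ℝ) * r ^ 2)) := by
          exact mul_lt_mul_of_pos_left h1 hpos
      _ ≤ _ := mul_le_mul_of_nonneg_left hsum hpos.le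
  constructor
  · intro β
    by_cases hP : ∀ s : Fin k, ∃ j, dist (β j) (βstar s) ≤ (1 + Real.sqrt k) * r
    · obtain ⟨σ, hform⟩ := hGP β hP
      rw [hGstar, hform]
      apply mul_le_mul_of_nonneg_left _ hpos.le
      calc (k:ℝ) * m = ∑ _s : Fin k, m := by
            rw [Finset.sum_const, Finset.card_univ, Fintype.card_fin, nsmul_eq_mul]
        _ ≤ ∑ s : Fin k, (m + V * ‖β (σ s) - βstar s‖ ^ 2) :=
          Finset.sum_le_sum fun s _ => le_add_of_nonneg_right (by positivity)
    · rw [hGstar]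
      exact (hGlow β hP).le
  · intro β hglob
    have hle := hglob βstar
    by_cases hP : ∀ s : Fin k, ∃ j, dist (β j) (βstar s) ≤ (1 + Real.sqrt k) * r
    · obtain ⟨σ, hform⟩ := hGP β hP
      rw [hform, hGstar] at hle
      have hsumle : ∑ s : Fin k, (m + V * ‖β (σ s) - βstar s‖ ^ 2) ≤ (k:ℝ) * m :=
        (mul_le_mul_iff_right₀ hpos).mp hle
      have hexpand : ∑ s : Fin k, (m + V * ‖β (σ s) - βstar s‖ ^ 2)
          = (k:ℝ) * m + ∑ s : Fin k, V * ‖β (σ s) - βstar s‖ ^ 2 := by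
        rw [Finset.sum_add_distrib, Finset.sum_const, Finset.card_univ, Fintype.card_fin,
          nsmul_eq_mul]
      have hsum0 : ∑ s : Fin k, V * ‖β (σ s) - βstar s‖ ^ 2 ≤ 0 := by linarith
      have hzero : ∀ s : Fin k, β (σ s) = βstar s := by
        intro s
        have hnn : ∀ s' ∈ Finset.univ, (0:ℝ) ≤ V * ‖β (σ s') - βstar s'‖ ^ 2 :=
          fun s' _ => by positivity
        have hall := (Finset.sum_eq_zero_iff_of_nonneg hnn).mp
          (le_antisymm hsum0 (Finset.sum_nonneg hnn)) s (Finset.mem_univ s)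
        have h2 : ‖β (σ s) - βstar s‖ ^ 2 = 0 := by
          rcases mul_eq_zero.mp hall with h | h
          · exact absurd h hVpos.ne'
          · exact h
        have h3 := (pow_eq_zero_iff (two_ne_zero)).mp h2
        rw [norm_eq_zero, sub_eq_zero] at h3
        exact h3
      exact ⟨σ.symm, fun i => by
        have := hzero (σ.symm i)
        rwa [Equiv.apply_symm_apply] at this⟩
    · exfalso
      have := hGlow β hP
      rw [hGstar] at hle
      linarith
end
end

section
/- Consider the Stochastic Ball Model in dimension d = 1 with k = 3, true centers β*_1 = −2, β*_2 = 0, β*_3 = 2, and radius r < 0.4 (so the three intervals [β*_s − r, β*_s + r] are disjoint and η_min > 5). Then the point β = (β_1, β_2, β_3) with β_1 = −2 − r/2, β_2 = −2 + r/2, β_3 = 1 is a local minimum of the population k-means objective G, but it is not a global minimum of G. -/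
open MeasureTheory Metric Set

noncomputable section

def emb (t : ℝ) : EuclideanSpace ℝ (Fin 1) := WithLp.toLp 2 (fun _ => t)

@[simp] lemma emb_apply (t : ℝ) (i : Fin 1) : emb t i = t := rfl

lemma integral_euclid_one (F : EuclideanSpace ℝ (Fin 1) → ℝ) :
    ∫ x, F x = ∫ t : ℝ, F (emb t) := by
  have h1 := (EuclideanSpace.volume_preserving_symm_measurableEquiv_toLp (Fin 1)).symm
  have h2 := (volume_preserving_funUnique (Fin 1) ℝ).symm
  rw [← h1.integral_comp']
  exact (h2.integral_comp' (fun y => F ((MeasurableEquiv.toLp 2 (Fin 1 → ℝ)).symm.symm y))).symm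

lemma norm_euclid_one (x : EuclideanSpace ℝ (Fin 1)) : ‖x‖ = |x 0| := by
  rw [EuclideanSpace.norm_eq]
  simp [Fin.sum_univ_one, Real.sqrt_sq_eq_abs]

lemma mem_cb (c : EuclideanSpace ℝ (Fin 1)) (r : ℝ) (x : EuclideanSpace ℝ (Fin 1)) :
    (x ∈ Metric.closedBall c r) ↔ |x 0 - c 0| ≤ r := by
  rw [Metric.mem_closedBall, EuclideanSpace.dist_eq]
  simp [Fin.sum_univ_one, Real.sqrt_sq_eq_abs, Real.dist_eq]

lemma vol_cb (c : EuclideanSpace ℝ (Fin 1)) (r : ℝ) (hr : 0 ≤ r) :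
    (volume (Metric.closedBall c r)).toReal = 2 * r := by
  rw [EuclideanSpace.volume_closedBall]
  have h1 : Real.Gamma ((Fintype.card (Fin 1) : ℝ) / 2 + 1) = Real.sqrt Real.pi / 2 := by
    simp only [Fintype.card_fin, Nat.cast_one]
    rw [show (1:ℝ)/2 + 1 = 1/2 + 1 by norm_num, Real.Gamma_add_one (by norm_num),
      Real.Gamma_one_half_eq]
    ring
  rw [h1]
  have hπ : Real.sqrt Real.pi > 0 := Real.sqrt_pos.2 Real.pi_pos
  simp only [Fintype.card_fin, pow_one]
  rw [← ENNReal.ofReal_mul hr, ENNReal.toReal_ofReal (by positivity)]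
  field_simp

lemma inf3_eq (f : Fin 3 → ℝ) : (⨅ j, f j) = min (f 0) (min (f 1) (f 2)) := by
  apply le_antisymm
  · exact le_min (ciInf_le (Finite.bddBelow_range f) 0)
      (le_min (ciInf_le (Finite.bddBelow_range f) 1) (ciInf_le (Finite.bddBelow_range f) 2))
  · apply le_ciInf
    intro j
    fin_cases j
    · exact min_le_left _ _
    · exact le_trans (min_le_right _ _) (min_le_left _ _)
    · exact le_trans (min_le_right _ _) (min_le_right _ _)

lemma cont_g (b : Fin 3 → ℝ) : Continuous (fun t : ℝ => ⨅ j : Fin 3, (t - b j)^2) := by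
  have h : (fun t : ℝ => ⨅ j : Fin 3, (t - b j)^2)
      = fun t => min ((t - b 0)^2) (min ((t - b 1)^2) ((t - b 2)^2)) :=
    funext fun t => inf3_eq _
  rw [h]; fun_prop

lemma kmeans_reduce (r : ℝ) (hr : 0 < r) (β : Fin 3 → EuclideanSpace ℝ (Fin 1)) :
    kmeansObj 1 3
        (ballMixDensity 1 3
          ![(WithLp.toLp 2 (fun _ => (-2 : ℝ)) : EuclideanSpace ℝ (Fin 1)),
            (WithLp.toLp 2 (fun _ => (0 : ℝ)) : EuclideanSpace ℝ (Fin 1)),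
            (WithLp.toLp 2 (fun _ => (2 : ℝ)) : EuclideanSpace ℝ (Fin 1))] r) β
      = (1/(6*r)) * ((∫ t in (-2-r)..(-2+r), ⨅ j : Fin 3, (t - β j 0)^2)
        + ((∫ t in (-r)..r, ⨅ j : Fin 3, (t - β j 0)^2)
        + (∫ t in (2-r)..(2+r), ⨅ j : Fin 3, (t - β j 0)^2))) := by
  set g : ℝ → ℝ := fun t => ⨅ j : Fin 3, (t - β j 0)^2 with hgdef
  have hgc : Continuous g := cont_g (fun j => β j 0)
  rw [kmeansObj, integral_euclid_one]
  have hpt : ∀ t : ℝ,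
      (⨅ j : Fin 3, ‖emb t - β j‖ ^ 2) *
        ballMixDensity 1 3
          ![(WithLp.toLp 2 (fun _ => (-2 : ℝ)) : EuclideanSpace ℝ (Fin 1)),
            (WithLp.toLp 2 (fun _ => (0 : ℝ)) : EuclideanSpace ℝ (Fin 1)),
            (WithLp.toLp 2 (fun _ => (2 : ℝ)) : EuclideanSpace ℝ (Fin 1))] r (emb t)
      = (1/(6*r)) * ((Icc (-2-r) (-2+r)).indicator g t
          + ((Icc (-r) r).indicator g t + (Icc (2-r) (2+r)).indicator g t)) := by
    intro t
    have hnorm : ∀ j : Fin 3, ‖emb t - β j‖ ^ 2 = (t - β j 0)^2 := by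
      intro j
      rw [norm_euclid_one, sq_abs]
      rfl
    simp only [hnorm]
    rw [ballMixDensity, Fin.sum_univ_three]
    simp only [Matrix.cons_val_zero, Matrix.cons_val_one, Matrix.head_cons,
      Matrix.cons_val_two, Matrix.tail_cons]
    rw [unifBallDensity, unifBallDensity, unifBallDensity]
    have q1 : (emb t ∈ Metric.closedBall (α := EuclideanSpace ℝ (Fin 1))
        (WithLp.toLp 2 (fun _ => (-2:ℝ))) r) ↔ t ∈ Icc (-2-r) (-2+r) := by
      rw [mem_cb]
      show |t - (-2)| ≤ r ↔ _
      rw [abs_le, Set.mem_Icc]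
      constructor <;> (rintro ⟨h1, h2⟩; exact ⟨by linarith, by linarith⟩)
    have q2 : (emb t ∈ Metric.closedBall (α := EuclideanSpace ℝ (Fin 1))
        (WithLp.toLp 2 (fun _ => (0:ℝ))) r) ↔ t ∈ Icc (-r) r := by
      rw [mem_cb]
      show |t - 0| ≤ r ↔ _
      rw [abs_le, Set.mem_Icc]
      constructor <;> (rintro ⟨h1, h2⟩; exact ⟨by linarith, by linarith⟩)
    have q3 : (emb t ∈ Metric.closedBall (α := EuclideanSpace ℝ (Fin 1))
        (WithLp.toLp 2 (fun _ => (2:ℝ))) r) ↔ t ∈ Icc (2-r) (2+r) := by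
      rw [mem_cb]
      show |t - 2| ≤ r ↔ _
      rw [abs_le, Set.mem_Icc]
      constructor <;> (rintro ⟨h1, h2⟩; exact ⟨by linarith, by linarith⟩)
    have v1 : (volume (Metric.closedBall (α := EuclideanSpace ℝ (Fin 1))
        (WithLp.toLp 2 (fun _ => (-2:ℝ))) r)).toReal = 2*r := vol_cb _ r hr.le
    have v2 : (volume (Metric.closedBall (α := EuclideanSpace ℝ (Fin 1))
        (WithLp.toLp 2 (fun _ => (0:ℝ))) r)).toReal = 2*r := vol_cb _ r hr.le
    have v3 : (volume (Metric.closedBall (α := EuclideanSpace ℝ (Fin 1))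
        (WithLp.toLp 2 (fun _ => (2:ℝ))) r)).toReal = 2*r := vol_cb _ r hr.le
    by_cases p1 : t ∈ Icc (-2-r) (-2+r) <;>
      by_cases p2 : t ∈ Icc (-r) r <;>
        by_cases p3 : t ∈ Icc (2-r) (2+r) <;>
    all_goals (
      first
        | rw [Set.indicator_of_mem (q1.mpr p1)]
        | rw [Set.indicator_of_notMem (fun c => p1 (q1.mp c))]
      first
        | rw [Set.indicator_of_mem (q2.mpr p2)]
        | rw [Set.indicator_of_notMem (fun c => p2 (q2.mp c))]
      first
        | rw [Set.indicator_of_mem (q3.mpr p3)]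
        | rw [Set.indicator_of_notMem (fun c => p3 (q3.mp c))]
      first
        | rw [Set.indicator_of_mem p1 g]
        | rw [Set.indicator_of_notMem p1 g]
      first
        | rw [Set.indicator_of_mem p2 g]
        | rw [Set.indicator_of_notMem p2 g]
      first
        | rw [Set.indicator_of_mem p3 g]
        | rw [Set.indicator_of_notMem p3 g]
      try simp only [hgdef]
      try simp only [v1, v2, v3]
      try field_simp
      try ring
      try exact Or.inl trivial)
  have hfun : (fun t : ℝ => (⨅ j : Fin 3, ‖emb t - β j‖ ^ 2) *
        ballMixDensity 1 3
          ![(WithLp.toLp 2 (fun _ => (-2 : ℝ)) : EuclideanSpace ℝ (Fin 1)),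
            (WithLp.toLp 2 (fun _ => (0 : ℝ)) : EuclideanSpace ℝ (Fin 1)),
            (WithLp.toLp 2 (fun _ => (2 : ℝ)) : EuclideanSpace ℝ (Fin 1))] r (emb t))
      = fun t => (1/(6*r)) * ((Icc (-2-r) (-2+r)).indicator g t
          + ((Icc (-r) r).indicator g t + (Icc (2-r) (2+r)).indicator g t)) :=
    funext hpt
  rw [hfun]
  have i1 : Integrable ((Icc (-2-r) (-2+r)).indicator g) := by
    rw [integrable_indicator_iff measurableSet_Icc]
    exact hgc.integrableOn_Icc
  have i2 : Integrable ((Icc (-r) r).indicator g) := by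
    rw [integrable_indicator_iff measurableSet_Icc]
    exact hgc.integrableOn_Icc
  have i3 : Integrable ((Icc (2-r) (2+r)).indicator g) := by
    rw [integrable_indicator_iff measurableSet_Icc]
    exact hgc.integrableOn_Icc
  have i23 : Integrable (fun a => (Icc (-r) r).indicator g a
      + (Icc (2-r) (2+r)).indicator g a) volume := by exact i2.add i3
  rw [MeasureTheory.integral_const_mul, integral_add i1 i23, integral_add i2 i3]
  rw [integral_indicator measurableSet_Icc, integral_indicator measurableSet_Icc,
    integral_indicator measurableSet_Icc]
  rw [intervalIntegral.integral_of_le (by linarith : (-2-r:ℝ) ≤ -2+r),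
    intervalIntegral.integral_of_le (by linarith : (-r:ℝ) ≤ r),
    intervalIntegral.integral_of_le (by linarith : (2-r:ℝ) ≤ 2+r),
    integral_Icc_eq_integral_Ioc, integral_Icc_eq_integral_Ioc,
    integral_Icc_eq_integral_Ioc]

lemma int_sq (a b c : ℝ) : (∫ t in a..b, (t - c)^2) = ((b-c)^3 - (a-c)^3)/3 := by
  have h := intervalIntegral.integral_comp_sub_right (a := a) (b := b) (fun u => u^2) c
  rw [h, integral_pow]
  norm_num

lemma sq_cmp {t u v : ℝ} (h1 : u ≤ v) (h2 : u + v ≤ 2*t) : (t - v)^2 ≤ (t - u)^2 := by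
  nlinarith [mul_nonneg (sub_nonneg.2 h1) (sub_nonneg.2 h2)]

lemma sq_cmp' {t u v : ℝ} (h1 : u ≤ v) (h2 : 2*t ≤ u + v) : (t - u)^2 ≤ (t - v)^2 := by
  nlinarith [mul_nonneg (sub_nonneg.2 h1) (sub_nonneg.2 h2)]

lemma int_inf_eq' (β : Fin 3 → EuclideanSpace ℝ (Fin 1)) (p q c : ℝ) (hpq : p ≤ q)
    (j0 : Fin 3) (hc : β j0 0 = c)
    (h : ∀ t ∈ Icc p q, ∀ j : Fin 3, (t - c)^2 ≤ (t - β j 0)^2) :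
    (∫ t in p..q, ⨅ j : Fin 3, (t - β j 0)^2) = ((q - c)^3 - (p - c)^3)/3 := by
  have heq : ∀ t ∈ uIcc p q, (⨅ j : Fin 3, (t - β j 0)^2) = (t - c)^2 := by
    intro t ht
    rw [uIcc_of_le hpq] at ht
    rw [inf3_eq]
    apply le_antisymm
    · rw [← hc]
      fin_cases j0
      · exact min_le_left _ _
      · exact le_trans (min_le_right _ _) (min_le_left _ _)
      · exact le_trans (min_le_right _ _) (min_le_right _ _)
    · exact le_min (h t ht 0) (le_min (h t ht 1) (h t ht 2))
  rw [intervalIntegral.integral_congr heq, int_sq]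

lemma int_inf_ge' (β : Fin 3 → EuclideanSpace ℝ (Fin 1)) (p q c : ℝ) (hpq : p ≤ q)
    (j0 : Fin 3) (hc : β j0 0 = c)
    (h : ∀ t ∈ Icc p q, ∀ j : Fin 3, (t - c)^2 ≤ (t - β j 0)^2) :
    (q - p)^3/12 ≤ ∫ t in p..q, ⨅ j : Fin 3, (t - β j 0)^2 := by
  rw [int_inf_eq' β p q c hpq j0 hc h]
  nlinarith [mul_nonneg (sub_nonneg.2 hpq) (sq_nonneg (q + p - 2*c))]

lemma forall_fin3 {P : Fin 3 → Prop} (h0 : P 0) (h1 : P 1) (h2 : P 2) : ∀ j, P j := by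
  intro j; fin_cases j <;> assumption

lemma cand_val_gen (r : ℝ) (hr0 : 0 < r) (hr : r < 0.4)
    (β : Fin 3 → EuclideanSpace ℝ (Fin 1))
    (h0 : β 0 0 = -2 - r/2) (h1 : β 1 0 = -2 + r/2) (h2 : β 2 0 = 1) :
    kmeansObj 1 3
        (ballMixDensity 1 3
          ![(WithLp.toLp 2 (fun _ => (-2 : ℝ)) : EuclideanSpace ℝ (Fin 1)),
            (WithLp.toLp 2 (fun _ => (0 : ℝ)) : EuclideanSpace ℝ (Fin 1)),
            (WithLp.toLp 2 (fun _ => (2 : ℝ)) : EuclideanSpace ℝ (Fin 1))] r) β = r^2/4 + 2/3 := by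
  have hr' : r < 2/5 := by norm_num at hr; linarith
  rw [kmeans_reduce r hr0]
  have hi : ∀ a b : ℝ, IntervalIntegrable (fun t => ⨅ j : Fin 3, (t - β j 0)^2) volume a b :=
    fun a b => (cont_g (fun j => β j 0)).intervalIntegrable a b
  have hsplit := intervalIntegral.integral_add_adjacent_intervals
    (hi (-2-r) (-2)) (hi (-2) (-2+r))
  rw [← hsplit]
  have e1 : (∫ t in (-2-r)..(-2:ℝ), ⨅ j : Fin 3, (t - β j 0)^2)
      = (((-2:ℝ) - (-2-r/2))^3 - ((-2-r) - (-2-r/2))^3)/3 := by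
    apply int_inf_eq' β _ _ _ (by linarith) 0 h0
    intro t ht
    apply forall_fin3
    · rw [h0]
    · rw [h1]; exact sq_cmp' (by linarith) (by rcases ht with ⟨hl, hu⟩; linarith)
    · rw [h2]; exact sq_cmp' (by linarith) (by rcases ht with ⟨hl, hu⟩; linarith)
  have e2 : (∫ t in (-2:ℝ)..(-2+r), ⨅ j : Fin 3, (t - β j 0)^2)
      = (((-2+r) - (-2+r/2))^3 - ((-2:ℝ) - (-2+r/2))^3)/3 := by
    apply int_inf_eq' β _ _ _ (by linarith) 1 h1
    intro t ht
    apply forall_fin3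
    · rw [h0]; exact sq_cmp (by linarith) (by rcases ht with ⟨hl, hu⟩; linarith)
    · rw [h1]
    · rw [h2]; exact sq_cmp' (by linarith) (by rcases ht with ⟨hl, hu⟩; linarith)
  have e3 : (∫ t in (-r)..r, ⨅ j : Fin 3, (t - β j 0)^2)
      = ((r - 1)^3 - (-r - 1)^3)/3 := by
    apply int_inf_eq' β _ _ _ (by linarith) 2 h2
    intro t ht
    apply forall_fin3
    · rw [h0]; exact sq_cmp (by linarith) (by rcases ht with ⟨hl, hu⟩; linarith)
    · rw [h1]; exact sq_cmp (by linarith) (by rcases ht with ⟨hl, hu⟩; linarith)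
    · rw [h2]
  have e4 : (∫ t in (2-r)..(2+r), ⨅ j : Fin 3, (t - β j 0)^2)
      = ((2+r - 1)^3 - (2-r - 1)^3)/3 := by
    apply int_inf_eq' β _ _ _ (by linarith) 2 h2
    intro t ht
    apply forall_fin3
    · rw [h0]; exact sq_cmp (by linarith) (by rcases ht with ⟨hl, hu⟩; linarith)
    · rw [h1]; exact sq_cmp (by linarith) (by rcases ht with ⟨hl, hu⟩; linarith)
    · rw [h2]
  rw [e1, e2, e3, e4]
  field_simp
  ring

lemma true_val_gen (r : ℝ) (hr0 : 0 < r) (hr : r < 0.4)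
    (β : Fin 3 → EuclideanSpace ℝ (Fin 1))
    (h0 : β 0 0 = -2) (h1 : β 1 0 = 0) (h2 : β 2 0 = 2) :
    kmeansObj 1 3
        (ballMixDensity 1 3
          ![(WithLp.toLp 2 (fun _ => (-2 : ℝ)) : EuclideanSpace ℝ (Fin 1)),
            (WithLp.toLp 2 (fun _ => (0 : ℝ)) : EuclideanSpace ℝ (Fin 1)),
            (WithLp.toLp 2 (fun _ => (2 : ℝ)) : EuclideanSpace ℝ (Fin 1))] r) β = r^2/3 := by
  have hr' : r < 2/5 := by norm_num at hr; linarith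
  rw [kmeans_reduce r hr0]
  have e1 : (∫ t in (-2-r)..(-2+r), ⨅ j : Fin 3, (t - β j 0)^2)
      = (((-2+r) - (-2:ℝ))^3 - ((-2-r) - (-2:ℝ))^3)/3 := by
    apply int_inf_eq' β _ _ _ (by linarith) 0 h0
    intro t ht
    apply forall_fin3
    · rw [h0]
    · rw [h1]; exact sq_cmp' (by linarith) (by rcases ht with ⟨hl, hu⟩; linarith)
    · rw [h2]; exact sq_cmp' (by linarith) (by rcases ht with ⟨hl, hu⟩; linarith)
  have e2 : (∫ t in (-r)..r, ⨅ j : Fin 3, (t - β j 0)^2)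
      = ((r - (0:ℝ))^3 - (-r - (0:ℝ))^3)/3 := by
    apply int_inf_eq' β _ _ _ (by linarith) 1 h1
    intro t ht
    apply forall_fin3
    · rw [h0]; exact sq_cmp (by linarith) (by rcases ht with ⟨hl, hu⟩; linarith)
    · rw [h1]
    · rw [h2]; exact sq_cmp' (by linarith) (by rcases ht with ⟨hl, hu⟩; linarith)
  have e3 : (∫ t in (2-r)..(2+r), ⨅ j : Fin 3, (t - β j 0)^2)
      = (((2+r) - (2:ℝ))^3 - ((2-r) - (2:ℝ))^3)/3 := by
    apply int_inf_eq' β _ _ _ (by linarith) 2 h2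
    intro t ht
    apply forall_fin3
    · rw [h0]; exact sq_cmp (by linarith) (by rcases ht with ⟨hl, hu⟩; linarith)
    · rw [h1]; exact sq_cmp (by linarith) (by rcases ht with ⟨hl, hu⟩; linarith)
    · rw [h2]
  rw [e1, e2, e3]
  field_simp
  ring

set_option maxHeartbeats 1600000 in
/-- One-dimensional Stochastic Ball Model with `k = 3`, true centers `-2, 0, 2` and radius
`r < 0.4`: the configuration `(-2 - r/2, -2 + r/2, 1)` is a local minimum of the population
k-means objective `G`, but not a global minimum. -/
theorem spurious_local_min_exists (r : ℝ) (hr0 : 0 < r) (hr : r < 0.4) :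
    IsLocalMin
        (kmeansObj 1 3
          (ballMixDensity 1 3
            ![(WithLp.toLp 2 (fun _ => (-2 : ℝ)) : EuclideanSpace ℝ (Fin 1)),
              (WithLp.toLp 2 (fun _ => (0 : ℝ)) : EuclideanSpace ℝ (Fin 1)),
              (WithLp.toLp 2 (fun _ => (2 : ℝ)) : EuclideanSpace ℝ (Fin 1))] r))
        ![(WithLp.toLp 2 (fun _ => -2 - r / 2) : EuclideanSpace ℝ (Fin 1)),
          (WithLp.toLp 2 (fun _ => -2 + r / 2) : EuclideanSpace ℝ (Fin 1)),
          (WithLp.toLp 2 (fun _ => (1 : ℝ)) : EuclideanSpace ℝ (Fin 1))] ∧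
      ¬ (∀ β' : Fin 3 → EuclideanSpace ℝ (Fin 1),
          kmeansObj 1 3
              (ballMixDensity 1 3
                ![(WithLp.toLp 2 (fun _ => (-2 : ℝ)) : EuclideanSpace ℝ (Fin 1)),
                  (WithLp.toLp 2 (fun _ => (0 : ℝ)) : EuclideanSpace ℝ (Fin 1)),
                  (WithLp.toLp 2 (fun _ => (2 : ℝ)) : EuclideanSpace ℝ (Fin 1))] r)
              ![(WithLp.toLp 2 (fun _ => -2 - r / 2) : EuclideanSpace ℝ (Fin 1)),
                (WithLp.toLp 2 (fun _ => -2 + r / 2) : EuclideanSpace ℝ (Fin 1)),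
                (WithLp.toLp 2 (fun _ => (1 : ℝ)) : EuclideanSpace ℝ (Fin 1))] ≤
            kmeansObj 1 3
              (ballMixDensity 1 3
                ![(WithLp.toLp 2 (fun _ => (-2 : ℝ)) : EuclideanSpace ℝ (Fin 1)),
                  (WithLp.toLp 2 (fun _ => (0 : ℝ)) : EuclideanSpace ℝ (Fin 1)),
                  (WithLp.toLp 2 (fun _ => (2 : ℝ)) : EuclideanSpace ℝ (Fin 1))] r) β') := by
  have hr' : r < 2/5 := by norm_num at hr; linarith
  have hcand : kmeansObj 1 3
      (ballMixDensity 1 3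
        ![(WithLp.toLp 2 (fun _ => (-2 : ℝ)) : EuclideanSpace ℝ (Fin 1)),
          (WithLp.toLp 2 (fun _ => (0 : ℝ)) : EuclideanSpace ℝ (Fin 1)),
          (WithLp.toLp 2 (fun _ => (2 : ℝ)) : EuclideanSpace ℝ (Fin 1))] r)
      ![(WithLp.toLp 2 (fun _ => -2 - r / 2) : EuclideanSpace ℝ (Fin 1)),
        (WithLp.toLp 2 (fun _ => -2 + r / 2) : EuclideanSpace ℝ (Fin 1)),
        (WithLp.toLp 2 (fun _ => (1 : ℝ)) : EuclideanSpace ℝ (Fin 1))] = r^2/4 + 2/3 :=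
    cand_val_gen r hr0 hr _ rfl rfl rfl
  constructor
  · -- local minimum
    set δ : ℝ := min (r/2) ((2-5*r)/10) with hδdef
    have hδ : 0 < δ := lt_min (by linarith) (by linarith)
    have hd1 : δ ≤ r/2 := min_le_left _ _
    have hd2 : δ ≤ (2-5*r)/10 := min_le_right _ _
    filter_upwards [Metric.ball_mem_nhds _ hδ] with β' hβ'
    rw [hcand, kmeans_reduce r hr0 β']
    -- coordinate bounds
    have habs : ∀ j : Fin 3, |β' j 0 -
        (![(WithLp.toLp 2 (fun _ => -2 - r / 2) : EuclideanSpace ℝ (Fin 1)),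
          (WithLp.toLp 2 (fun _ => -2 + r / 2) : EuclideanSpace ℝ (Fin 1)),
          (WithLp.toLp 2 (fun _ => (1 : ℝ)) : EuclideanSpace ℝ (Fin 1))] j) 0| < δ := by
      intro j
      have hd : dist (β' j)
          (![(WithLp.toLp 2 (fun _ => -2 - r / 2) : EuclideanSpace ℝ (Fin 1)),
            (WithLp.toLp 2 (fun _ => -2 + r / 2) : EuclideanSpace ℝ (Fin 1)),
            (WithLp.toLp 2 (fun _ => (1 : ℝ)) : EuclideanSpace ℝ (Fin 1))] j) < δ :=
        lt_of_le_of_lt (dist_le_pi_dist β' _ j) (mem_ball.1 hβ')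
      have he : dist (β' j)
          (![(WithLp.toLp 2 (fun _ => -2 - r / 2) : EuclideanSpace ℝ (Fin 1)),
            (WithLp.toLp 2 (fun _ => -2 + r / 2) : EuclideanSpace ℝ (Fin 1)),
            (WithLp.toLp 2 (fun _ => (1 : ℝ)) : EuclideanSpace ℝ (Fin 1))] j)
          = |β' j 0 - (![(WithLp.toLp 2 (fun _ => -2 - r / 2) : EuclideanSpace ℝ (Fin 1)),
            (WithLp.toLp 2 (fun _ => -2 + r / 2) : EuclideanSpace ℝ (Fin 1)),
            (WithLp.toLp 2 (fun _ => (1 : ℝ)) : EuclideanSpace ℝ (Fin 1))] j) 0| := by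
        rw [dist_eq_norm, norm_euclid_one]
        rfl
      rwa [he] at hd
    have h0 := abs_lt.1 (habs 0)
    have h1 := abs_lt.1 (habs 1)
    have h2 := abs_lt.1 (habs 2)
    have c0 : (![(WithLp.toLp 2 (fun _ => -2 - r / 2) : EuclideanSpace ℝ (Fin 1)),
          (WithLp.toLp 2 (fun _ => -2 + r / 2) : EuclideanSpace ℝ (Fin 1)),
          (WithLp.toLp 2 (fun _ => (1 : ℝ)) : EuclideanSpace ℝ (Fin 1))] 0) 0 = -2 - r/2 := rfl
    have c1 : (![(WithLp.toLp 2 (fun _ => -2 - r / 2) : EuclideanSpace ℝ (Fin 1)),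
          (WithLp.toLp 2 (fun _ => -2 + r / 2) : EuclideanSpace ℝ (Fin 1)),
          (WithLp.toLp 2 (fun _ => (1 : ℝ)) : EuclideanSpace ℝ (Fin 1))] 1) 0 = -2 + r/2 := rfl
    have c2 : (![(WithLp.toLp 2 (fun _ => -2 - r / 2) : EuclideanSpace ℝ (Fin 1)),
          (WithLp.toLp 2 (fun _ => -2 + r / 2) : EuclideanSpace ℝ (Fin 1)),
          (WithLp.toLp 2 (fun _ => (1 : ℝ)) : EuclideanSpace ℝ (Fin 1))] 2) 0 = 1 := rfl
    rw [c0] at h0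
    rw [c1] at h1
    rw [c2] at h2
    obtain ⟨h0l, h0u⟩ := h0
    obtain ⟨h1l, h1u⟩ := h1
    obtain ⟨h2l, h2u⟩ := h2
    -- abbreviations
    set a : ℝ := β' 0 0 with hadef
    set b : ℝ := β' 1 0 with hbdef
    set c : ℝ := β' 2 0 with hcdef
    have hab : a ≤ b := by linarith
    have hm1 : -2 - r ≤ (a+b)/2 := by linarith
    have hm2 : (a+b)/2 ≤ -2 + r := by linarith
    -- split the first integral at the midpoint
    have hi : ∀ p q : ℝ, IntervalIntegrable (fun t => ⨅ j : Fin 3, (t - β' j 0)^2) volume p q :=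
      fun p q => (cont_g (fun j => β' j 0)).intervalIntegrable p q
    have hsplit := intervalIntegral.integral_add_adjacent_intervals
      (hi (-2-r) ((a+b)/2)) (hi ((a+b)/2) (-2+r))
    rw [← hsplit]
    have gA1 : ((a+b)/2 - (-2-r))^3/12 ≤ ∫ t in (-2-r)..((a+b)/2), ⨅ j : Fin 3, (t - β' j 0)^2 := by
      apply int_inf_ge' β' _ _ a hm1 0 rfl
      intro t ht
      apply forall_fin3
      · exact le_rfl
      · exact sq_cmp' hab (by rcases ht with ⟨hl, hu⟩; linarith)
      · exact sq_cmp' (by linarith) (by rcases ht with ⟨hl, hu⟩; linarith)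
    have gA2 : ((-2+r) - (a+b)/2)^3/12 ≤ ∫ t in ((a+b)/2)..(-2+r), ⨅ j : Fin 3, (t - β' j 0)^2 := by
      apply int_inf_ge' β' _ _ b hm2 1 rfl
      intro t ht
      apply forall_fin3
      · exact sq_cmp hab (by rcases ht with ⟨hl, hu⟩; linarith)
      · exact le_rfl
      · exact sq_cmp' (by linarith) (by rcases ht with ⟨hl, hu⟩; linarith)
    have gB : (∫ t in (-r)..r, ⨅ j : Fin 3, (t - β' j 0)^2)
        = ((r - c)^3 - (-r - c)^3)/3 := by
      apply int_inf_eq' β' _ _ c (by linarith) 2 rfl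
      intro t ht
      apply forall_fin3
      · exact sq_cmp (by linarith) (by rcases ht with ⟨hl, hu⟩; linarith)
      · exact sq_cmp (by linarith) (by rcases ht with ⟨hl, hu⟩; linarith)
      · exact le_rfl
    have gC : (∫ t in (2-r)..(2+r), ⨅ j : Fin 3, (t - β' j 0)^2)
        = ((2+r - c)^3 - (2-r - c)^3)/3 := by
      apply int_inf_eq' β' _ _ c (by linarith) 2 rfl
      intro t ht
      apply forall_fin3
      · exact sq_cmp (by linarith) (by rcases ht with ⟨hl, hu⟩; linarith)
      · exact sq_cmp (by linarith) (by rcases ht with ⟨hl, hu⟩; linarith)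
      · exact le_rfl
    rw [gB, gC]
    have hA : r^3/6 ≤ (∫ t in (-2-r)..((a+b)/2), ⨅ j : Fin 3, (t - β' j 0)^2)
        + ∫ t in ((a+b)/2)..(-2+r), ⨅ j : Fin 3, (t - β' j 0)^2 := by
      have key : r^3/6 ≤ ((a+b)/2 - (-2-r))^3/12 + ((-2+r) - (a+b)/2)^3/12 := by
        nlinarith [mul_nonneg hr0.le (sq_nonneg ((a+b)/2 + 2))]
      linarith
    have hBC : (4*r^3 + 12*r)/3 ≤ ((r - c)^3 - (-r - c)^3)/3 + ((2+r - c)^3 - (2-r - c)^3)/3 := by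
      nlinarith [mul_nonneg hr0.le (sq_nonneg (c - 1))]
    have hfrac : (0:ℝ) ≤ 1/(6*r) := by positivity
    calc r^2/4 + 2/3 = 1/(6*r) * (r^3/6 + (4*r^3 + 12*r)/3) := by field_simp; ring
      _ ≤ _ := by
          apply mul_le_mul_of_nonneg_left _ hfrac
          linarith
  · -- not a global minimum
    intro hall
    have htrue := hall ![(WithLp.toLp 2 (fun _ => (-2 : ℝ)) : EuclideanSpace ℝ (Fin 1)),
        (WithLp.toLp 2 (fun _ => (0 : ℝ)) : EuclideanSpace ℝ (Fin 1)),
        (WithLp.toLp 2 (fun _ => (2 : ℝ)) : EuclideanSpace ℝ (Fin 1))]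
    rw [hcand, true_val_gen r hr0 hr _ rfl rfl rfl] at htrue
    nlinarith
end
end

section
/- (Family of bounds for the ball model, Part 2: mass bounds.) Let β = (β_1, …, β_k) ∈ (ℝ^d)^k be a local minimum of G and let λ > 0. Fix i ∈ [k] and s ∈ T_i, and suppose ρ_s(∂_{j,ℓ}) ≤ λ for every pair (j, ℓ) with j ≠ ℓ. Then: if s ∈ A_i, P_s(V_i(β)) ≥ 1 − k²λr; and if s ∈ T_i \ A_i, P_s(V_i(β)) ≤ kλr. -/
open MeasureTheory Metric Set

noncomputable section

/-- Voronoi set of the fitted center `β i`. -/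
def voronoi (d k : ℕ) (β : Fin k → EuclideanSpace ℝ (Fin d)) (i : Fin k) :
    Set (EuclideanSpace ℝ (Fin d)) :=
  {x | ∀ j : Fin k, ‖x - β i‖ ≤ ‖x - β j‖}

/-- Voronoi boundary between the fitted centers `β i` and `β j`. -/
def vorBoundary (d k : ℕ) (β : Fin k → EuclideanSpace ℝ (Fin d)) (i j : Fin k) :
    Set (EuclideanSpace ℝ (Fin d)) :=
  {x ∈ voronoi d k β i ∪ voronoi d k β j | ‖x - β i‖ = ‖x - β j‖}

/-- `ρ_s(∂_{i,j})`: relative volume ((d−1)-dimensional Hausdorff measure, normalized by the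
volume of a radius-`r` ball) of the part of the Voronoi boundary `∂_{i,j}(β)` inside the
true cluster `B_s`. -/
def rhoBoundary (d k : ℕ) (βstar : Fin k → EuclideanSpace ℝ (Fin d)) (r : ℝ)
    (β : Fin k → EuclideanSpace ℝ (Fin d)) (s i j : Fin k) : ℝ :=
  (MeasureTheory.Measure.hausdorffMeasure ((d : ℝ) - 1)
      (vorBoundary d k β i j ∩ Metric.closedBall (βstar s) r)).toReal /
    ((volume (Metric.ball (0 : EuclideanSpace ℝ (Fin d)) 1)).toReal * r ^ d)

/-- `T_i`: the indices of true clusters meeting the Voronoi set `V_i(β)`. -/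
def Tset (d k : ℕ) (βstar : Fin k → EuclideanSpace ℝ (Fin d)) (r : ℝ)
    (β : Fin k → EuclideanSpace ℝ (Fin d)) (i : Fin k) : Set (Fin k) :=
  {s | (voronoi d k β i ∩ Metric.closedBall (βstar s) r).Nonempty}

/-- `A_i`: the indices of true centers lying in the interior of the Voronoi set `V_i(β)`. -/
def Aset (d k : ℕ) (βstar : Fin k → EuclideanSpace ℝ (Fin d)) (r : ℝ)
    (β : Fin k → EuclideanSpace ℝ (Fin d)) (i : Fin k) : Set (Fin k) :=
  {s | βstar s ∈ interior (voronoi d k β i)}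

/-- Maximum pairwise distance among the true centers. -/
def Deltamax (d k : ℕ) (βstar : Fin k → EuclideanSpace ℝ (Fin d)) : ℝ :=
  sSup {y : ℝ | ∃ s s' : Fin k, s ≠ s' ∧ y = dist (βstar s) (βstar s')}

namespace BallAux
attribute [-instance] Fintype.subtypeEq

variable {d : ℕ}

lemma coord_dist_le (x y : EuclideanSpace ℝ (Fin d)) (i : Fin d) :
    dist (x i) (y i) ≤ dist x y := by
  rw [EuclideanSpace.dist_eq]
  rw [show dist (x i) (y i) = Real.sqrt (dist (x i) (y i) ^ 2) by rw [Real.sqrt_sq dist_nonneg]]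
  exact Real.sqrt_le_sqrt (Finset.single_le_sum (f := fun j => dist (x j) (y j) ^ 2)
    (fun j _ => sq_nonneg _) (Finset.mem_univ i))

lemma drop_lipschitz (i0 : Fin d) :
    LipschitzWith 1 (fun (y : EuclideanSpace ℝ (Fin d)) (i : {i : Fin d // ¬ i = i0}) => y i.1) := by
  apply LipschitzWith.of_dist_le_mul
  intro y y'
  rw [NNReal.coe_one, one_mul]
  exact (dist_pi_le_iff dist_nonneg).2 fun b => coord_dist_le y y' b.1

lemma volume_slab_le (hd : 1 ≤ d) (i0 : Fin d) (c r : ℝ) (hr : 0 ≤ r)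
    (B : Set (EuclideanSpace ℝ (Fin d))) (hB : ∀ y ∈ B, y i0 = c) (hBc : IsCompact B) :
    volume (Set.image2 (fun z t => z + t • (EuclideanSpace.single i0 (1:ℝ))) B (Set.Icc 0 r))
      ≤ ENNReal.ofReal r * μH[(d : ℝ) - 1] B := by
  classical
  set drop : EuclideanSpace ℝ (Fin d) → ({i : Fin d // ¬ i = i0} → ℝ) :=
    fun y i => y i.1 with hdrop
  have hDc : IsCompact (drop '' B) := hBc.image (drop_lipschitz i0).continuous
  have hDm : MeasurableSet (drop '' B) := hDc.isClosed.measurableSet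
  have h1 := EuclideanSpace.volume_preserving_symm_measurableEquiv_toLp (Fin d)
  have h2 := MeasureTheory.volume_preserving_piEquivPiSubtypeProd
    (fun _ : Fin d => ℝ) (fun i => i = i0)
  have hmp := h2.comp h1
  set F := (MeasurableEquiv.piEquivPiSubtypeProd (fun _ : Fin d => ℝ) (fun i => i = i0)) ∘
    (MeasurableEquiv.toLp 2 (Fin d → ℝ)).symm with hFdef
  have hsub : Set.image2 (fun z t => z + t • (EuclideanSpace.single i0 (1:ℝ))) B (Set.Icc 0 r)
      ⊆ F ⁻¹' ((Set.pi Set.univ fun _ : {i : Fin d // i = i0} => Set.Icc c (c + r)) ×ˢ (drop '' B)) := by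
    rintro w ⟨z, hz, t, ht, rfl⟩
    constructor
    · intro i _
      show (z + t • (EuclideanSpace.single i0 (1:ℝ))) i.1 ∈ Set.Icc c (c + r)
      have hit : i.1 = i0 := i.2
      have : (z + t • (EuclideanSpace.single i0 (1:ℝ))) i.1
          = z i0 + t := by
        rw [hit]
        simp [EuclideanSpace.single_apply]
      rw [this, hB z hz]
      exact ⟨by linarith [ht.1], by linarith [ht.2]⟩
    · show drop (z + t • (EuclideanSpace.single i0 (1:ℝ))) ∈ drop '' B
      have : drop (z + t • (EuclideanSpace.single i0 (1:ℝ))) = drop z := by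
        funext i
        show (z + t • (EuclideanSpace.single i0 (1:ℝ))) i.1 = z i.1
        simp [EuclideanSpace.single_apply, i.2]
      rw [this]
      exact ⟨z, hz, rfl⟩
  have hmeas : MeasurableSet ((Set.pi Set.univ fun _ : {i : Fin d // i = i0} => Set.Icc c (c + r)) ×ˢ (drop '' B)) :=
    (MeasurableSet.univ_pi fun _ => measurableSet_Icc).prod hDm
  have hvol : volume (F ⁻¹' ((Set.pi Set.univ fun _ : {i : Fin d // i = i0} => Set.Icc c (c + r)) ×ˢ (drop '' B)))
      = ENNReal.ofReal r * volume (drop '' B) := by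
    rw [hmp.measure_preimage hmeas.nullMeasurableSet]
    rw [MeasureTheory.Measure.volume_eq_prod, MeasureTheory.Measure.prod_prod]
    congr 1
    rw [MeasureTheory.volume_pi_pi]
    simp [Real.volume_Icc]
  have hd0 : (0:ℝ) ≤ (d:ℝ) - 1 := by
    have : (1:ℝ) ≤ (d:ℝ) := by exact_mod_cast hd
    linarith
  have hcast : ((Fintype.card {i : Fin d // ¬ i = i0} : ℕ) : ℝ) = (d:ℝ) - 1 := by
    have hc : Fintype.card {i : Fin d // ¬ i = i0} = d - 1 := by
      rw [Fintype.card_subtype_compl, Fintype.card_subtype_eq, Fintype.card_fin]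
    rw [hc, Nat.cast_sub hd, Nat.cast_one]
  have hvolD : volume (drop '' B) = μH[(d:ℝ)-1] (drop '' B) := by
    rw [← hcast, ← MeasureTheory.hausdorffMeasure_pi_real]
  have hlip : μH[(d:ℝ)-1] (drop '' B) ≤ μH[(d:ℝ)-1] B := by
    simpa using (drop_lipschitz i0).hausdorffMeasure_image_le hd0 B
  calc volume (Set.image2 (fun z t => z + t • (EuclideanSpace.single i0 (1:ℝ))) B (Set.Icc 0 r))
      ≤ volume (F ⁻¹' ((Set.pi Set.univ fun _ : {i : Fin d // i = i0} => Set.Icc c (c + r)) ×ˢ (drop '' B))) :=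
        measure_mono hsub
    _ = ENNReal.ofReal r * volume (drop '' B) := hvol
    _ = ENNReal.ofReal r * μH[(d:ℝ)-1] (drop '' B) := by rw [hvolD]
    _ ≤ ENNReal.ofReal r * μH[(d:ℝ)-1] B := mul_le_mul_right hlip _



open RealInnerProductSpace

variable {d : ℕ}

lemma inner_nonneg_of_le {k : ℕ} (β : Fin k → EuclideanSpace ℝ (Fin d)) (j l : Fin k)
    (p x : EuclideanSpace ℝ (Fin d))
    (hp : ‖p - β l‖ ≤ ‖p - β j‖) (hx : ‖x - β j‖ ≤ ‖x - β l‖) :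
    0 ≤ ⟪x - p, β j - β l⟫ := by
  have h1 : ‖x - β j‖ ^ 2 ≤ ‖x - β l‖ ^ 2 := by
    apply pow_le_pow_left₀ (norm_nonneg _) hx
  have h2 : ‖p - β l‖ ^ 2 ≤ ‖p - β j‖ ^ 2 := by
    apply pow_le_pow_left₀ (norm_nonneg _) hp
  rw [norm_sub_sq_real, norm_sub_sq_real] at h1 h2
  have e : ⟪x - p, β j - β l⟫
      = (⟪x, β j⟫ - ⟪x, β l⟫) - (⟪p, β j⟫ - ⟪p, β l⟫) := by
    rw [inner_sub_left, inner_sub_right, inner_sub_right]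
  rw [e]
  linarith

/-- Orthogonal projection onto the hyperplane through `p` with unit normal `u`. -/
def projH (p u x : EuclideanSpace ℝ (Fin d)) : EuclideanSpace ℝ (Fin d) :=
  x - ⟪x - p, u⟫ • u

lemma inner_projH (p u : EuclideanSpace ℝ (Fin d)) (hu : ‖u‖ = 1)
    (x : EuclideanSpace ℝ (Fin d)) : ⟪projH p u x - p, u⟫ = 0 := by
  have h : projH p u x - p = (x - p) - ⟪x - p, u⟫ • u := by
    rw [projH, sub_right_comm]
  rw [h, inner_sub_left, real_inner_smul_left, real_inner_self_eq_norm_sq, hu]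
  ring

lemma projH_lipschitz (p u : EuclideanSpace ℝ (Fin d)) (hu : ‖u‖ = 1) :
    LipschitzWith 1 (projH p u) := by
  apply LipschitzWith.of_dist_le_mul
  intro x y
  rw [NNReal.coe_one, one_mul, dist_eq_norm, dist_eq_norm]
  have e : projH p u x - projH p u y = (x - y) - ⟪x - y, u⟫ • u := by
    rw [projH, projH]
    have : ⟪x - p, u⟫ - ⟪y - p, u⟫ = ⟪x - y, u⟫ := by
      rw [← inner_sub_left, sub_sub_sub_cancel_right]
    rw [← this, sub_smul]
    abel
  rw [e]
  have hsq : ‖(x - y) - ⟪x - y, u⟫ • u‖ ^ 2 = ‖x - y‖ ^ 2 - ⟪x - y, u⟫ ^ 2 := by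
    rw [norm_sub_sq_real, real_inner_smul_right, norm_smul, Real.norm_eq_abs, hu, mul_one,
      sq_abs]
    ring
  nlinarith [norm_nonneg ((x - y) - ⟪x - y, u⟫ • u), norm_nonneg (x - y), sq_nonneg ⟪x - y, u⟫]

lemma voronoi_isClosed {k : ℕ} (β : Fin k → EuclideanSpace ℝ (Fin d)) (j : Fin k) :
    IsClosed (voronoi d k β j) := by
  have : voronoi d k β j = ⋂ l, {x : EuclideanSpace ℝ (Fin d) | ‖x - β j‖ ≤ ‖x - β l‖} := by
    ext x; simp [voronoi, Set.mem_iInter]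
  rw [this]
  exact isClosed_iInter fun l => isClosed_le
    ((continuous_id.sub continuous_const).norm) ((continuous_id.sub continuous_const).norm)

lemma frontier_voronoi_subset {k : ℕ} (β : Fin k → EuclideanSpace ℝ (Fin d)) (j : Fin k) :
    frontier (voronoi d k β j) ⊆
      ⋃ l ∈ {l : Fin k | β l ≠ β j}, vorBoundary d k β j l := by
  intro y hy
  rw [(voronoi_isClosed β j).frontier_eq] at hy
  obtain ⟨hyV, hyI⟩ := hy
  have hex : ∃ l, β l ≠ β j ∧ ‖y - β l‖ ≤ ‖y - β j‖ := by
    by_contra hnot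
    push_neg at hnot
    have hU : IsOpen {x : EuclideanSpace ℝ (Fin d) | ∀ l, β l ≠ β j → ‖x - β j‖ < ‖x - β l‖} := by
      have : {x : EuclideanSpace ℝ (Fin d) | ∀ l, β l ≠ β j → ‖x - β j‖ < ‖x - β l‖}
          = ⋂ l, {x : EuclideanSpace ℝ (Fin d) | β l ≠ β j → ‖x - β j‖ < ‖x - β l‖} := by
        ext x; simp [Set.mem_iInter]
      rw [this]
      refine isOpen_iInter_of_finite fun l => ?_
      by_cases hc : β l = β j
      · simp [hc]
      · have : {x : EuclideanSpace ℝ (Fin d) | β l ≠ β j → ‖x - β j‖ < ‖x - β l‖}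
            = {x : EuclideanSpace ℝ (Fin d) | ‖x - β j‖ < ‖x - β l‖} := by
          ext x; simp [hc]
        rw [this]
        exact isOpen_lt ((continuous_id.sub continuous_const).norm)
          ((continuous_id.sub continuous_const).norm)
    have hUsub : {x : EuclideanSpace ℝ (Fin d) | ∀ l, β l ≠ β j → ‖x - β j‖ < ‖x - β l‖}
        ⊆ voronoi d k β j := by
      intro x hx l
      by_cases hc : β l = β j
      · rw [hc]
      · exact (hx l hc).le
    have hyU : y ∈ {x : EuclideanSpace ℝ (Fin d) | ∀ l, β l ≠ β j → ‖x - β j‖ < ‖x - β l‖} := by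
      intro l hl
      exact hnot l hl
    exact hyI (interior_maximal hUsub hU hyU)
  obtain ⟨l, hlne, hle⟩ := hex
  refine Set.mem_biUnion hlne ⟨Set.mem_union_left _ hyV, le_antisymm (hyV l) hle⟩


lemma volume_cell_le (hd : 1 ≤ d) {k : ℕ} (β : Fin k → EuclideanSpace ℝ (Fin d))
    (p : EuclideanSpace ℝ (Fin d)) {r : ℝ} (hr : 0 < r) (j l0 : Fin k)
    (hne : β l0 ≠ β j) (hple : ‖p - β l0‖ ≤ ‖p - β j‖) :
    volume (voronoi d k β j ∩ closedBall p r) ≤ ENNReal.ofReal r *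
      μH[(d : ℝ) - 1] (frontier (voronoi d k β j) ∩ closedBall p r) := by
  classical
  have hd0 : (0:ℝ) ≤ (d:ℝ) - 1 := by
    have : (1:ℝ) ≤ (d:ℝ) := by exact_mod_cast hd
    linarith
  set v := β j - β l0 with hv
  have hvne : v ≠ 0 := sub_ne_zero.mpr hne.symm
  set u := ‖v‖⁻¹ • v with huv
  have hnu : ‖u‖ = 1 := norm_smul_inv_norm hvne
  have hside : ∀ x ∈ voronoi d k β j, 0 ≤ ⟪x - p, u⟫ := by
    intro x hx
    rw [huv, real_inner_smul_right]
    exact mul_nonneg (inv_nonneg.2 (norm_nonneg _)) (inner_nonneg_of_le β j l0 p x hple (hx l0))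
  set S := frontier (voronoi d k β j) ∩ closedBall p r with hSdef
  have hScomp : IsCompact S := (isCompact_closedBall p r).inter_left isClosed_frontier
  set A := projH p u '' S with hAdef
  have hAcomp : IsCompact A := hScomp.image (projH_lipschitz p u hnu).continuous
  have hAperp : ∀ z ∈ A, ⟪z - p, u⟫ = 0 := by
    rintro z ⟨x, -, rfl⟩
    exact inner_projH p u hnu x
  have hnormt : ∀ z : EuclideanSpace ℝ (Fin d), ⟪z - p, u⟫ = 0 → ∀ t : ℝ,
      ‖(z + t • u) - p‖ ^ 2 = ‖z - p‖ ^ 2 + t ^ 2 := by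
    intro z hz t
    have h1 : (z + t • u) - p = (z - p) + t • u := by abel
    rw [h1, norm_add_sq_real, real_inner_smul_right, hz, norm_smul, Real.norm_eq_abs, hnu,
      mul_one, sq_abs]
    ring
  have hinnt : ∀ z : EuclideanSpace ℝ (Fin d), ⟪z - p, u⟫ = 0 → ∀ t : ℝ,
      ⟪(z + t • u) - p, u⟫ = t := by
    intro z hz t
    have h1 : (z + t • u) - p = (z - p) + t • u := by abel
    rw [h1, inner_add_left, hz, real_inner_smul_left, real_inner_self_eq_norm_sq, hnu]
    ring
  have hcover : voronoi d k β j ∩ closedBall p r ⊆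
      Set.image2 (fun z t => z + t • u) A (Set.Icc 0 r) ∪ sphere p r := by
    rintro x ⟨hxV, hxB⟩
    have hzp : ⟪projH p u x - p, u⟫ = 0 := inner_projH p u hnu x
    have hxzt : projH p u x + ⟪x - p, u⟫ • u = x := by
      rw [projH]; abel
    have htx0 : 0 ≤ ⟪x - p, u⟫ := hside x hxV
    have htxr : ⟪x - p, u⟫ ≤ r := by
      have h1 : ⟪x - p, u⟫ ≤ ‖x - p‖ * ‖u‖ := real_inner_le_norm _ _
      have h2 : ‖x - p‖ ≤ r := by rwa [← dist_eq_norm, ← mem_closedBall]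
      rw [hnu, mul_one] at h1
      linarith
    set L := {t : ℝ | projH p u x + t • u ∈ voronoi d k β j ∩ closedBall p r} with hLdef
    have hLx : ⟪x - p, u⟫ ∈ L := by
      rw [hLdef, Set.mem_setOf_eq, hxzt]; exact ⟨hxV, hxB⟩
    have hLsub : L ⊆ Set.Icc 0 r := by
      rintro t ⟨htV, htB⟩
      refine ⟨?_, ?_⟩
      · have h0 := hside _ htV
        rwa [hinnt _ hzp t] at h0
      · have h1 : ⟪(projH p u x + t • u) - p, u⟫ ≤ ‖(projH p u x + t • u) - p‖ * ‖u‖ :=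
          real_inner_le_norm _ _
        have h2 : ‖(projH p u x + t • u) - p‖ ≤ r := by rwa [← dist_eq_norm, ← mem_closedBall]
        rw [hinnt _ hzp t, hnu, mul_one] at h1
        linarith
    have hLclosed : IsClosed L := by
      have he : L = (fun t : ℝ => projH p u x + t • u) ⁻¹'
          (voronoi d k β j ∩ closedBall p r) := rfl
      rw [he]
      exact IsClosed.preimage (continuous_const.add (continuous_id.smul continuous_const))
        ((voronoi_isClosed β j).inter Metric.isClosed_closedBall)
    have hbdd : BddBelow L := ⟨0, fun t ht => (hLsub ht).1⟩
    have ht0L : sInf L ∈ L := hLclosed.csInf_mem ⟨_, hLx⟩ hbdd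
    obtain ⟨hyV, hyB⟩ := ht0L
    have ht0Icc : sInf L ∈ Set.Icc 0 r := hLsub (hLclosed.csInf_mem ⟨_, hLx⟩ hbdd)
    by_cases hcase : ‖(projH p u x + sInf L • u) - p‖ < r
    · left
      have hyint : (projH p u x + sInf L • u) ∉ interior (voronoi d k β j) := by
        intro hint
        obtain ⟨ε, hε, hball⟩ := Metric.mem_nhds_iff.mp (mem_interior_iff_mem_nhds.mp hint)
        have hε'0 : 0 < min (ε/2) (r - ‖(projH p u x + sInf L • u) - p‖) := by
          apply lt_min (by linarith) (by linarith)
        have heq : projH p u x + (sInf L - min (ε/2) (r - ‖(projH p u x + sInf L • u) - p‖)) • u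
            = (projH p u x + sInf L • u) - min (ε/2) (r - ‖(projH p u x + sInf L • u) - p‖) • u := by
          rw [sub_smul]; abel
        have hmem : sInf L - min (ε/2) (r - ‖(projH p u x + sInf L • u) - p‖) ∈ L := by
          constructor
          · apply hball
            rw [mem_ball, dist_eq_norm, heq]
            have he2 : (projH p u x + sInf L • u) - min (ε/2) (r - ‖(projH p u x + sInf L • u) - p‖) • u
                - (projH p u x + sInf L • u)
                = -(min (ε/2) (r - ‖(projH p u x + sInf L • u) - p‖) • u) := by abel
            rw [he2, norm_neg, norm_smul, Real.norm_eq_abs, hnu, mul_one, abs_of_pos hε'0]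
            exact lt_of_le_of_lt (min_le_left _ _) (by linarith)
          · rw [mem_closedBall, dist_eq_norm, heq]
            have he3 : (projH p u x + sInf L • u) - min (ε/2) (r - ‖(projH p u x + sInf L • u) - p‖) • u - p
                = ((projH p u x + sInf L • u) - p) - min (ε/2) (r - ‖(projH p u x + sInf L • u) - p‖) • u := by
              abel
            rw [he3]
            have h4 := norm_sub_le ((projH p u x + sInf L • u) - p)
              (min (ε/2) (r - ‖(projH p u x + sInf L • u) - p‖) • u)
            rw [norm_smul, Real.norm_eq_abs, hnu, mul_one, abs_of_pos hε'0] at h4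
            have h5 := min_le_right (ε/2) (r - ‖(projH p u x + sInf L • u) - p‖)
            linarith
        have hc := csInf_le hbdd hmem
        linarith
      have hyS : (projH p u x + sInf L • u) ∈ S := by
        rw [hSdef]
        refine ⟨?_, hyB⟩
        rw [(voronoi_isClosed β j).frontier_eq]
        exact ⟨hyV, hyint⟩
      have hzA : projH p u x ∈ A := by
        rw [hAdef]
        refine ⟨projH p u x + sInf L • u, hyS, ?_⟩
        rw [projH, hinnt _ hzp (sInf L)]
        abel
      exact ⟨projH p u x, hzA, ⟪x - p, u⟫, ⟨htx0, htxr⟩, hxzt⟩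
    · right
      have hyr : ‖(projH p u x + sInf L • u) - p‖ = r := le_antisymm
        (by rwa [← dist_eq_norm, ← mem_closedBall]) (not_lt.mp hcase)
      have ht0tx : sInf L ≤ ⟪x - p, u⟫ := csInf_le hbdd hLx
      have htxt0 : ⟪x - p, u⟫ = sInf L := by
        by_contra hne'
        have hlt : sInf L < ⟪x - p, u⟫ := lt_of_le_of_ne ht0tx (fun h => hne' h.symm)
        have e1 := hnormt _ hzp ⟪x - p, u⟫
        have e2 := hnormt _ hzp (sInf L)
        rw [hxzt] at e1
        have hxr : ‖x - p‖ ≤ r := by rwa [← dist_eq_norm, ← mem_closedBall]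
        have hxr2 : ‖x - p‖ ^ 2 ≤ r ^ 2 := by
          apply pow_le_pow_left₀ (norm_nonneg _) hxr
        rw [hyr] at e2
        nlinarith [ht0Icc.1]
      rw [mem_sphere, ← hxzt, htxt0, dist_eq_norm]
      exact hyr
  haveI : Nontrivial (EuclideanSpace ℝ (Fin d)) := by
    apply Module.nontrivial_of_finrank_pos (R := ℝ)
    rw [finrank_euclideanSpace_fin]; omega
  have hsph : volume (sphere p r) = 0 := Measure.addHaar_sphere (μ := volume) p r
  have hI2comp : IsCompact (Set.image2 (fun z t => z + t • u) A (Set.Icc 0 r)) := by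
    rw [← Set.image_uncurry_prod]
    exact (hAcomp.prod isCompact_Icc).image (continuous_fst.add (continuous_snd.smul continuous_const))
  have hT : volume (voronoi d k β j ∩ closedBall p r)
      ≤ volume (Set.image2 (fun z t => z + t • u) A (Set.Icc 0 r)) := by
    calc volume (voronoi d k β j ∩ closedBall p r)
        ≤ volume (Set.image2 (fun z t => z + t • u) A (Set.Icc 0 r) ∪ sphere p r) :=
          measure_mono hcover
      _ ≤ volume (Set.image2 (fun z t => z + t • u) A (Set.Icc 0 r)) + volume (sphere p r) :=
          measure_union_le _ _
      _ = volume (Set.image2 (fun z t => z + t • u) A (Set.Icc 0 r)) := by rw [hsph, add_zero]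
  set i0 : Fin d := ⟨0, by omega⟩ with hi0
  have hcard : Module.finrank ℝ (EuclideanSpace ℝ (Fin d)) = Fintype.card (Fin d) := by
    rw [finrank_euclideanSpace_fin, Fintype.card_fin]
  have horth : Orthonormal ℝ (({i0} : Set (Fin d)).restrict (fun _ : Fin d => u)) :=
    ⟨fun i => hnu, fun i j' hij => absurd (Subsingleton.elim i j') hij⟩
  obtain ⟨b, hb⟩ := horth.exists_orthonormalBasis_extension_of_card_eq (𝕜 := ℝ) hcard
  have hbu : b i0 = u := hb i0 rfl
  have hφu : b.repr u = EuclideanSpace.single i0 (1:ℝ) := by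
    rw [← hbu, OrthonormalBasis.repr_self]
  have himg : b.repr '' (Set.image2 (fun z t => z + t • u) A (Set.Icc 0 r))
      = Set.image2 (fun z t => z + t • (EuclideanSpace.single i0 (1:ℝ)))
        (b.repr '' A) (Set.Icc 0 r) := by
    rw [hAdef, Set.image_image2, Set.image2_image_left, Set.image_image, Set.image2_image_left]
    have hfun : (fun (a : EuclideanSpace ℝ (Fin d)) (t : ℝ) => b.repr (projH p u a + t • u))
        = fun a t => b.repr (projH p u a) + t • EuclideanSpace.single i0 (1:ℝ) := by
      funext a t
      rw [map_add, LinearIsometryEquiv.map_smul, hφu]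
    rw [hfun]
  have hφA_c : ∀ y ∈ b.repr '' A, y i0 = ⟪u, p⟫ := by
    rintro y ⟨z, hz, rfl⟩
    rw [OrthonormalBasis.repr_apply_apply, hbu]
    have h1 := hAperp z hz
    rw [inner_sub_left] at h1
    rw [show (inner ℝ u z : ℝ) = inner ℝ z u from real_inner_comm z u,
      show (inner ℝ u p : ℝ) = inner ℝ p u from real_inner_comm p u]
    linarith
  have hφAcomp : IsCompact (b.repr '' A) := hAcomp.image b.repr.continuous
  have hslab := volume_slab_le hd i0 ⟪u, p⟫ r hr.le (b.repr '' A) hφA_c hφAcomp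
  have hveq : volume (Set.image2 (fun z t => z + t • u) A (Set.Icc 0 r))
      = volume (b.repr '' (Set.image2 (fun z t => z + t • u) A (Set.Icc 0 r))) := by
    have h := (b.measurePreserving_repr).measure_preimage
      ((hI2comp.image b.repr.continuous).isClosed.measurableSet).nullMeasurableSet
    rw [Set.preimage_image_eq _ b.repr.injective] at h
    exact h
  have hHiso : μH[(d:ℝ)-1] (b.repr '' A) = μH[(d:ℝ)-1] A :=
    b.repr.isometry.hausdorffMeasure_image (Or.inl hd0) A
  have hHproj : μH[(d:ℝ)-1] A ≤ μH[(d:ℝ)-1] S := by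
    rw [hAdef]
    simpa using (projH_lipschitz p u hnu).hausdorffMeasure_image_le hd0 S
  calc volume (voronoi d k β j ∩ closedBall p r)
      ≤ volume (Set.image2 (fun z t => z + t • u) A (Set.Icc 0 r)) := hT
    _ = volume (b.repr '' (Set.image2 (fun z t => z + t • u) A (Set.Icc 0 r))) := hveq
    _ = volume (Set.image2 (fun z t => z + t • (EuclideanSpace.single i0 (1:ℝ)))
        (b.repr '' A) (Set.Icc 0 r)) := by rw [himg]
    _ ≤ ENNReal.ofReal r * μH[(d:ℝ)-1] (b.repr '' A) := hslab
    _ = ENNReal.ofReal r * μH[(d:ℝ)-1] A := by rw [hHiso]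
    _ ≤ ENNReal.ofReal r * μH[(d:ℝ)-1] S := mul_le_mul_right hHproj _


lemma coord_dist_le' (x y : EuclideanSpace ℝ (Fin d)) (i : Fin d) :
    dist (x i) (y i) ≤ dist x y := by
  rw [EuclideanSpace.dist_eq]
  rw [show dist (x i) (y i) = Real.sqrt (dist (x i) (y i) ^ 2) by rw [Real.sqrt_sq dist_nonneg]]
  exact Real.sqrt_le_sqrt (Finset.single_le_sum (f := fun j => dist (x j) (y j) ^ 2)
    (fun j _ => sq_nonneg _) (Finset.mem_univ i))

def extMap (i0 : Fin d) (c1 : ℝ) (g : {i : Fin d // ¬ i = i0} → ℝ) :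
    EuclideanSpace ℝ (Fin d) :=
  (WithLp.equiv 2 (Fin d → ℝ)).symm (fun i => if h : i = i0 then c1 else g ⟨i, h⟩)

lemma extMap_apply (i0 : Fin d) (c1 : ℝ) (g : {i : Fin d // ¬ i = i0} → ℝ) (i : Fin d) :
    extMap i0 c1 g i = if h : i = i0 then c1 else g ⟨i, h⟩ := rfl

lemma hausdorff_hyperplane_lt_top (hd : 1 ≤ d) (u' : EuclideanSpace ℝ (Fin d)) (hu' : ‖u'‖ = 1)
    (c1 : ℝ) (p : EuclideanSpace ℝ (Fin d)) (r : ℝ) (hr : 0 ≤ r) :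
    μH[(d:ℝ)-1] ({x : EuclideanSpace ℝ (Fin d) | ⟪x, u'⟫ = c1} ∩ closedBall p r) < ⊤ := by
  classical
  have hd0 : (0:ℝ) ≤ (d:ℝ) - 1 := by
    have : (1:ℝ) ≤ (d:ℝ) := by exact_mod_cast hd
    linarith
  set i0 : Fin d := ⟨0, by omega⟩ with hi0
  have hcard : Module.finrank ℝ (EuclideanSpace ℝ (Fin d)) = Fintype.card (Fin d) := by
    rw [finrank_euclideanSpace_fin, Fintype.card_fin]
  have horth : Orthonormal ℝ (({i0} : Set (Fin d)).restrict (fun _ : Fin d => u')) :=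
    ⟨fun i => hu', fun i j' hij => absurd (Subsingleton.elim i j') hij⟩
  obtain ⟨b, hb⟩ := horth.exists_orthonormalBasis_extension_of_card_eq (𝕜 := ℝ) hcard
  have hbu : b i0 = u' := hb i0 rfl
  set X := {x : EuclideanSpace ℝ (Fin d) | ⟪x, u'⟫ = c1} ∩ closedBall p r with hX
  have h1 : μH[(d:ℝ)-1] X = μH[(d:ℝ)-1] (b.repr '' X) :=
    (b.repr.isometry.hausdorffMeasure_image (Or.inl hd0) X).symm
  have hK : LipschitzWith (NNReal.sqrt d) (extMap i0 c1) := by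
    apply LipschitzWith.of_dist_le_mul
    intro g g'
    rw [Real.coe_sqrt, NNReal.coe_natCast, EuclideanSpace.dist_eq]
    have hbound : ∀ i : Fin d, dist (extMap i0 c1 g i) (extMap i0 c1 g' i) ^ 2
        ≤ dist g g' ^ 2 := by
      intro i
      rw [extMap_apply, extMap_apply]
      by_cases h : i = i0
      · rw [dif_pos h, dif_pos h]
        simpa using sq_nonneg (dist g g')
      · rw [dif_neg h, dif_neg h]
        have h2 : dist (g ⟨i, h⟩) (g' ⟨i, h⟩) ≤ dist g g' := dist_le_pi_dist g g' _
        exact pow_le_pow_left₀ dist_nonneg h2 2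
    calc Real.sqrt (∑ i, dist (extMap i0 c1 g i) (extMap i0 c1 g' i) ^ 2)
        ≤ Real.sqrt (∑ _i : Fin d, dist g g' ^ 2) :=
          Real.sqrt_le_sqrt (Finset.sum_le_sum fun i _ => hbound i)
      _ = Real.sqrt ((d : ℝ) * dist g g' ^ 2) := by
          rw [Finset.sum_const, Finset.card_univ, Fintype.card_fin, nsmul_eq_mul]
      _ = Real.sqrt d * dist g g' := by
          rw [Real.sqrt_mul (Nat.cast_nonneg d), Real.sqrt_sq dist_nonneg]
  have hsub : b.repr '' X ⊆
      extMap i0 c1 '' (closedBall (fun i : {i : Fin d // ¬ i = i0} => b.repr p i.1) r) := by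
    rintro y ⟨x, ⟨hx1, hx2⟩, rfl⟩
    refine ⟨fun i => b.repr x i.1, ?_, ?_⟩
    · rw [mem_closedBall]
      refine (dist_pi_le_iff hr).2 fun i => ?_
      refine le_trans (coord_dist_le' (b.repr x) (b.repr p) i.1) ?_
      rw [b.repr.isometry.dist_eq]
      rwa [mem_closedBall] at hx2
    · ext i
      rw [extMap_apply]
      by_cases h : i = i0
      · subst h
        rw [dif_pos rfl, OrthonormalBasis.repr_apply_apply, hbu, real_inner_comm]
        exact hx1.symm
      · simp only [h, dif_neg, not_false_iff]
  have hlip := hK.hausdorffMeasure_image_le hd0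
    (closedBall (fun i : {i : Fin d // ¬ i = i0} => b.repr p i.1) r)
  have hcast : ((Fintype.card {i : Fin d // ¬ i = i0} : ℕ) : ℝ) = (d:ℝ) - 1 := by
    have hc : Fintype.card {i : Fin d // ¬ i = i0} = d - 1 := by
      rw [Fintype.card_subtype_compl, Fintype.card_subtype_eq, Fintype.card_fin]
    rw [hc, Nat.cast_sub hd, Nat.cast_one]
  have hvolD : μH[(d:ℝ)-1] (closedBall (fun i : {i : Fin d // ¬ i = i0} => b.repr p i.1) r)
      = volume (closedBall (fun i : {i : Fin d // ¬ i = i0} => b.repr p i.1) r) := by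
    rw [← hcast, MeasureTheory.hausdorffMeasure_pi_real]
  have hfin : volume (closedBall (fun i : {i : Fin d // ¬ i = i0} => b.repr p i.1) r) < ⊤ :=
    (isCompact_closedBall _ _).measure_lt_top
  calc μH[(d:ℝ)-1] X = μH[(d:ℝ)-1] (b.repr '' X) := h1
    _ ≤ μH[(d:ℝ)-1] (extMap i0 c1 ''
        (closedBall (fun i : {i : Fin d // ¬ i = i0} => b.repr p i.1) r)) :=
        measure_mono hsub
    _ < ⊤ := lt_of_le_of_lt hlip (by
        rw [hvolD]
        exact ENNReal.mul_lt_top (ENNReal.rpow_lt_top_of_nonneg hd0 ENNReal.coe_ne_top) hfin)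


lemma hausdorff_vorBoundary_lt_top (hd : 1 ≤ d) {k : ℕ}
    (β : Fin k → EuclideanSpace ℝ (Fin d)) {j l : Fin k} (hne : β l ≠ β j)
    (p : EuclideanSpace ℝ (Fin d)) {r : ℝ} (hr : 0 ≤ r) :
    μH[(d:ℝ)-1] (vorBoundary d k β j l ∩ closedBall p r) < ⊤ := by
  have hwne : β l - β j ≠ 0 := sub_ne_zero.mpr hne
  have hu' : ‖‖β l - β j‖⁻¹ • (β l - β j)‖ = 1 := norm_smul_inv_norm hwne
  have hsub : vorBoundary d k β j l ∩ closedBall p r ⊆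
      {x : EuclideanSpace ℝ (Fin d) | ⟪x, ‖β l - β j‖⁻¹ • (β l - β j)⟫
        = ‖β l - β j‖⁻¹ * ((‖β l‖^2 - ‖β j‖^2)/2)} ∩ closedBall p r := by
    rintro x ⟨⟨-, hxe⟩, hxB⟩
    refine ⟨?_, hxB⟩
    have h1 : ‖x - β j‖^2 = ‖x - β l‖^2 := by rw [hxe]
    rw [norm_sub_sq_real, norm_sub_sq_real] at h1
    have h2 : ⟪x, β l - β j⟫ = (‖β l‖^2 - ‖β j‖^2)/2 := by
      rw [inner_sub_right]
      linarith
    show ⟪x, ‖β l - β j‖⁻¹ • (β l - β j)⟫ = ‖β l - β j‖⁻¹ * ((‖β l‖^2 - ‖β j‖^2)/2)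
    rw [real_inner_smul_right, h2]
  exact lt_of_le_of_lt (measure_mono hsub)
    (hausdorff_hyperplane_lt_top hd _ hu' _ p r hr)

lemma mem_interior_voronoi {k : ℕ} (β : Fin k → EuclideanSpace ℝ (Fin d)) (i : Fin k)
    (x : EuclideanSpace ℝ (Fin d)) (hx : ∀ l, β l ≠ β i → ‖x - β i‖ < ‖x - β l‖) :
    x ∈ interior (voronoi d k β i) := by
  have hU : IsOpen {y : EuclideanSpace ℝ (Fin d) | ∀ l, β l ≠ β i → ‖y - β i‖ < ‖y - β l‖} := by
    have he : {y : EuclideanSpace ℝ (Fin d) | ∀ l, β l ≠ β i → ‖y - β i‖ < ‖y - β l‖}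
        = ⋂ l, {y : EuclideanSpace ℝ (Fin d) | β l ≠ β i → ‖y - β i‖ < ‖y - β l‖} := by
      ext y; simp [Set.mem_iInter]
    rw [he]
    refine isOpen_iInter_of_finite fun l => ?_
    by_cases hc : β l = β i
    · simp [hc]
    · have he2 : {y : EuclideanSpace ℝ (Fin d) | β l ≠ β i → ‖y - β i‖ < ‖y - β l‖}
          = {y : EuclideanSpace ℝ (Fin d) | ‖y - β i‖ < ‖y - β l‖} := by
        ext y; simp [hc]
      rw [he2]
      exact isOpen_lt ((continuous_id.sub continuous_const).norm)
        ((continuous_id.sub continuous_const).norm)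
  have hUsub : {y : EuclideanSpace ℝ (Fin d) | ∀ l, β l ≠ β i → ‖y - β i‖ < ‖y - β l‖}
      ⊆ voronoi d k β i := by
    intro y hy l
    by_cases hc : β l = β i
    · rw [hc]
    · exact (hy l hc).le
  exact interior_maximal hUsub hU hx

end BallAux

/-- Family of bounds for the ball model, Part 2 (mass bounds): if every Voronoi boundary
enclosed by the true cluster `B_s` (for `s ∈ T_i`) has relative volume at most `λ`, then
`P_s(V_i(β)) ≥ 1 − k²λr` when `s ∈ A_i`, and `P_s(V_i(β)) ≤ kλr` when `s ∈ T_i \ A_i`. -/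
theorem ball_family_bounds_part2_mass (d k : ℕ) (hd : 1 ≤ d) (hk : 2 ≤ k)
    (βstar : Fin k → EuclideanSpace ℝ (Fin d)) (hinj : Function.Injective βstar)
    (r : ℝ) (hr : 0 < r)
    (hdisj : Pairwise fun s s' : Fin k =>
      Disjoint (Metric.closedBall (βstar s) r) (Metric.closedBall (βstar s') r))
    (β : Fin k → EuclideanSpace ℝ (Fin d))
    (hmin : IsLocalMin (kmeansObj d k (ballMixDensity d k βstar r)) β)
    (lam : ℝ) (hlam : 0 < lam) (i : Fin k) (s : Fin k)
    (hs : s ∈ Tset d k βstar r β i)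
    (hrho : ∀ j l : Fin k, j ≠ l → rhoBoundary d k βstar r β s j l ≤ lam) :
    (s ∈ Aset d k βstar r β i →
      1 - (k : ℝ) ^ 2 * lam * r ≤
        ∫ x in voronoi d k β i, unifBallDensity d (βstar s) r x) ∧
    (s ∉ Aset d k βstar r β i →
      (∫ x in voronoi d k β i, unifBallDensity d (βstar s) r x) ≤ k * lam * r) := by
  classical
  have hd' : (1:ℝ) ≤ (d:ℝ) := by exact_mod_cast hd
  have hvbfin : volume (Metric.closedBall (βstar s) r) ≠ ⊤ := measure_closedBall_lt_top.ne
  have hvbpos : 0 < volume (Metric.closedBall (βstar s) r) :=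
    measure_closedBall_pos volume (βstar s) hr
  have hvbrpos : 0 < (volume (Metric.closedBall (βstar s) r)).toReal :=
    ENNReal.toReal_pos hvbpos.ne' hvbfin
  have hden : (volume (Metric.ball (0 : EuclideanSpace ℝ (Fin d)) 1)).toReal * r ^ d
      = (volume (Metric.closedBall (βstar s) r)).toReal := by
    rw [Measure.addHaar_closedBall _ _ hr.le, finrank_euclideanSpace_fin,
      ENNReal.toReal_mul, ENNReal.toReal_ofReal (by positivity)]
    ring
  have hbdry : ∀ j l : Fin k, β l ≠ β j →
      μH[(d:ℝ)-1] (vorBoundary d k β j l ∩ Metric.closedBall (βstar s) r)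
        ≤ ENNReal.ofReal (lam * (volume (Metric.closedBall (βstar s) r)).toReal) := by
    intro j l hnejl
    have hjl : j ≠ l := fun h => hnejl (by rw [h])
    have hfin := BallAux.hausdorff_vorBoundary_lt_top hd β hnejl (βstar s) hr.le
    have hr1 := hrho j l hjl
    rw [rhoBoundary, hden] at hr1
    rw [div_le_iff₀ hvbrpos] at hr1
    calc μH[(d:ℝ)-1] (vorBoundary d k β j l ∩ Metric.closedBall (βstar s) r)
        = ENNReal.ofReal ((μH[(d:ℝ)-1]
            (vorBoundary d k β j l ∩ Metric.closedBall (βstar s) r)).toReal) :=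
          (ENNReal.ofReal_toReal hfin.ne).symm
      _ ≤ ENNReal.ofReal (lam * (volume (Metric.closedBall (βstar s) r)).toReal) :=
          ENNReal.ofReal_le_ofReal hr1
  have hfrontier : ∀ j : Fin k,
      μH[(d:ℝ)-1] (frontier (voronoi d k β j) ∩ Metric.closedBall (βstar s) r)
        ≤ (k : ENNReal) * ENNReal.ofReal (lam * (volume (Metric.closedBall (βstar s) r)).toReal) := by
    intro j
    have hsub : frontier (voronoi d k β j) ∩ Metric.closedBall (βstar s) r ⊆
        ⋃ l ∈ Finset.univ.filter (fun l => β l ≠ β j),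
          (vorBoundary d k β j l ∩ Metric.closedBall (βstar s) r) := by
      rintro x ⟨hx1, hx2⟩
      have hmem := BallAux.frontier_voronoi_subset β j hx1
      rw [Set.mem_iUnion₂] at hmem
      obtain ⟨l, hl, hxl⟩ := hmem
      exact Set.mem_biUnion (Finset.mem_filter.mpr ⟨Finset.mem_univ l, hl⟩) ⟨hxl, hx2⟩
    calc μH[(d:ℝ)-1] (frontier (voronoi d k β j) ∩ Metric.closedBall (βstar s) r)
        ≤ ∑ l ∈ Finset.univ.filter (fun l => β l ≠ β j),
            μH[(d:ℝ)-1] (vorBoundary d k β j l ∩ Metric.closedBall (βstar s) r) :=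
          le_trans (measure_mono hsub) (measure_biUnion_finset_le _ _)
      _ ≤ ∑ _l ∈ Finset.univ.filter (fun l => β l ≠ β j),
            ENNReal.ofReal (lam * (volume (Metric.closedBall (βstar s) r)).toReal) :=
          Finset.sum_le_sum fun l hl => hbdry j l (Finset.mem_filter.mp hl).2
      _ = ((Finset.univ.filter (fun l => β l ≠ β j)).card : ENNReal) *
            ENNReal.ofReal (lam * (volume (Metric.closedBall (βstar s) r)).toReal) := by
          rw [Finset.sum_const, nsmul_eq_mul]
      _ ≤ (k : ENNReal) *
            ENNReal.ofReal (lam * (volume (Metric.closedBall (βstar s) r)).toReal) := by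
          apply mul_le_mul_left
          apply Nat.cast_le.mpr
          calc (Finset.univ.filter (fun l => β l ≠ β j)).card
              ≤ Finset.univ.card := Finset.card_filter_le _ _
            _ = k := by rw [Finset.card_univ, Fintype.card_fin]
  have hcell : ∀ j : Fin k, (∃ l, β l ≠ β j ∧ ‖βstar s - β l‖ ≤ ‖βstar s - β j‖) →
      volume (voronoi d k β j ∩ Metric.closedBall (βstar s) r)
        ≤ ENNReal.ofReal r * ((k : ENNReal) *
            ENNReal.ofReal (lam * (volume (Metric.closedBall (βstar s) r)).toReal)) := by
    rintro j ⟨l, hl1, hl2⟩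
    exact le_trans (BallAux.volume_cell_le hd β (βstar s) hr j l hl1 hl2)
      (mul_le_mul_right (hfrontier j) _)
  have hcellfin : (ENNReal.ofReal r * ((k : ENNReal) *
      ENNReal.ofReal (lam * (volume (Metric.closedBall (βstar s) r)).toReal))) ≠ ⊤ := by
    apply ENNReal.mul_ne_top ENNReal.ofReal_ne_top
    exact ENNReal.mul_ne_top (ENNReal.natCast_ne_top k) ENNReal.ofReal_ne_top
  have htoReal : (ENNReal.ofReal r * ((k : ENNReal) *
      ENNReal.ofReal (lam * (volume (Metric.closedBall (βstar s) r)).toReal))).toReal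
      = r * ((k : ℝ) * (lam * (volume (Metric.closedBall (βstar s) r)).toReal)) := by
    rw [ENNReal.toReal_mul, ENNReal.toReal_mul, ENNReal.toReal_ofReal hr.le,
      ENNReal.toReal_ofReal (by positivity), ENNReal.toReal_natCast]
  have hP : (∫ x in voronoi d k β i, unifBallDensity d (βstar s) r x)
      = (volume (voronoi d k β i ∩ Metric.closedBall (βstar s) r)).toReal
        * ((volume (Metric.closedBall (βstar s) r)).toReal)⁻¹ := by
    rw [show (fun x => unifBallDensity d (βstar s) r x)
        = fun x => (Metric.closedBall (βstar s) r).indicator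
            (fun _ => ((volume (Metric.closedBall (βstar s) r)).toReal)⁻¹) x from rfl]
    rw [MeasureTheory.setIntegral_indicator measurableSet_closedBall,
      MeasureTheory.setIntegral_const, smul_eq_mul]
    rfl
  have hVfin : volume (voronoi d k β i ∩ Metric.closedBall (βstar s) r) ≠ ⊤ :=
    (lt_of_le_of_lt (measure_mono Set.inter_subset_right) measure_closedBall_lt_top).ne
  constructor
  · intro hA
    have hAi : βstar s ∈ interior (voronoi d k β i) := hA
    have hcov : Metric.closedBall (βstar s) r \ voronoi d k β i ⊆
        ⋃ j ∈ Finset.univ.filter (fun j => β j ≠ β i),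
          (voronoi d k β j ∩ Metric.closedBall (βstar s) r) := by
      rintro x ⟨hxB, hxV⟩
      obtain ⟨j, -, hj⟩ := Finset.exists_min_image Finset.univ (fun j => ‖x - β j‖)
        ⟨i, Finset.mem_univ i⟩
      have hxVj : x ∈ voronoi d k β j := fun l => hj l (Finset.mem_univ l)
      have hne : β j ≠ β i := by
        intro h
        apply hxV
        intro l
        rw [show ‖x - β i‖ = ‖x - β j‖ by rw [h]]
        exact hxVj l
      exact Set.mem_biUnion (Finset.mem_filter.mpr ⟨Finset.mem_univ j, hne⟩) ⟨hxVj, hxB⟩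
    have hdiff : volume (Metric.closedBall (βstar s) r \ voronoi d k β i)
        ≤ (k : ENNReal) * (ENNReal.ofReal r * ((k : ENNReal) *
            ENNReal.ofReal (lam * (volume (Metric.closedBall (βstar s) r)).toReal))) := by
      calc volume (Metric.closedBall (βstar s) r \ voronoi d k β i)
          ≤ ∑ j ∈ Finset.univ.filter (fun j => β j ≠ β i),
              volume (voronoi d k β j ∩ Metric.closedBall (βstar s) r) :=
            le_trans (measure_mono hcov) (measure_biUnion_finset_le _ _)
        _ ≤ ∑ _j ∈ Finset.univ.filter (fun j => β j ≠ β i),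
              (ENNReal.ofReal r * ((k : ENNReal) *
                ENNReal.ofReal (lam * (volume (Metric.closedBall (βstar s) r)).toReal))) := by
            apply Finset.sum_le_sum
            intro j hj
            exact hcell j ⟨i, (Finset.mem_filter.mp hj).2.symm, interior_subset hAi j⟩
        _ = ((Finset.univ.filter (fun j => β j ≠ β i)).card : ENNReal) *
              (ENNReal.ofReal r * ((k : ENNReal) *
                ENNReal.ofReal (lam * (volume (Metric.closedBall (βstar s) r)).toReal))) := by
            rw [Finset.sum_const, nsmul_eq_mul]
        _ ≤ (k : ENNReal) * (ENNReal.ofReal r * ((k : ENNReal) *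
              ENNReal.ofReal (lam * (volume (Metric.closedBall (βstar s) r)).toReal))) := by
            apply mul_le_mul_left
            apply Nat.cast_le.mpr
            calc (Finset.univ.filter (fun j => β j ≠ β i)).card
                ≤ Finset.univ.card := Finset.card_filter_le _ _
              _ = k := by rw [Finset.card_univ, Fintype.card_fin]
    have hsplit := measure_le_inter_add_diff volume (Metric.closedBall (βstar s) r)
      (voronoi d k β i)
    have hsum : volume (Metric.closedBall (βstar s) r)
        ≤ volume (voronoi d k β i ∩ Metric.closedBall (βstar s) r)
          + (k : ENNReal) * (ENNReal.ofReal r * ((k : ENNReal) *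
              ENNReal.ofReal (lam * (volume (Metric.closedBall (βstar s) r)).toReal))) := by
      rw [Set.inter_comm]
      exact le_trans hsplit (add_le_add le_rfl hdiff)
    have hDfin : ((k : ENNReal) * (ENNReal.ofReal r * ((k : ENNReal) *
        ENNReal.ofReal (lam * (volume (Metric.closedBall (βstar s) r)).toReal)))) ≠ ⊤ :=
      ENNReal.mul_ne_top (ENNReal.natCast_ne_top k) hcellfin
    have htR : (volume (Metric.closedBall (βstar s) r)).toReal
        ≤ (volume (voronoi d k β i ∩ Metric.closedBall (βstar s) r)).toReal
          + (k : ℝ) * (r * ((k : ℝ) * (lam *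
              (volume (Metric.closedBall (βstar s) r)).toReal))) := by
      have h1 := ENNReal.toReal_mono (by
        exact ENNReal.add_ne_top.mpr ⟨hVfin, hDfin⟩) hsum
      rw [ENNReal.toReal_add hVfin hDfin, ENNReal.toReal_mul, ENNReal.toReal_natCast,
        htoReal] at h1
      exact h1
    rw [hP]
    rw [show (volume (voronoi d k β i ∩ Metric.closedBall (βstar s) r)).toReal
        * ((volume (Metric.closedBall (βstar s) r)).toReal)⁻¹
        = (volume (voronoi d k β i ∩ Metric.closedBall (βstar s) r)).toReal
          / (volume (Metric.closedBall (βstar s) r)).toReal from (div_eq_mul_inv _ _).symm]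
    rw [le_div_iff₀ hvbrpos]
    nlinarith [htR, hvbrpos, hlam.le, hr.le]
  · intro hA
    have hnA : βstar s ∉ interior (voronoi d k β i) := hA
    have hex : ∃ l, β l ≠ β i ∧ ‖βstar s - β l‖ ≤ ‖βstar s - β i‖ := by
      by_contra hnot
      push_neg at hnot
      exact hnA (BallAux.mem_interior_voronoi β i (βstar s) hnot)
    have hXle : (volume (voronoi d k β i ∩ Metric.closedBall (βstar s) r)).toReal
        ≤ r * ((k : ℝ) * (lam * (volume (Metric.closedBall (βstar s) r)).toReal)) := by
      have h1 := ENNReal.toReal_mono hcellfin (hcell i hex)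
      rwa [htoReal] at h1
    rw [hP]
    have heq : (r * ((k : ℝ) * (lam * (volume (Metric.closedBall (βstar s) r)).toReal)))
        * ((volume (Metric.closedBall (βstar s) r)).toReal)⁻¹ = (k : ℝ) * lam * r := by
      field_simp
    calc (volume (voronoi d k β i ∩ Metric.closedBall (βstar s) r)).toReal
        * ((volume (Metric.closedBall (βstar s) r)).toReal)⁻¹
        ≤ (r * ((k : ℝ) * (lam * (volume (Metric.closedBall (βstar s) r)).toReal)))
          * ((volume (Metric.closedBall (βstar s) r)).toReal)⁻¹ :=
          mul_le_mul_of_nonneg_right hXle (inv_nonneg.mpr hvbrpos.le)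
      _ = (k : ℝ) * lam * r := heq
end
end

section
/- (Family of bounds for the ball model, Part 2(a): almost-empty Voronoi sets.) Let β = (β_1, …, β_k) ∈ (ℝ^d)^k be a local minimum of G and let λ > 0. Fix i ∈ [k] and suppose that ρ_s(∂_{j,ℓ}) ≤ λ for every s ∈ T_i and every pair (j, ℓ) with j ≠ ℓ, and that A_i = ∅. Then P(V_i(β)) ≤ kλr. -/
open MeasureTheory Metric Set

noncomputable section

variable {d k : ℕ}

local notation "E" d => EuclideanSpace ℝ (Fin d)

/-- halfspace characterization -/
lemma norm_sub_le_norm_sub_iff (a b x : EuclideanSpace ℝ (Fin d)) :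
    ‖x - a‖ ≤ ‖x - b‖ ↔ ‖a‖^2 - ‖b‖^2 ≤ 2 * (inner ℝ x (a - b) : ℝ) := by
  have h1 : ‖x - a‖^2 = ‖x‖^2 - 2 * (inner ℝ x a : ℝ) + ‖a‖^2 := norm_sub_sq_real x a
  have h2 : ‖x - b‖^2 = ‖x‖^2 - 2 * (inner ℝ x b : ℝ) + ‖b‖^2 := norm_sub_sq_real x b
  have h3 : (inner ℝ x (a - b) : ℝ) = inner ℝ x a - inner ℝ x b := inner_sub_right x a b
  constructor
  · intro h
    nlinarith [norm_nonneg (x - a), norm_nonneg (x - b)]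
  · intro h
    nlinarith [norm_nonneg (x - a), norm_nonneg (x - b)]

lemma isClosed_voronoi (β : Fin k → EuclideanSpace ℝ (Fin d)) (i : Fin k) :
    IsClosed (voronoi d k β i) := by
  have : voronoi d k β i = ⋂ j, {x : EuclideanSpace ℝ (Fin d) | ‖x - β i‖ ≤ ‖x - β j‖} := by
    ext x; simp [voronoi]
  rw [this]
  exact isClosed_iInter fun j => isClosed_le (by fun_prop) (by fun_prop)

lemma mem_interior_voronoi {β : Fin k → EuclideanSpace ℝ (Fin d)} {i : Fin k}
    {x : EuclideanSpace ℝ (Fin d)} (h : ∀ j, β j ≠ β i → ‖x - β i‖ < ‖x - β j‖) :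
    x ∈ interior (voronoi d k β i) := by
  set O : Set (EuclideanSpace ℝ (Fin d)) :=
    ⋂ j, {z | β j ≠ β i → ‖z - β i‖ < ‖z - β j‖} with hO
  have hopen : IsOpen O := by
    refine isOpen_iInter_of_finite fun j => ?_
    by_cases hj : β j = β i
    · have : {z : EuclideanSpace ℝ (Fin d) | β j ≠ β i → ‖z - β i‖ < ‖z - β j‖} = univ := by
        ext z; simp [hj]
      rw [this]; exact isOpen_univ
    · have : {z : EuclideanSpace ℝ (Fin d) | β j ≠ β i → ‖z - β i‖ < ‖z - β j‖} =
          {z | ‖z - β i‖ < ‖z - β j‖} := by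
        ext z; simp [hj]
      rw [this]
      exact isOpen_lt (by fun_prop) (by fun_prop)
  have hsub : O ⊆ voronoi d k β i := by
    intro z hz j
    by_cases hj : β j = β i
    · simp [hj]
    · exact le_of_lt ((mem_iInter.1 hz j) hj)
  have hxO : x ∈ O := mem_iInter.2 fun j hj => h j hj
  exact interior_maximal hsub hopen hxO

/-- contrapositive form -/
lemma exists_of_not_mem_interior {β : Fin k → EuclideanSpace ℝ (Fin d)} {i : Fin k}
    {x : EuclideanSpace ℝ (Fin d)} (h : x ∉ interior (voronoi d k β i)) :
    ∃ j, β j ≠ β i ∧ ‖x - β j‖ ≤ ‖x - β i‖ := by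
  by_contra hc
  push_neg at hc
  exact h (mem_interior_voronoi fun j hj => hc j hj)

/-- orthonormal basis with prescribed first vector -/
lemma exists_onb (n : ℕ) (u : EuclideanSpace ℝ (Fin (n+1))) (hu : ‖u‖ = 1) :
    ∃ b : OrthonormalBasis (Fin (n+1)) ℝ (EuclideanSpace ℝ (Fin (n+1))), b 0 = u := by
  have hcard : Module.finrank ℝ (EuclideanSpace ℝ (Fin (n+1))) = Fintype.card (Fin (n+1)) := by
    simp [finrank_euclideanSpace_fin]
  have horth : Orthonormal ℝ (({0} : Set (Fin (n+1))).restrict (fun _ => u)) := by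
    constructor
    · intro _; exact hu
    · intro i j hij
      exact absurd (Subsingleton.elim i j) hij
  obtain ⟨b, hb⟩ := Orthonormal.exists_orthonormalBasis_extension_of_card_eq hcard horth
  exact ⟨b, hb 0 rfl⟩

set_option maxHeartbeats 1000000 in
open scoped RealInnerProductSpace Classical in
lemma cap_bound (n k : ℕ) (β : Fin k → EuclideanSpace ℝ (Fin (n+1))) (i : Fin k)
    (c : EuclideanSpace ℝ (Fin (n+1))) (r : ℝ) (hr : 0 < r)
    (hint : c ∉ interior (voronoi (n+1) k β i)) :
    volume (voronoi (n+1) k β i ∩ closedBall c r) ≤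
      ENNReal.ofReal r * ∑ j ∈ Finset.univ.filter (fun j => β j ≠ β i),
        μH[(n:ℝ)] (vorBoundary (n+1) k β i j ∩ closedBall c r) := by
  obtain ⟨j0, hj0ne, hj0le⟩ := exists_of_not_mem_interior hint
  set N : ℝ := ‖β i - β j0‖ with hN
  have hNpos : 0 < N := by
    rw [hN, norm_pos_iff, sub_ne_zero]
    exact fun h => hj0ne h.symm
  set u : EuclideanSpace ℝ (Fin (n+1)) := N⁻¹ • (β i - β j0) with hu_def
  have hu : ‖u‖ = 1 := by
    rw [hu_def, norm_smul, norm_inv, Real.norm_eq_abs, abs_of_pos hNpos, ← hN]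
    field_simp
  set m : ℝ := (‖β i‖^2 - ‖β j0‖^2) / (2*N) with hm
  have hinner_u : ∀ x : EuclideanSpace ℝ (Fin (n+1)), ⟪x, u⟫ = N⁻¹ * ⟪x, β i - β j0⟫ := by
    intro x; rw [hu_def, real_inner_smul_right]
  have hVm : ∀ x ∈ voronoi (n+1) k β i, m ≤ ⟪x, u⟫ := by
    intro x hx
    have h1 : ‖x - β i‖ ≤ ‖x - β j0‖ := hx j0
    rw [norm_sub_le_norm_sub_iff] at h1
    rw [hinner_u, hm]
    rw [div_le_iff₀ (by positivity)]
    have : N⁻¹ * ⟪x, β i - β j0⟫ * (2*N) = 2 * ⟪x, β i - β j0⟫ := by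
      field_simp
    rw [this]; linarith
  have hcm : ⟪c, u⟫ ≤ m := by
    have h1 : ‖c - β j0‖ ≤ ‖c - β i‖ := hj0le
    rw [norm_sub_le_norm_sub_iff] at h1
    have h2 : ⟪c, β j0 - β i⟫ = - ⟪c, β i - β j0⟫ := by
      rw [← inner_neg_right, neg_sub]
    rw [h2] at h1
    rw [hinner_u, hm]
    rw [le_div_iff₀ (by positivity)]
    have : N⁻¹ * ⟪c, β i - β j0⟫ * (2*N) = 2 * ⟪c, β i - β j0⟫ := by
      field_simp
    rw [this]; nlinarith
  obtain ⟨b, hb0⟩ := exists_onb n u hu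
  set J : Finset (Fin k) := Finset.univ.filter (fun j => β j ≠ β i) with hJ
  set S : Set (EuclideanSpace ℝ (Fin (n+1))) :=
    voronoi (n+1) k β i ∩ closedBall c r with hS
  set Bnd : Set (EuclideanSpace ℝ (Fin (n+1))) :=
    (⋃ j ∈ J, vorBoundary (n+1) k β i j) ∩ closedBall c r with hBnd
  set Φ : EuclideanSpace ℝ (Fin (n+1)) → (Fin n → ℝ) := fun x l => ⟪b l.succ, x⟫ with hΦ
  -- Φ is 1-Lipschitz
  have hΦlip : LipschitzWith 1 Φ := by
    rw [lipschitzWith_iff_dist_le_mul]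
    intro x y
    rw [dist_pi_le_iff (by positivity)]
    intro l
    rw [Real.dist_eq, hΦ]
    have : ⟪b l.succ, x⟫ - ⟪b l.succ, y⟫ = ⟪b l.succ, x - y⟫ := (inner_sub_right _ _ _).symm
    simp only []
    rw [this]
    calc |⟪b l.succ, x - y⟫| ≤ ‖b l.succ‖ * ‖x - y‖ := abs_real_inner_le_norm _ _
      _ = 1 * dist x y := by rw [b.orthonormal.1 l.succ, dist_eq_norm]
  -- exit point: the shadow of S is contained in the shadow of Bnd
  have key : ∀ x ∈ S, ∃ y ∈ Bnd, Φ y = Φ x := by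
    intro x hx
    set Tset : Set ℝ := {t : ℝ | 0 ≤ t ∧ x - t • u ∈ voronoi (n+1) k β i} with hTset
    have hne : (0:ℝ) ∈ Tset := ⟨le_refl 0, by simpa using hx.1⟩
    have huu : ⟪u, u⟫ = 1 := by
      rw [real_inner_self_eq_norm_mul_norm, hu]; norm_num
    have hsub_inner : ∀ t : ℝ, ⟪x - t • u, u⟫ = ⟪x, u⟫ - t := by
      intro t
      rw [inner_sub_left, real_inner_smul_left, huu, mul_one]
    have hbdd : BddAbove Tset := by
      refine ⟨⟪x, u⟫ - m, fun t ht => ?_⟩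
      have := hVm _ ht.2
      rw [hsub_inner] at this
      linarith
    have hclosed : IsClosed Tset := by
      have heq : Tset = Ici (0:ℝ) ∩ (fun t : ℝ => x - t • u) ⁻¹' (voronoi (n+1) k β i) := by
        ext t; simp [hTset, Set.mem_Ici]
      rw [heq]
      exact isClosed_Ici.inter ((isClosed_voronoi β i).preimage
        (continuous_const.sub (continuous_id.smul continuous_const)))
    set T : ℝ := sSup Tset with hT
    have hTmem : T ∈ Tset := hclosed.csSup_mem ⟨0, hne⟩ hbdd
    have hT0 : 0 ≤ T := le_csSup hbdd hne
    set y : EuclideanSpace ℝ (Fin (n+1)) := x - T • u with hy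
    have hyV : y ∈ voronoi (n+1) k β i := hTmem.2
    have hyint : y ∉ interior (voronoi (n+1) k β i) := by
      intro hyi
      rw [mem_interior_iff_mem_nhds, Metric.mem_nhds_iff] at hyi
      obtain ⟨ε, hε, hball⟩ := hyi
      have hmem : T + ε/2 ∈ Tset := by
        refine ⟨by linarith, hball ?_⟩
        rw [mem_ball, dist_eq_norm]
        have : x - (T + ε/2) • u - y = -((ε/2) • u) := by
          rw [hy]; module
        rw [this, norm_neg, norm_smul, hu, mul_one, Real.norm_eq_abs,
          abs_of_pos (by linarith)]
        linarith
      have := le_csSup hbdd hmem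
      linarith
    obtain ⟨j', hj'ne, hj'le⟩ := exists_of_not_mem_interior hyint
    have hj'J : j' ∈ J := by simp [hJ, hj'ne]
    have hybnd : y ∈ vorBoundary (n+1) k β i j' :=
      ⟨Or.inl hyV, le_antisymm (hyV j') hj'le⟩
    have hTle : T ≤ ⟪x - c, u⟫ := by
      have h1 : m ≤ ⟪y, u⟫ := hVm _ hyV
      rw [hy, hsub_inner] at h1
      rw [inner_sub_left]
      linarith
    have hyball : y ∈ closedBall c r := by
      have hxc : ‖x - c‖ ≤ r := by
        have := hx.2; rwa [mem_closedBall, dist_eq_norm] at this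
      have hyc : y - c = (x - c) - T • u := by rw [hy]; module
      have hnorm : ‖y - c‖^2 = ‖x - c‖^2 - 2 * (T * ⟪x - c, u⟫) + T^2 := by
        rw [hyc, norm_sub_sq_real, real_inner_smul_right, norm_smul, hu, mul_one,
          Real.norm_eq_abs, sq_abs]
      have h2 : ‖y - c‖^2 ≤ r^2 := by
        nlinarith [mul_le_mul_of_nonneg_left hTle hT0, mul_self_nonneg T,
          pow_le_pow_left₀ (norm_nonneg (x - c)) hxc 2]
      have h3 : ‖y - c‖ ≤ r := by nlinarith [norm_nonneg (y - c)]
      rw [mem_closedBall, dist_eq_norm]; exact h3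
    refine ⟨y, ⟨Set.mem_biUnion hj'J hybnd, hyball⟩, ?_⟩
    funext l
    show ⟪b l.succ, y⟫ = ⟪b l.succ, x⟫
    rw [hy, inner_sub_right, real_inner_smul_right]
    have : ⟪b l.succ, u⟫ = 0 := by
      rw [← hb0]
      exact b.orthonormal.2 (Fin.succ_ne_zero l)
    rw [this]; ring
  -- measure computation via measure preserving coordinates
  set Ψ : EuclideanSpace ℝ (Fin (n+1)) → ℝ × (Fin n → ℝ) :=
    (MeasurableEquiv.piFinSuccAbove (fun _ : Fin (n+1) => ℝ) 0) ∘
      (MeasurableEquiv.toLp 2 (Fin (n+1) → ℝ)).symm ∘ b.repr with hΨ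
  have hΨmp : MeasurePreserving Ψ volume volume :=
    ((volume_preserving_piFinSuccAbove (fun _ : Fin (n+1) => ℝ) 0).comp
      ((EuclideanSpace.volume_preserving_symm_measurableEquiv_toLp (Fin (n+1))).comp
        b.measurePreserving_repr))
  have hΨapp : ∀ x, Ψ x = (⟪b 0, x⟫, Φ x) := by
    intro x
    have h1 : Ψ x = (b.repr x 0, fun l => b.repr x ((0 : Fin (n+1)).succAbove l)) := rfl
    rw [h1, Prod.ext_iff]
    constructor
    · exact b.repr_apply_apply x 0
    · funext l
      show b.repr x ((0 : Fin (n+1)).succAbove l) = ⟪b l.succ, x⟫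
      rw [Fin.zero_succAbove]
      exact b.repr_apply_apply x l.succ
  set TT : Set (Fin n → ℝ) := toMeasurable volume (Φ '' S) with hTT
  have hSsub : S ⊆ Ψ ⁻¹' (Set.Icc m (m + r) ×ˢ TT) := by
    intro x hx
    rw [Set.mem_preimage, hΨapp, Set.mem_prod]
    refine ⟨⟨?_, ?_⟩, subset_toMeasurable _ _ (Set.mem_image_of_mem Φ hx)⟩
    · show m ≤ ⟪b 0, x⟫
      rw [hb0, real_inner_comm]
      exact hVm x hx.1
    · show ⟪b 0, x⟫ ≤ m + r
      rw [hb0]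
      have hxc : ‖x - c‖ ≤ r := by
        have := hx.2; rwa [mem_closedBall, dist_eq_norm] at this
      have hsplit : ⟪u, x⟫ = ⟪u, x - c⟫ + ⟪u, c⟫ := by
        rw [← inner_add_right, sub_add_cancel]
      have h1 : ⟪u, x - c⟫ ≤ r := by
        calc ⟪u, x - c⟫ ≤ ‖u‖ * ‖x - c‖ := real_inner_le_norm u (x - c)
          _ = ‖x - c‖ := by rw [hu, one_mul]
          _ ≤ r := hxc
      have h2 : ⟪u, c⟫ ≤ m := by rw [real_inner_comm]; exact hcm
      linarith
  have hmeas : MeasurableSet (Set.Icc m (m + r) ×ˢ TT) :=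
    measurableSet_Icc.prod (measurableSet_toMeasurable _ _)
  have step1 : volume S ≤ ENNReal.ofReal r * volume (Φ '' S) := by
    calc volume S ≤ volume (Ψ ⁻¹' (Set.Icc m (m + r) ×ˢ TT)) := measure_mono hSsub
      _ = volume (Set.Icc m (m + r) ×ˢ TT) := hΨmp.measure_preimage hmeas.nullMeasurableSet
      _ = volume (Set.Icc m (m + r)) * volume TT := by
          rw [Measure.volume_eq_prod, Measure.prod_prod]
      _ = ENNReal.ofReal r * volume (Φ '' S) := by
          rw [Real.volume_Icc, add_sub_cancel_left, hTT, measure_toMeasurable]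
  have hvolH : (volume : Measure (Fin n → ℝ)) = μH[(n:ℝ)] := by
    have := (MeasureTheory.hausdorffMeasure_pi_real (ι := Fin n)).symm
    simpa [Fintype.card_fin] using this
  have step2 : volume (Φ '' S) ≤
      ∑ j ∈ J, μH[(n:ℝ)] (vorBoundary (n+1) k β i j ∩ closedBall c r) := by
    have him : Φ '' S ⊆ Φ '' Bnd := by
      rintro z ⟨x, hx, rfl⟩
      obtain ⟨y, hyB, hyx⟩ := key x hx
      exact ⟨y, hyB, hyx⟩
    have hcover : Bnd ⊆ ⋃ j ∈ J, (vorBoundary (n+1) k β i j ∩ closedBall c r) := by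
      rw [hBnd, Set.iUnion₂_inter]
    calc volume (Φ '' S) ≤ volume (Φ '' Bnd) := measure_mono him
      _ = μH[(n:ℝ)] (Φ '' Bnd) := by rw [hvolH]
      _ ≤ ((1:NNReal) : ENNReal) ^ (n:ℝ) * μH[(n:ℝ)] Bnd :=
          hΦlip.hausdorffMeasure_image_le (by positivity) Bnd
      _ = μH[(n:ℝ)] Bnd := by simp
      _ ≤ μH[(n:ℝ)] (⋃ j ∈ J, (vorBoundary (n+1) k β i j ∩ closedBall c r)) :=
          measure_mono hcover
      _ ≤ ∑ j ∈ J, μH[(n:ℝ)] (vorBoundary (n+1) k β i j ∩ closedBall c r) :=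
          measure_biUnion_finset_le _ _
  calc volume S ≤ ENNReal.ofReal r * volume (Φ '' S) := step1
    _ ≤ ENNReal.ofReal r *
        ∑ j ∈ J, μH[(n:ℝ)] (vorBoundary (n+1) k β i j ∩ closedBall c r) :=
      mul_le_mul_right step2 _

set_option maxHeartbeats 1000000 in
open scoped RealInnerProductSpace in
lemma hausdorff_boundary_finite (n k : ℕ) (β : Fin k → EuclideanSpace ℝ (Fin (n+1)))
    (i j : Fin k) (hne : β j ≠ β i) (c : EuclideanSpace ℝ (Fin (n+1))) (r : ℝ) (hr : 0 < r) :
    μH[(n:ℝ)] (vorBoundary (n+1) k β i j ∩ closedBall c r) ≠ ⊤ := by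
  set P : Set (EuclideanSpace ℝ (Fin (n+1))) := {x | ‖x - β i‖ = ‖x - β j‖} with hP
  have hsub : vorBoundary (n+1) k β i j ∩ closedBall c r ⊆ P ∩ closedBall c r := by
    rintro x ⟨⟨_, hxeq⟩, hxball⟩
    exact ⟨hxeq, hxball⟩
  rcases (P ∩ closedBall c r).eq_empty_or_nonempty with hemp | ⟨p0, hp0⟩
  · have : μH[(n:ℝ)] (vorBoundary (n+1) k β i j ∩ closedBall c r) = 0 := by
      apply measure_mono_null hsub
      rw [hemp]
      exact measure_empty
    simp [this]
  · set N : ℝ := ‖β i - β j‖ with hN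
    have hNpos : 0 < N := by
      rw [hN, norm_pos_iff, sub_ne_zero]
      exact fun h => hne h.symm
    set u : EuclideanSpace ℝ (Fin (n+1)) := N⁻¹ • (β i - β j) with hu_def
    have hu : ‖u‖ = 1 := by
      rw [hu_def, norm_smul, norm_inv, Real.norm_eq_abs, abs_of_pos hNpos, ← hN]
      field_simp
    have hPinner : ∀ x ∈ P, ⟪x, u⟫ = (‖β i‖^2 - ‖β j‖^2) / (2*N) := by
      intro x hx
      have h1 : ‖x - β i‖ ≤ ‖x - β j‖ := le_of_eq hx
      have h2 : ‖x - β j‖ ≤ ‖x - β i‖ := le_of_eq hx.symm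
      rw [norm_sub_le_norm_sub_iff] at h1
      rw [norm_sub_le_norm_sub_iff] at h2
      have h3 : ⟪x, β j - β i⟫ = - ⟪x, β i - β j⟫ := by
        rw [← inner_neg_right, neg_sub]
      rw [h3] at h2
      have h4 : 2 * ⟪x, β i - β j⟫ = ‖β i‖^2 - ‖β j‖^2 := by nlinarith
      rw [hu_def, real_inner_smul_right]
      rw [eq_div_iff (by positivity)]
      calc N⁻¹ * ⟪x, β i - β j⟫ * (2*N) = 2 * ⟪x, β i - β j⟫ := by field_simp
        _ = ‖β i‖^2 - ‖β j‖^2 := h4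
    obtain ⟨b, hb0⟩ := exists_onb n u hu
    set φ : (Fin n → ℝ) → EuclideanSpace ℝ (Fin (n+1)) :=
      fun w => p0 + ∑ l : Fin n, w l • b l.succ with hφ
    have hφdiff : ∀ w w' : Fin n → ℝ,
        φ w - φ w' = ∑ l : Fin n, (w l - w' l) • b l.succ := by
      intro w w'
      rw [hφ]
      simp only [add_sub_add_left_eq_sub, ← Finset.sum_sub_distrib, sub_smul]
    have hφlip : LipschitzWith (n : NNReal) φ := by
      rw [lipschitzWith_iff_dist_le_mul]
      intro w w'
      rw [dist_eq_norm, hφdiff]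
      calc ‖∑ l : Fin n, (w l - w' l) • b l.succ‖
          ≤ ∑ l : Fin n, ‖(w l - w' l) • b l.succ‖ := norm_sum_le _ _
        _ = ∑ l : Fin n, |w l - w' l| := by
            congr 1; funext l
            rw [norm_smul, b.orthonormal.1 l.succ, mul_one, Real.norm_eq_abs]
        _ ≤ ∑ l : Fin n, dist w w' := by
            refine Finset.sum_le_sum fun l _ => ?_
            rw [← Real.dist_eq]
            exact dist_le_pi_dist w w' l
        _ = n * dist w w' := by
            rw [Finset.sum_const, Finset.card_univ, Fintype.card_fin, nsmul_eq_mul]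
        _ = (n : NNReal) * dist w w' := by norm_num
    have hcov : P ∩ closedBall c r ⊆ φ '' (closedBall 0 (2*r)) := by
      rintro x ⟨hxP, hxball⟩
      set w : Fin n → ℝ := fun l => ⟪b l.succ, x - p0⟫ with hw
      have hsum : x - p0 = ∑ l : Fin (n+1), ⟪b l, x - p0⟫ • b l := by
        conv_lhs => rw [← b.sum_repr (x - p0)]
        congr 1; funext l
        rw [b.repr_apply_apply]
      have hfirst : ⟪b 0, x - p0⟫ = 0 := by
        rw [hb0, real_inner_comm, inner_sub_left,
          hPinner x hxP, hPinner p0 hp0.1]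
        ring
      have hφw : φ w = x := by
        show p0 + ∑ l : Fin n, w l • b l.succ = x
        have : (∑ l : Fin n, w l • b l.succ) = x - p0 := by
          rw [hsum, Fin.sum_univ_succ, hfirst, zero_smul, zero_add]
        rw [this]
        abel
      refine ⟨w, ?_, hφw⟩
      rw [mem_closedBall, dist_pi_le_iff (by positivity)]
      intro l
      rw [Real.dist_eq]
      have : |w l - (0 : Fin n → ℝ) l| = |⟪b l.succ, x - p0⟫| := by
        simp [hw]
      rw [this]
      calc |⟪b l.succ, x - p0⟫| ≤ ‖b l.succ‖ * ‖x - p0‖ := abs_real_inner_le_norm _ _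
        _ = ‖x - p0‖ := by rw [b.orthonormal.1 l.succ, one_mul]
        _ = dist x p0 := (dist_eq_norm x p0).symm
        _ ≤ dist x c + dist c p0 := dist_triangle x c p0
        _ ≤ r + r := by
            have h1 : dist x c ≤ r := hxball
            have h2 : dist c p0 ≤ r := by
              rw [dist_comm]; exact hp0.2
            linarith
        _ = 2 * r := by ring
    have hvolH : (volume : Measure (Fin n → ℝ)) = μH[(n:ℝ)] := by
      have := (MeasureTheory.hausdorffMeasure_pi_real (ι := Fin n)).symm
      simpa [Fintype.card_fin] using this
    have hbound : μH[(n:ℝ)] (vorBoundary (n+1) k β i j ∩ closedBall c r) ≤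
        ((n : NNReal) : ENNReal) ^ (n:ℝ) * volume (closedBall (0 : Fin n → ℝ) (2*r)) := by
      calc μH[(n:ℝ)] (vorBoundary (n+1) k β i j ∩ closedBall c r)
          ≤ μH[(n:ℝ)] (φ '' (closedBall 0 (2*r))) := measure_mono (hsub.trans hcov)
        _ ≤ ((n : NNReal) : ENNReal) ^ (n:ℝ) * μH[(n:ℝ)] (closedBall (0 : Fin n → ℝ) (2*r)) :=
            hφlip.hausdorffMeasure_image_le (by positivity) _
        _ = ((n : NNReal) : ENNReal) ^ (n:ℝ) * volume (closedBall (0 : Fin n → ℝ) (2*r)) := by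
            rw [hvolH]
    refine ne_top_of_le_ne_top ?_ hbound
    refine (ENNReal.mul_lt_top ?_ ?_).ne
    · exact ENNReal.rpow_lt_top_of_nonneg (by positivity) (by simp)
    · exact (isCompact_closedBall _ _).measure_lt_top

set_option maxHeartbeats 1000000 in
open scoped Classical in
/-- Family of bounds for the ball model, Part 2(a): if every true cluster meeting `V_i(β)`
only encloses Voronoi boundaries of relative volume at most `λ`, and no true center lies in
the interior of `V_i(β)`, then the Voronoi set `V_i(β)` is almost empty: `P(V_i(β)) ≤ kλr`. -/
theorem ball_family_bounds_part2a (d k : ℕ) (hd : 1 ≤ d) (hk : 2 ≤ k)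
    (βstar : Fin k → EuclideanSpace ℝ (Fin d)) (hinj : Function.Injective βstar)
    (r : ℝ) (hr : 0 < r)
    (hdisj : Pairwise fun s s' : Fin k =>
      Disjoint (Metric.closedBall (βstar s) r) (Metric.closedBall (βstar s') r))
    (β : Fin k → EuclideanSpace ℝ (Fin d))
    (hmin : IsLocalMin (kmeansObj d k (ballMixDensity d k βstar r)) β)
    (lam : ℝ) (hlam : 0 < lam) (i : Fin k)
    (hrho : ∀ s ∈ Tset d k βstar r β i, ∀ j l : Fin k, j ≠ l →
      rhoBoundary d k βstar r β s j l ≤ lam)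
    (hA : Aset d k βstar r β i = ∅) :
    (∫ x in voronoi d k β i, ballMixDensity d k βstar r x) ≤ k * lam * r := by
  obtain ⟨n, rfl⟩ : ∃ n, d = n + 1 := ⟨d - 1, (Nat.succ_pred_eq_of_pos hd).symm⟩
  have hk0 : (0:ℝ) < k := by positivity
  set V : Set (EuclideanSpace ℝ (Fin (n+1))) := voronoi (n+1) k β i with hV
  have hVmeas : MeasurableSet V := (isClosed_voronoi β i).measurableSet
  have hA' : ∀ s, βstar s ∉ interior V := by
    intro s hs
    have : s ∈ Aset (n+1) k βstar r β i := hs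
    rw [hA] at this
    exact this
  set vb : ℝ := (volume (ball (0 : EuclideanSpace ℝ (Fin (n+1))) 1)).toReal with hvb
  have hvbpos : 0 < vb := ENNReal.toReal_pos
    (measure_ball_pos volume 0 one_pos).ne' measure_ball_lt_top.ne
  have hvolB : ∀ s : Fin k, (volume (closedBall (βstar s) r)).toReal = r^(n+1) * vb := by
    intro s
    rw [Measure.addHaar_closedBall _ _ hr.le, ENNReal.toReal_mul,
      ENNReal.toReal_ofReal (by positivity)]
    congr 2
    exact finrank_euclideanSpace_fin
  -- integrability of each component density on V
  have hInt : ∀ s : Fin k,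
      IntegrableOn (unifBallDensity (n+1) (βstar s) r) V volume := by
    intro s
    apply Integrable.integrableOn
    unfold unifBallDensity
    rw [integrable_indicator_iff measurableSet_closedBall]
    exact integrableOn_const measure_closedBall_lt_top.ne
  -- value of each component integral
  have hIntVal : ∀ s : Fin k,
      (∫ x in V, unifBallDensity (n+1) (βstar s) r x) =
        (volume (V ∩ closedBall (βstar s) r)).toReal *
          ((volume (closedBall (βstar s) r)).toReal)⁻¹ := by
    intro s
    have h1 : (∫ x in V, unifBallDensity (n+1) (βstar s) r x) =
        ∫ x in V ∩ closedBall (βstar s) r,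
          ((volume (closedBall (βstar s) r)).toReal)⁻¹ := by
      unfold unifBallDensity
      exact setIntegral_indicator measurableSet_closedBall
    rw [h1, setIntegral_const, smul_eq_mul, measureReal_def]
  -- per-component bound
  have hterm : ∀ s : Fin k,
      (volume (V ∩ closedBall (βstar s) r)).toReal *
        ((volume (closedBall (βstar s) r)).toReal)⁻¹ ≤ k * lam * r := by
    intro s
    rcases (V ∩ closedBall (βstar s) r).eq_empty_or_nonempty with hemp | hne
    · rw [hemp]
      simp only [measure_empty, ENNReal.toReal_zero, zero_mul]
      positivity
    · have hsT : s ∈ Tset (n+1) k βstar r β i := hne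
      set D : ℝ := vb * r^(n+1) with hD
      have hDpos : 0 < D := by positivity
      have hexp : ((n+1 : ℕ) : ℝ) - 1 = (n:ℝ) := by push_cast; ring
      -- each boundary piece small
      have hpiece : ∀ j ∈ Finset.univ.filter (fun j => β j ≠ β i),
          μH[(n:ℝ)] (vorBoundary (n+1) k β i j ∩ closedBall (βstar s) r) ≤
            ENNReal.ofReal (lam * D) := by
        intro j hj
        rw [Finset.mem_filter] at hj
        have hjne : β j ≠ β i := hj.2
        have hij : i ≠ j := fun h => hjne (congrArg β h.symm)
        have h1 := hrho s hsT i j hij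
        unfold rhoBoundary at h1
        rw [hexp] at h1
        have h2 : (μH[(n:ℝ)]
            (vorBoundary (n+1) k β i j ∩ closedBall (βstar s) r)).toReal ≤ lam * D := by
          rw [div_le_iff₀ (by positivity)] at h1
          calc (μH[(n:ℝ)] (vorBoundary (n+1) k β i j ∩ closedBall (βstar s) r)).toReal
              ≤ lam * ((volume (ball (0 : EuclideanSpace ℝ (Fin (n+1))) 1)).toReal
                  * r ^ (n+1)) := h1
            _ = lam * D := by rw [hD, hvb]
        exact (ENNReal.le_ofReal_iff_toReal_le
          (hausdorff_boundary_finite n k β i j hjne (βstar s) r hr) (by positivity)).2 h2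
      -- cap bound + sum
      have hcap := cap_bound n k β i (βstar s) r hr (hA' s)
      have hsum : ∑ j ∈ Finset.univ.filter (fun j => β j ≠ β i),
          μH[(n:ℝ)] (vorBoundary (n+1) k β i j ∩ closedBall (βstar s) r) ≤
            (k : ENNReal) * ENNReal.ofReal (lam * D) := by
        calc ∑ j ∈ Finset.univ.filter (fun j => β j ≠ β i),
            μH[(n:ℝ)] (vorBoundary (n+1) k β i j ∩ closedBall (βstar s) r)
            ≤ ∑ j ∈ Finset.univ.filter (fun j => β j ≠ β i),
              ENNReal.ofReal (lam * D) := Finset.sum_le_sum hpiece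
          _ = ((Finset.univ.filter (fun j => β j ≠ β i)).card : ENNReal) *
              ENNReal.ofReal (lam * D) := by rw [Finset.sum_const, nsmul_eq_mul]
          _ ≤ (k : ENNReal) * ENNReal.ofReal (lam * D) := by
              gcongr
              exact_mod_cast (Finset.card_filter_le _ _).trans
                (le_of_eq (by simp))
      have hvol : volume (V ∩ closedBall (βstar s) r) ≤
          ENNReal.ofReal r * ((k : ENNReal) * ENNReal.ofReal (lam * D)) :=
        hcap.trans (mul_le_mul_right hsum _)
      have hvolR : (volume (V ∩ closedBall (βstar s) r)).toReal ≤ r * (k * (lam * D)) := by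
        have hfin : ENNReal.ofReal r * ((k : ENNReal) * ENNReal.ofReal (lam * D)) ≠ ⊤ := by
          refine ENNReal.mul_ne_top ENNReal.ofReal_ne_top ?_
          exact ENNReal.mul_ne_top (ENNReal.natCast_ne_top k) ENNReal.ofReal_ne_top
        calc (volume (V ∩ closedBall (βstar s) r)).toReal
            ≤ (ENNReal.ofReal r * ((k : ENNReal) * ENNReal.ofReal (lam * D))).toReal :=
              ENNReal.toReal_mono hfin hvol
          _ = r * (k * (lam * D)) := by
              rw [ENNReal.toReal_mul, ENNReal.toReal_mul, ENNReal.toReal_ofReal hr.le,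
                ENNReal.toReal_ofReal (by positivity), ENNReal.toReal_natCast]
      calc (volume (V ∩ closedBall (βstar s) r)).toReal *
            ((volume (closedBall (βstar s) r)).toReal)⁻¹
          ≤ (r * (k * (lam * D))) * ((volume (closedBall (βstar s) r)).toReal)⁻¹ := by
            apply mul_le_mul_of_nonneg_right hvolR
            positivity
        _ = (r * (k * (lam * (vb * r^(n+1))))) * (r^(n+1) * vb)⁻¹ := by
            rw [hvolB s, hD]
        _ = k * lam * r := by
            field_simp
  -- assemble the integral
  have hsplit : (∫ x in V, ballMixDensity (n+1) k βstar r x) =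
      (1 / (k:ℝ)) * ∑ s : Fin k, ∫ x in V, unifBallDensity (n+1) (βstar s) r x := by
    unfold ballMixDensity
    rw [integral_const_mul]
    congr 1
    exact integral_finset_sum Finset.univ (fun s _ => hInt s)
  rw [hsplit]
  have hsumle : ∑ s : Fin k, ∫ x in V, unifBallDensity (n+1) (βstar s) r x ≤
      ∑ _s : Fin k, (k * lam * r) := by
    refine Finset.sum_le_sum fun s _ => ?_
    rw [hIntVal s]
    exact hterm s
  calc (1 / (k:ℝ)) * ∑ s : Fin k, ∫ x in V, unifBallDensity (n+1) (βstar s) r x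
      ≤ (1 / (k:ℝ)) * ∑ _s : Fin k, (k * lam * r) := by
        apply mul_le_mul_of_nonneg_left hsumle
        positivity
    _ = k * lam * r := by
        rw [Finset.sum_const, Finset.card_univ, Fintype.card_fin, nsmul_eq_mul]
        field_simp
end
end

section
/- (Directional derivative of the population k-means objective.) Under the Stochastic Ball Model, let β = (β_1, …, β_k) ∈ (ℝ^d)^k have pairwise distinct components (β_i ≠ β_j whenever i ≠ j), and let v = (v_1, …, v_k) ∈ (ℝ^d)^k be any direction. Then the function H^v(t) := G(β + tv) is differentiable at t = 0 and its derivative equals −Σ_{i=1}^k ∫_{V_i(β)} 2⟨v_i, x − β_i⟩ f(x) dx. -/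
open MeasureTheory Metric Set
open scoped RealInnerProductSpace

noncomputable section

lemma bisector_null (d : ℕ) (a b : EuclideanSpace ℝ (Fin d)) (hab : a ≠ b) :
    volume {x : EuclideanSpace ℝ (Fin d) | ‖x - a‖ = ‖x - b‖} = 0 := by
  have hset : {x : EuclideanSpace ℝ (Fin d) | ‖x - a‖ = ‖x - b‖}
      = (AffineSubspace.perpBisector a b : Set (EuclideanSpace ℝ (Fin d))) := by
    ext x
    simp only [mem_setOf_eq, SetLike.mem_coe, AffineSubspace.mem_perpBisector_iff_dist_eq,
      dist_eq_norm]
  rw [hset]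
  exact Measure.addHaar_affineSubspace volume _ (by simpa using hab)

lemma abs_ciInf_sub_ciInf {k : ℕ} (hk : 0 < k) {a b : Fin k → ℝ} {L : ℝ}
    (h : ∀ j, |a j - b j| ≤ L) : |(⨅ j, a j) - ⨅ j, b j| ≤ L := by
  have : Nonempty (Fin k) := ⟨⟨0, hk⟩⟩
  have key : ∀ (a b : Fin k → ℝ), (∀ j, |a j - b j| ≤ L) → (⨅ j, a j) - (⨅ j, b j) ≤ L := by
    intro a b h
    have h2 : (⨅ j, a j) - L ≤ ⨅ j, b j := le_ciInf fun j => by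
      have h1 := (abs_sub_le_iff.1 (h j)).1
      have h3 := ciInf_le (Set.Finite.bddBelow (Set.finite_range a)) j
      linarith
    linarith
  rw [abs_sub_le_iff]
  exact ⟨key a b h, key b a (fun j => by rw [abs_sub_comm]; exact h j)⟩

lemma hasDerivAt_norm_sub_smul {d : ℕ} (a b : EuclideanSpace ℝ (Fin d)) :
    HasDerivAt (fun t : ℝ => ‖a - t • b‖ ^ 2) (-(2 * ⟪b, a⟫)) 0 := by
  have hfun : ∀ t : ℝ, ‖a - t • b‖ ^ 2 = ‖a‖ ^ 2 - 2 * ⟪b, a⟫ * t + ‖b‖ ^ 2 * t ^ 2 := by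
    intro t
    rw [norm_sub_sq_real, real_inner_smul_right, norm_smul, real_inner_comm]
    simp [mul_pow, sq_abs]
    ring
  have H : HasDerivAt (fun t : ℝ => ‖a‖ ^ 2 - 2 * ⟪b, a⟫ * t + ‖b‖ ^ 2 * t ^ 2)
      (-(2 * ⟪b, a⟫)) 0 := by
    have h1 : HasDerivAt (fun t : ℝ => 2 * ⟪b, a⟫ * t) (2 * ⟪b, a⟫) 0 := by
      simpa using (hasDerivAt_id (0:ℝ)).const_mul (2 * ⟪b, a⟫)
    have h2 : HasDerivAt (fun t : ℝ => ‖b‖ ^ 2 * t ^ 2) 0 0 := by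
      simpa using (hasDerivAt_pow 2 (0:ℝ)).const_mul (‖b‖ ^ 2)
    have := ((hasDerivAt_const (0:ℝ) (‖a‖ ^ 2)).sub h1).add h2
    simp only [zero_sub, add_zero] at this
    exact this
  exact H.congr_of_eventuallyEq (Filter.Eventually.of_forall hfun)

set_option maxHeartbeats 2000000

/-- Directional derivative of the population k-means objective: for a solution `β` with
pairwise distinct components and any direction `v`, the map `t ↦ G(β + t v)` is
differentiable at `t = 0` with derivative `−Σ_i ∫_{V_i(β)} 2⟨v_i, x − β_i⟩ f(x) dx`. -/
theorem directional_derivative_kmeans (d k : ℕ) (hd : 1 ≤ d) (hk : 2 ≤ k)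
    (βstar : Fin k → EuclideanSpace ℝ (Fin d)) (hinj : Function.Injective βstar)
    (r : ℝ) (hr : 0 < r)
    (hdisj : Pairwise fun s s' : Fin k =>
      Disjoint (Metric.closedBall (βstar s) r) (Metric.closedBall (βstar s') r))
    (β v : Fin k → EuclideanSpace ℝ (Fin d))
    (hβ : Function.Injective β) :
    HasDerivAt
      (fun t : ℝ =>
        kmeansObj d k (ballMixDensity d k βstar r) (fun i => β i + t • v i))
      (-∑ i : Fin k,
        ∫ x in voronoi d k β i,
          2 * ⟪v i, x - β i⟫ * ballMixDensity d k βstar r x)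
      0 := by
  classical
  have hk0 : 0 < k := by omega
  haveI : Nonempty (Fin k) := ⟨⟨0, hk0⟩⟩
  set f : EuclideanSpace ℝ (Fin d) → ℝ := ballMixDensity d k βstar r with hf
  set S : Set (EuclideanSpace ℝ (Fin d)) := ⋃ s : Fin k, Metric.closedBall (βstar s) r with hS
  have hSmeas : MeasurableSet S := MeasurableSet.iUnion fun s => measurableSet_closedBall
  have hSfin : volume S < ⊤ := by
    refine lt_of_le_of_lt (measure_iUnion_le _) ?_
    rw [tsum_fintype]
    exact ENNReal.sum_lt_top.2 fun s _ => measure_closedBall_lt_top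
  have hfmeas : Measurable f := by
    rw [hf]
    unfold ballMixDensity unifBallDensity
    exact ((Finset.measurable_sum Finset.univ fun s _ =>
      measurable_const.indicator measurableSet_closedBall).const_mul _)
  have hf0 : ∀ x, x ∉ S → f x = 0 := by
    intro x hx
    have h1 : ∀ s : Fin k, unifBallDensity d (βstar s) r x = 0 := by
      intro s
      have h2 : x ∉ Metric.closedBall (βstar s) r := fun h => hx (mem_iUnion.2 ⟨s, h⟩)
      simp [unifBallDensity, indicator_of_notMem h2]
    rw [hf]; unfold ballMixDensity; simp [h1]
  have hfnn : ∀ x, 0 ≤ f x := by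
    intro x; rw [hf]; unfold ballMixDensity
    refine mul_nonneg (by positivity) (Finset.sum_nonneg fun s _ => ?_)
    unfold unifBallDensity
    exact indicator_nonneg (fun _ _ => by positivity) x
  set M : ℝ := ∑ s : Fin k, ((volume (Metric.closedBall (βstar s) r)).toReal)⁻¹ with hM
  have hMnn : 0 ≤ M := Finset.sum_nonneg fun s _ => by positivity
  have hfle : ∀ x, f x ≤ M := by
    intro x; rw [hf]; unfold ballMixDensity
    have h1 : ∑ s : Fin k, unifBallDensity d (βstar s) r x ≤ M := by
      rw [hM]
      refine Finset.sum_le_sum fun s _ => ?_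
      unfold unifBallDensity
      by_cases h : x ∈ Metric.closedBall (βstar s) r
      · rw [indicator_of_mem h]
      · rw [indicator_of_notMem h]; positivity
    have h2 : (0:ℝ) ≤ ∑ s : Fin k, unifBallDensity d (βstar s) r x := by
      refine Finset.sum_nonneg fun s _ => ?_
      unfold unifBallDensity
      exact indicator_nonneg (fun _ _ => by positivity) x
    have h3 : (1:ℝ) / k ≤ 1 := by
      rw [div_le_one (by exact_mod_cast hk0)]
      exact_mod_cast hk0
    calc (1 / (k:ℝ)) * ∑ s : Fin k, unifBallDensity d (βstar s) r x
        ≤ 1 * ∑ s : Fin k, unifBallDensity d (βstar s) r x :=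
          mul_le_mul_of_nonneg_right h3 h2
      _ = ∑ s : Fin k, unifBallDensity d (βstar s) r x := one_mul _
      _ ≤ M := h1
  -- constants
  set A : ℝ := Finset.univ.sup' Finset.univ_nonempty (fun s : Fin k => ‖βstar s‖) with hA'
  set B : ℝ := Finset.univ.sup' Finset.univ_nonempty (fun j : Fin k => ‖β j‖) with hB'
  set Vm : ℝ := Finset.univ.sup' Finset.univ_nonempty (fun j : Fin k => ‖v j‖) with hVm'
  have hA : ∀ s, ‖βstar s‖ ≤ A := fun s => by
    rw [hA']; exact Finset.le_sup' (fun s : Fin k => ‖βstar s‖) (Finset.mem_univ s)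
  have hB : ∀ j, ‖β j‖ ≤ B := fun j => by
    rw [hB']; exact Finset.le_sup' (fun j : Fin k => ‖β j‖) (Finset.mem_univ j)
  have hV : ∀ j, ‖v j‖ ≤ Vm := fun j => by
    rw [hVm']; exact Finset.le_sup' (fun j : Fin k => ‖v j‖) (Finset.mem_univ j)
  have hAnn : 0 ≤ A := le_trans (norm_nonneg _) (hA ⟨0, hk0⟩)
  have hBnn : 0 ≤ B := le_trans (norm_nonneg _) (hB ⟨0, hk0⟩)
  have hVnn : 0 ≤ Vm := le_trans (norm_nonneg _) (hV ⟨0, hk0⟩)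
  set R : ℝ := A + r + B + Vm with hR'
  have hRnn : 0 ≤ R := by rw [hR']; linarith
  have hxS : ∀ x ∈ S, ‖x‖ ≤ A + r := by
    intro x hx
    rcases mem_iUnion.1 hx with ⟨s, hs⟩
    have h0 : ‖x - βstar s‖ ≤ r := by
      rw [mem_closedBall, dist_eq_norm] at hs; exact hs
    have h1 := norm_add_le (x - βstar s) (βstar s)
    rw [sub_add_cancel] at h1
    linarith [hA s]
  have hnormb : ∀ x ∈ S, ∀ j : Fin k, ∀ t : ℝ, |t| ≤ 1 → ‖x - (β j + t • v j)‖ ≤ R := by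
    intro x hx j t ht
    have h1 : ‖x - (β j + t • v j)‖ ≤ ‖x‖ + (‖β j‖ + ‖t • v j‖) :=
      le_trans (norm_sub_le _ _) (by linarith [norm_add_le (β j) (t • v j)])
    have h2 : ‖t • v j‖ ≤ Vm := by
      rw [norm_smul, Real.norm_eq_abs]
      calc |t| * ‖v j‖ ≤ 1 * ‖v j‖ := mul_le_mul_of_nonneg_right ht (norm_nonneg _)
        _ ≤ Vm := by rw [one_mul]; exact hV j
    have h3 := hxS x hx
    rw [hR']
    linarith [hB j]
  have hlipj : ∀ x ∈ S, ∀ j : Fin k, ∀ t s : ℝ, |t| ≤ 1 → |s| ≤ 1 →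
      |‖x - (β j + t • v j)‖ ^ 2 - ‖x - (β j + s • v j)‖ ^ 2| ≤ 2 * R * Vm * |t - s| := by
    intro x hx j t s ht hs
    have hu : ‖x - (β j + t • v j)‖ ≤ R := hnormb x hx j t ht
    have hw : ‖x - (β j + s • v j)‖ ≤ R := hnormb x hx j s hs
    have hu0 : (0:ℝ) ≤ ‖x - (β j + t • v j)‖ := norm_nonneg _
    have hw0 : (0:ℝ) ≤ ‖x - (β j + s • v j)‖ := norm_nonneg _
    have hdiff : |‖x - (β j + t • v j)‖ - ‖x - (β j + s • v j)‖| ≤ ‖v j‖ * |t - s| := by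
      have h1 := abs_norm_sub_norm_le (x - (β j + t • v j)) (x - (β j + s • v j))
      have h2 : (x - (β j + t • v j)) - (x - (β j + s • v j)) = (s - t) • v j := by
        rw [sub_smul]; abel
      rw [h2, norm_smul, Real.norm_eq_abs, abs_sub_comm s t] at h1
      linarith [h1]
    have hfac : |‖x - (β j + t • v j)‖ ^ 2 - ‖x - (β j + s • v j)‖ ^ 2|
        ≤ |‖x - (β j + t • v j)‖ - ‖x - (β j + s • v j)‖|
          * (‖x - (β j + t • v j)‖ + ‖x - (β j + s • v j)‖) := by
      have : ‖x - (β j + t • v j)‖ ^ 2 - ‖x - (β j + s • v j)‖ ^ 2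
          = (‖x - (β j + t • v j)‖ - ‖x - (β j + s • v j)‖)
            * (‖x - (β j + t • v j)‖ + ‖x - (β j + s • v j)‖) := by ring
      rw [this, abs_mul, abs_of_nonneg (by linarith : (0:ℝ) ≤ _ + _)]
    nlinarith [hdiff, hfac, abs_nonneg (‖x - (β j + t • v j)‖ - ‖x - (β j + s • v j)‖),
      abs_nonneg (t - s), norm_nonneg (v j), hV j, mul_le_mul_of_nonneg_left (hV j) (abs_nonneg (t - s))]
  set K : ℝ := 2 * R * Vm * M with hK'
  have hKnn : 0 ≤ K := by
    rw [hK']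
    exact mul_nonneg (mul_nonneg (mul_nonneg (by norm_num) hRnn) hVnn) hMnn
  set F : ℝ → EuclideanSpace ℝ (Fin d) → ℝ :=
    fun t x => (⨅ j : Fin k, ‖x - (β j + t • v j)‖ ^ 2) * f x with hF
  have hinfmeas : ∀ t : ℝ, Measurable fun x : EuclideanSpace ℝ (Fin d) =>
      ⨅ j : Fin k, ‖x - (β j + t • v j)‖ ^ 2 := fun t =>
    Measurable.iInf fun j => ((continuous_id.sub continuous_const).norm.pow 2).measurable
  have hFmeas : ∀ t : ℝ, AEStronglyMeasurable (F t) volume := fun t =>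
    ((hinfmeas t).mul hfmeas).aestronglyMeasurable
  have hinfnn : ∀ (t : ℝ) x, 0 ≤ ⨅ j : Fin k, ‖x - (β j + t • v j)‖ ^ 2 :=
    fun t x => le_ciInf fun j => by positivity
  have hinfle : ∀ x ∈ S, ∀ t : ℝ, |t| ≤ 1 →
      (⨅ j : Fin k, ‖x - (β j + t • v j)‖ ^ 2) ≤ R ^ 2 := by
    intro x hx t ht
    refine le_trans (ciInf_le (Set.Finite.bddBelow (Set.finite_range _)) ⟨0, hk0⟩) ?_
    exact pow_le_pow_left₀ (norm_nonneg _) (hnormb x hx ⟨0, hk0⟩ t ht) 2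
  have hintb : ∀ (g : EuclideanSpace ℝ (Fin d) → ℝ) (C : ℝ), AEStronglyMeasurable g volume →
      (∀ x, |g x| ≤ S.indicator (fun _ => C) x) → Integrable g volume := by
    intro g C hgm hgb
    have hCint : Integrable (S.indicator fun _ => C) volume := by
      rw [integrable_indicator_iff hSmeas]
      exact integrableOn_const hSfin.ne
    exact hCint.mono' hgm (Filter.Eventually.of_forall fun x => by
      rw [Real.norm_eq_abs]; exact hgb x)
  have hFint : Integrable (F 0) volume := by
    refine hintb _ (R ^ 2 * M) (hFmeas 0) fun x => ?_
    by_cases hx : x ∈ S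
    · rw [indicator_of_mem hx, hF]
      simp only
      rw [abs_of_nonneg (mul_nonneg (hinfnn 0 x) (hfnn x))]
      exact mul_le_mul (hinfle x hx 0 (by norm_num)) (hfle x) (hfnn x) (by positivity)
    · rw [indicator_of_notMem hx, hF]
      simp [hf0 x hx]
  set W : Fin k → Set (EuclideanSpace ℝ (Fin d)) :=
    fun i => voronoi d k β i \ ⋃ (j : Fin k) (_ : j < i), voronoi d k β j with hW
  have hvormeas : ∀ i, MeasurableSet (voronoi d k β i) := by
    intro i
    have h1 : voronoi d k β i = ⋂ j : Fin k, {x | ‖x - β i‖ ≤ ‖x - β j‖} := by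
      ext x; simp [voronoi, Set.mem_iInter]
    rw [h1]
    exact MeasurableSet.iInter fun j =>
      (isClosed_le ((continuous_id.sub continuous_const).norm)
        ((continuous_id.sub continuous_const).norm)).measurableSet
  have hWmeas : ∀ i, MeasurableSet (W i) := fun i =>
    (hvormeas i).diff (MeasurableSet.iUnion fun j => MeasurableSet.iUnion fun _ => hvormeas j)
  set g : Fin k → EuclideanSpace ℝ (Fin d) → ℝ :=
    fun i x => -(2 * ⟪v i, x - β i⟫) * f x with hg
  set F' : EuclideanSpace ℝ (Fin d) → ℝ :=
    fun x => ∑ i : Fin k, (W i).indicator (g i) x with hF'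
  have hgmeas : ∀ i, Measurable (g i) := by
    intro i
    have hc : Continuous fun x : EuclideanSpace ℝ (Fin d) => -(2 * ⟪v i, x - β i⟫) :=
      (continuous_const.mul (continuous_const.inner (continuous_id.sub continuous_const))).neg
    rw [hg]
    exact (hc.measurable).mul hfmeas
  have hF'meas : AEStronglyMeasurable F' volume := by
    rw [hF']
    exact (Finset.measurable_sum Finset.univ fun i _ =>
      (hgmeas i).indicator (hWmeas i)).aestronglyMeasurable
  have hgb : ∀ (i : Fin k) x, |(W i).indicator (g i) x| ≤ S.indicator (fun _ => K) x := by
    intro i x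
    by_cases hxS' : x ∈ S
    · rw [indicator_of_mem hxS']
      have hb : |g i x| ≤ K := by
        have hgx : g i x = -(2 * ⟪v i, x - β i⟫) * f x := by rw [hg]
        have hin : |⟪v i, x - β i⟫| ≤ ‖v i‖ * ‖x - β i‖ := abs_real_inner_le_norm _ _
        have hxb : ‖x - β i‖ ≤ R := by
          have h1 := norm_sub_le x (β i)
          have h2 := hxS x hxS'
          have h3 := hB i
          rw [hR']; linarith
        have h4 : |⟪v i, x - β i⟫| ≤ Vm * R :=
          le_trans hin (mul_le_mul (hV i) hxb (norm_nonneg _) hVnn)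
        have h5 : |⟪v i, x - β i⟫| * f x ≤ Vm * R * M :=
          mul_le_mul h4 (hfle x) (hfnn x) (mul_nonneg hVnn hRnn)
        rw [hgx, abs_mul, abs_neg, abs_mul, abs_of_nonneg (hfnn x), abs_two, hK']
        linarith [h5]
      by_cases hxW : x ∈ W i
      · rw [indicator_of_mem hxW]; exact hb
      · rw [indicator_of_notMem hxW]; simpa using hKnn
    · rw [indicator_of_notMem hxS']
      by_cases hxW : x ∈ W i
      · have hgx : g i x = -(2 * ⟪v i, x - β i⟫) * f x := by rw [hg]
        rw [indicator_of_mem hxW, hgx, hf0 x hxS', mul_zero]; simp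
      · rw [indicator_of_notMem hxW]; simp
  have hgint : ∀ i : Fin k, Integrable ((W i).indicator (g i)) volume := fun i =>
    hintb _ K ((hgmeas i).indicator (hWmeas i)).aestronglyMeasurable (hgb i)
  have hvmem : ∀ (j : Fin k) (x' : EuclideanSpace ℝ (Fin d)),
      x' ∈ voronoi d k β j ↔ ∀ m : Fin k, ‖x' - β j‖ ≤ ‖x' - β m‖ := fun j x' => Iff.rfl
  set N : Set (EuclideanSpace ℝ (Fin d)) :=
    ⋃ (i : Fin k) (j : Fin k) (_ : i ≠ j), {x | ‖x - β i‖ = ‖x - β j‖} with hN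
  have hNnull : volume N = 0 := by
    rw [hN]
    refine measure_iUnion_null fun i => measure_iUnion_null fun j => measure_iUnion_null fun hij => ?_
    exact bisector_null d (β i) (β j) (fun h => hij (hβ h))
  have hae : ∀ᵐ x : EuclideanSpace ℝ (Fin d), x ∉ N := by
    rw [ae_iff]
    simpa only [not_not, setOf_mem_eq] using hNnull
  have hptwise : ∀ x, x ∉ N → HasDerivAt (fun t => F t x) (F' x) 0 := by
    intro x hxN
    have hne : ∀ i j : Fin k, i ≠ j → ‖x - β i‖ ≠ ‖x - β j‖ := by
      intro i j hij h
      exact hxN (mem_iUnion.2 ⟨i, mem_iUnion.2 ⟨j, mem_iUnion.2 ⟨hij, h⟩⟩⟩)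
    obtain ⟨i₀, -, hmin⟩ := Finset.exists_min_image Finset.univ
      (fun j : Fin k => ‖x - β j‖) ⟨⟨0, hk0⟩, Finset.mem_univ _⟩
    have hmin' : ∀ j, ‖x - β i₀‖ ≤ ‖x - β j‖ := fun j => hmin j (Finset.mem_univ j)
    have hstrict : ∀ j, j ≠ i₀ → ‖x - β i₀‖ < ‖x - β j‖ := fun j hj =>
      lt_of_le_of_ne (hmin' j) (hne i₀ j (Ne.symm hj))
    have hev : ∀ᶠ t in nhds (0:ℝ), ∀ j : Fin k,
        ‖x - (β i₀ + t • v i₀)‖ ≤ ‖x - (β j + t • v j)‖ := by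
      rw [Filter.eventually_all]
      intro j
      rcases eq_or_ne j i₀ with rfl | hj
      · exact Filter.Eventually.of_forall fun t => le_refl _
      · have hc1 : Continuous fun t : ℝ => ‖x - (β i₀ + t • v i₀)‖ :=
          (continuous_const.sub (continuous_const.add (continuous_id.smul continuous_const))).norm
        have hc2 : Continuous fun t : ℝ => ‖x - (β j + t • v j)‖ :=
          (continuous_const.sub (continuous_const.add (continuous_id.smul continuous_const))).norm
        have hopen : IsOpen {t : ℝ | ‖x - (β i₀ + t • v i₀)‖ < ‖x - (β j + t • v j)‖} :=
          isOpen_lt hc1 hc2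
        have h0 : (0:ℝ) ∈ {t : ℝ | ‖x - (β i₀ + t • v i₀)‖ < ‖x - (β j + t • v j)‖} := by
          simpa using hstrict j hj
        filter_upwards [hopen.mem_nhds h0] with t ht using le_of_lt ht
    have heq : (fun t : ℝ => F t x) =ᶠ[nhds (0:ℝ)]
        fun t => ‖x - (β i₀ + t • v i₀)‖ ^ 2 * f x := by
      filter_upwards [hev] with t ht
      have h1 : (⨅ j : Fin k, ‖x - (β j + t • v j)‖ ^ 2) = ‖x - (β i₀ + t • v i₀)‖ ^ 2 :=
        le_antisymm (ciInf_le (Set.Finite.bddBelow (Set.finite_range _)) i₀)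
          (le_ciInf fun j => pow_le_pow_left₀ (norm_nonneg _) (ht j) 2)
      rw [hF]
      simp only
      rw [h1]
    have hd1 : HasDerivAt (fun t : ℝ => ‖x - (β i₀ + t • v i₀)‖ ^ 2 * f x)
        (-(2 * ⟪v i₀, x - β i₀⟫) * f x) 0 := by
      have h1 : HasDerivAt (fun t : ℝ => ‖(x - β i₀) - t • v i₀‖ ^ 2)
          (-(2 * ⟪v i₀, x - β i₀⟫)) 0 := hasDerivAt_norm_sub_smul _ _
      have h2 : (fun t : ℝ => ‖(x - β i₀) - t • v i₀‖ ^ 2)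
          = fun t : ℝ => ‖x - (β i₀ + t • v i₀)‖ ^ 2 := by
        funext t; rw [sub_add_eq_sub_sub]
      rw [h2] at h1
      exact h1.mul_const (f x)
    have hxW : x ∈ W i₀ := by
      rw [hW]
      refine ⟨(hvmem i₀ x).2 hmin', ?_⟩
      intro hmemU
      rcases mem_iUnion.1 hmemU with ⟨j, hj⟩
      rcases mem_iUnion.1 hj with ⟨hlt, hvj⟩
      have h5 := (hvmem j x).1 hvj i₀
      have h6 := hstrict j (ne_of_lt hlt)
      linarith
    have hF'x : F' x = -(2 * ⟪v i₀, x - β i₀⟫) * f x := by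
      rw [hF']
      simp only
      rw [Finset.sum_eq_single i₀]
      · rw [indicator_of_mem hxW]
      · intro i _ hi
        rw [indicator_of_notMem]
        intro hWm
        rw [hW] at hWm
        have h5 := (hvmem i x).1 hWm.1 i₀
        have h6 := hstrict i hi
        linarith
      · intro h; exact absurd (Finset.mem_univ i₀) h
    rw [hF'x]
    exact hd1.congr_of_eventuallyEq heq
  have h_lip : ∀ᵐ x : EuclideanSpace ℝ (Fin d),
      LipschitzOnWith (Real.nnabs (S.indicator (fun _ => K) x)) (fun t => F t x)
        (ball (0:ℝ) 1) := by
    refine Filter.Eventually.of_forall fun x => LipschitzOnWith.of_dist_le_mul fun t ht s hs => ?_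
    have ht1 : |t| ≤ 1 := le_of_lt (by rwa [mem_ball_zero_iff, Real.norm_eq_abs] at ht)
    have hs1 : |s| ≤ 1 := le_of_lt (by rwa [mem_ball_zero_iff, Real.norm_eq_abs] at hs)
    rw [Real.dist_eq, Real.dist_eq]
    by_cases hxS' : x ∈ S
    · rw [indicator_of_mem hxS']
      have h1 : |(⨅ j : Fin k, ‖x - (β j + t • v j)‖ ^ 2)
          - ⨅ j : Fin k, ‖x - (β j + s • v j)‖ ^ 2| ≤ 2 * R * Vm * |t - s| :=
        abs_ciInf_sub_ciInf hk0 (fun j => hlipj x hxS' j t s ht1 hs1)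
      have h2 : F t x - F s x = ((⨅ j : Fin k, ‖x - (β j + t • v j)‖ ^ 2)
          - ⨅ j : Fin k, ‖x - (β j + s • v j)‖ ^ 2) * f x := by
        rw [hF]; ring
      have h3 : |F t x - F s x| ≤ K * |t - s| := by
        rw [h2, abs_mul, abs_of_nonneg (hfnn x)]
        calc |(⨅ j : Fin k, ‖x - (β j + t • v j)‖ ^ 2)
              - ⨅ j : Fin k, ‖x - (β j + s • v j)‖ ^ 2| * f x
            ≤ (2 * R * Vm * |t - s|) * M := by
              refine mul_le_mul h1 (hfle x) (hfnn x) ?_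
              exact mul_nonneg (mul_nonneg (mul_nonneg (by norm_num) hRnn) hVnn) (abs_nonneg _)
          _ = K * |t - s| := by rw [hK']; ring
      calc |F t x - F s x| ≤ K * |t - s| := h3
        _ = ↑(Real.nnabs K) * |t - s| := by
            rw [Real.coe_nnabs, abs_of_nonneg hKnn]
    · rw [indicator_of_notMem hxS']
      have hz : ∀ u : ℝ, F u x = 0 := by
        intro u; rw [hF]; simp [hf0 x hxS']
      rw [hz t, hz s]
      simp
  have hKint : Integrable (S.indicator fun _ => K) volume := by
    rw [integrable_indicator_iff hSmeas]
    exact integrableOn_const hSfin.ne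
  have hdiffae : ∀ᵐ x : EuclideanSpace ℝ (Fin d), HasDerivAt (fun t => F t x) (F' x) 0 :=
    hae.mono fun x hx => hptwise x hx
  obtain ⟨hF'int, hderiv⟩ := hasDerivAt_integral_of_dominated_loc_of_lip
    (μ := volume) (F := F) (F' := F') (bound := S.indicator fun _ => K) (ball_mem_nhds (0:ℝ) zero_lt_one)
    (Filter.Eventually.of_forall hFmeas) hFint hF'meas h_lip hKint hdiffae
  have hWae : ∀ i : Fin k, W i =ᵐ[volume] voronoi d k β i := by
    intro i
    rw [MeasureTheory.ae_eq_set]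
    constructor
    · have he : W i \ voronoi d k β i = ∅ := by
        rw [diff_eq_empty, hW]
        exact fun x hx => hx.1
      rw [he, measure_empty]
    · refine measure_mono_null ?_ hNnull
      intro x hx
      have hxv := hx.1
      have hxw := hx.2
      rw [hW] at hxw
      have hmm : x ∈ ⋃ (j : Fin k) (_ : j < i), voronoi d k β j := by
        by_contra h
        exact hxw ⟨hxv, h⟩
      rcases mem_iUnion.1 hmm with ⟨j, hj⟩
      rcases mem_iUnion.1 hj with ⟨hlt, hvj⟩
      have h1 := (hvmem i x).1 hxv j
      have h2 := (hvmem j x).1 hvj i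
      exact mem_iUnion.2 ⟨i, mem_iUnion.2 ⟨j, mem_iUnion.2 ⟨ne_of_gt hlt, le_antisymm h1 h2⟩⟩⟩
  have hint_eq : ∫ x, F' x
      = -∑ i : Fin k, ∫ x in voronoi d k β i, 2 * ⟪v i, x - β i⟫ * f x := by
    have h1 : ∫ x, F' x = ∑ i : Fin k, ∫ x, (W i).indicator (g i) x := by
      rw [hF']
      exact integral_finset_sum Finset.univ fun i _ => hgint i
    rw [h1, ← Finset.sum_neg_distrib]
    refine Finset.sum_congr rfl fun i _ => ?_
    calc ∫ x, (W i).indicator (g i) x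
        = ∫ x in W i, g i x := integral_indicator (hWmeas i)
      _ = ∫ x in voronoi d k β i, g i x := setIntegral_congr_set (hWae i)
      _ = ∫ x in voronoi d k β i, -(2 * ⟪v i, x - β i⟫ * f x) := by
          refine integral_congr_ae (Filter.Eventually.of_forall fun x => ?_)
          rw [hg]
          simp only [neg_mul]
      _ = -∫ x in voronoi d k β i, 2 * ⟪v i, x - β i⟫ * f x := integral_neg _
  have hgoal : (fun t : ℝ => kmeansObj d k f fun i => β i + t • v i)
      = fun t : ℝ => ∫ x, F t x := by
    funext t
    rw [hF]
    rfl
  rw [hgoal, ← hint_eq]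
  exact hderiv
end
end

section
/- (Controlling the volume of the intersection of a polyhedron and a ball.) Let μ be the uniform probability measure on the closed ball B(0, r) ⊂ ℝ^d and let λ > 0. Let P = ⋂_{j=1}^k {x ∈ ℝ^d : ⟨a_j, x⟩ ≤ b_j} be a closed polyhedron defined by k halfspaces (a_j ∈ ℝ^d \ {0}, b_j ∈ ℝ), and suppose 0 does not lie in the topological interior of P. If for every j ∈ [k] one has H^{d−1}(P ∩ {x : ⟨a_j, x⟩ = b_j} ∩ B(0, r)) ≤ λ · r^d · V_d, where H^{d−1} is (d−1)-dimensional Hausdorff measure and V_d is the Lebesgue volume of the unit ball of ℝ^d, then μ(P) ≤ kλr. -/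
open MeasureTheory Metric Set
open scoped RealInnerProductSpace

noncomputable section

def EuclideanSpace.measurableEquiv (ι : Type*) [Fintype ι] :
    EuclideanSpace ℝ ι ≃ᵐ (ι → ℝ) :=
  (MeasurableEquiv.toLp 2 (ι → ℝ)).symm

@[simp]
lemma EuclideanSpace.coe_measurableEquiv (ι : Type*) [Fintype ι] :
    ⇑(EuclideanSpace.measurableEquiv ι) = WithLp.ofLp := rfl

@[simp]
lemma EuclideanSpace.coe_measurableEquiv_symm (ι : Type*) [Fintype ι] :
    ⇑(EuclideanSpace.measurableEquiv ι).symm = WithLp.toLp 2 := rfl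

lemma EuclideanSpace.volume_preserving_measurableEquiv (ι : Type*) [Fintype ι] :
    MeasurePreserving (EuclideanSpace.measurableEquiv ι) :=
  EuclideanSpace.volume_preserving_symm_measurableEquiv_toLp ι

/-- Embedding of `ℝ^m` into the hyperplane `{x : x_last = c}` of `ℝ^(m+1)`. -/
def snocE (m : ℕ) (c : ℝ) (z : EuclideanSpace ℝ (Fin m)) : EuclideanSpace ℝ (Fin (m+1)) :=
  (WithLp.equiv 2 (Fin (m+1) → ℝ)).symm (Fin.snoc ((WithLp.equiv 2 (Fin m → ℝ)) z) c)

lemma snocE_castSucc (m : ℕ) (c : ℝ) (z : EuclideanSpace ℝ (Fin m)) (i : Fin m) :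
    snocE m c z i.castSucc = z i := by
  simp [snocE, WithLp.equiv_symm_apply, Fin.snoc_castSucc]

lemma snocE_last (m : ℕ) (c : ℝ) (z : EuclideanSpace ℝ (Fin m)) :
    snocE m c z (Fin.last m) = c := by
  simp [snocE, WithLp.equiv_symm_apply]

lemma isometry_snocE (m : ℕ) (c : ℝ) : Isometry (snocE m c) := by
  refine Isometry.of_dist_eq fun z z' => ?_
  rw [EuclideanSpace.dist_eq, EuclideanSpace.dist_eq, Fin.sum_univ_castSucc]
  simp [snocE_castSucc, snocE_last]

lemma coord_dist_le {m : ℕ} (x y : EuclideanSpace ℝ (Fin m)) (i : Fin m) :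
    |x i - y i| ≤ dist x y := by
  rw [EuclideanSpace.dist_eq, ← Real.dist_eq]
  calc dist (x i) (y i) = Real.sqrt (dist (x i) (y i) ^ 2) := by
        rw [Real.sqrt_sq dist_nonneg]
    _ ≤ Real.sqrt (∑ j : Fin m, dist (x j) (y j) ^ 2) := by
        apply Real.sqrt_le_sqrt
        exact Finset.single_le_sum (f := fun j => dist (x j) (y j) ^ 2)
          (fun j _ => sq_nonneg _) (Finset.mem_univ i)

/-- On Euclidean space, the volume is dominated by the Hausdorff measure of full dimension. -/
lemma volume_le_hausdorff (m : ℕ) (s : Set (EuclideanSpace ℝ (Fin m))) :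
    volume s ≤ μH[(m : ℝ)] s := by
  refine Measure.le_iff'.1 (Measure.le_hausdorffMeasure _ _ 1 one_pos ?_) s
  intro s hs
  rcases s.eq_empty_or_nonempty with rfl | ⟨x₀, hx₀⟩
  · simp
  have hdne : EMetric.diam s ≠ ⊤ := ne_top_of_le_ne_top ENNReal.one_ne_top hs
  have hbd : Bornology.IsBounded s := Metric.isBounded_iff_ediam_ne_top.2 hdne
  set δ := Metric.diam s with hδdef
  have key : ∀ i : Fin m, ∃ ci : ℝ, ∀ y ∈ s, y i ∈ Icc ci (ci + δ) := by
    intro i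
    have hne : ((fun y : EuclideanSpace ℝ (Fin m) => y i) '' s).Nonempty :=
      ⟨_, mem_image_of_mem _ hx₀⟩
    have hbb : BddBelow ((fun y : EuclideanSpace ℝ (Fin m) => y i) '' s) := by
      refine ⟨x₀ i - δ, ?_⟩
      rintro _ ⟨y, hy, rfl⟩
      have h1 := coord_dist_le x₀ y i
      have h2 := Metric.dist_le_diam_of_mem hbd hx₀ hy
      have := abs_le.1 (h1.trans h2)
      linarith [this.1, this.2]
    refine ⟨sInf ((fun y : EuclideanSpace ℝ (Fin m) => y i) '' s),
      fun y hy => ⟨csInf_le hbb ⟨y, hy, rfl⟩, ?_⟩⟩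
    have hle : y i - δ ≤ sInf ((fun y : EuclideanSpace ℝ (Fin m) => y i) '' s) := by
      refine le_csInf hne ?_
      rintro _ ⟨z, hz, rfl⟩
      have h1 := coord_dist_le y z i
      have h2 := Metric.dist_le_diam_of_mem hbd hy hz
      have := abs_le.1 (h1.trans h2)
      linarith [this.1, this.2]
    linarith
  choose c hc using key
  have hsub : s ⊆ (EuclideanSpace.measurableEquiv (Fin m)) ⁻¹'
      (univ.pi fun i => Icc (c i) (c i + δ)) := by
    intro y hy
    simp only [mem_preimage, EuclideanSpace.coe_measurableEquiv, mem_univ_pi]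
    intro i
    exact (by simpa [WithLp.equiv_apply] using hc i y hy)
  calc volume s ≤ volume ((EuclideanSpace.measurableEquiv (Fin m)) ⁻¹'
        (univ.pi fun i => Icc (c i) (c i + δ))) := measure_mono hsub
    _ = volume (univ.pi fun i : Fin m => Icc (c i) (c i + δ)) :=
        (EuclideanSpace.volume_preserving_measurableEquiv (Fin m)).measure_preimage
          ((MeasurableSet.univ_pi fun i => measurableSet_Icc).nullMeasurableSet)
    _ = ∏ _i : Fin m, ENNReal.ofReal δ := by
        rw [volume_pi_pi]
        exact Finset.prod_congr rfl fun i _ => by rw [Real.volume_Icc]; ring_nf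
    _ = ENNReal.ofReal δ ^ m := by simp
    _ = EMetric.diam s ^ (m : ℝ) := by
        exact (congrArg (· ^ m) (ENNReal.ofReal_toReal (show Metric.ediam s ≠ ⊤ from hdne))).trans
          (ENNReal.rpow_natCast _ _).symm

/-- The measure-preserving "split off the last coordinate" map. -/
lemma measurePreserving_split (m : ℕ) :
    MeasurePreserving
      (fun x : EuclideanSpace ℝ (Fin (m+1)) =>
        ((x (Fin.last m) : ℝ), fun i : Fin m => x i.castSucc))
      (volume : Measure (EuclideanSpace ℝ (Fin (m+1))))
      ((volume : Measure ℝ).prod (volume : Measure (Fin m → ℝ))) := by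
  have h1 := EuclideanSpace.volume_preserving_measurableEquiv (Fin (m+1))
  have h2 := measurePreserving_piFinSuccAbove (fun _ : Fin (m+1) => (volume : Measure ℝ))
    (Fin.last m)
  rw [← volume_pi] at h2
  have h3 := h2.comp h1
  have hfun : (⇑(MeasurableEquiv.piFinSuccAbove (fun _ : Fin (m+1) => ℝ) (Fin.last m)) ∘
      ⇑(EuclideanSpace.measurableEquiv (Fin (m+1)))) =
      (fun x : EuclideanSpace ℝ (Fin (m+1)) =>
        ((x (Fin.last m) : ℝ), fun i : Fin m => x i.castSucc)) := by
    funext x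
    simp only [Function.comp_apply, EuclideanSpace.coe_measurableEquiv,
      MeasurableEquiv.piFinSuccAbove_apply]
    ext
    · simp [WithLp.equiv_apply, Fin.insertNthEquiv]
    · simp [WithLp.equiv_apply, Fin.insertNthEquiv, Fin.init, Fin.succAbove_last]
  rw [hfun] at h3
  convert h3 using 2 <;> rfl

/-- Volume of a slab over a compact subset of the horizontal hyperplane `{x : x_last = cc}`,
extruded along a unit vector `v` that has positive last coordinate. -/
lemma slab_volume (m : ℕ) {F : Set (EuclideanSpace ℝ (Fin (m+1)))} (hF : IsCompact F)
    (cc : ℝ) (hFc : ∀ x ∈ F, x (Fin.last m) = cc)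
    (v : EuclideanSpace ℝ (Fin (m+1))) (hv : ‖v‖ = 1) (hα : 0 < v (Fin.last m))
    {r : ℝ} (hr : 0 ≤ r) :
    volume ((fun p : EuclideanSpace ℝ (Fin (m+1)) × ℝ => p.1 - p.2 • v) '' (F ×ˢ Icc 0 r))
      ≤ ENNReal.ofReal r * μH[(m : ℝ)] F := by
  classical
  set α := v (Fin.last m) with hαdef
  have hα1 : α ≤ 1 := by
    have h := coord_dist_le v 0 (Fin.last m)
    rw [dist_zero_right, hv] at h
    have : (0 : EuclideanSpace ℝ (Fin (m+1))) (Fin.last m) = 0 := rfl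
    rw [this, sub_zero] at h
    exact (abs_le.1 h).2
  set drop : EuclideanSpace ℝ (Fin (m+1)) → (Fin m → ℝ) :=
    fun x => fun i => x i.castSucc with hdrop
  set A1 : Set (Fin m → ℝ) := drop '' F with hA1
  have hA1compact : IsCompact A1 := hF.image (by
    exact continuous_pi fun i => (EuclideanSpace.proj (𝕜 := ℝ) i.castSucc).continuous)
  set w : Fin m → ℝ := drop v with hw
  set S : Set (ℝ × (Fin m → ℝ)) :=
    (fun p : EuclideanSpace ℝ (Fin (m+1)) × ℝ =>
      ((cc - p.2 * α : ℝ), fun i : Fin m => p.1 i.castSucc - p.2 * v i.castSucc)) ''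
      (F ×ˢ Icc 0 r) with hS
  have hScompact : IsCompact S := by
    refine (hF.prod isCompact_Icc).image ?_
    refine Continuous.prodMk ?_ ?_
    · exact continuous_const.sub (continuous_snd.mul continuous_const)
    · exact continuous_pi fun i =>
        (((EuclideanSpace.proj (𝕜 := ℝ) i.castSucc).continuous.comp continuous_fst).sub
          (continuous_snd.mul continuous_const))
  have hSmeas : MeasurableSet S := hScompact.measurableSet
  -- the image set is the preimage of S under the split map
  have hTS : (fun p : EuclideanSpace ℝ (Fin (m+1)) × ℝ => p.1 - p.2 • v) '' (F ×ˢ Icc 0 r) =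
      (fun x : EuclideanSpace ℝ (Fin (m+1)) =>
        ((x (Fin.last m) : ℝ), fun i : Fin m => x i.castSucc)) ⁻¹' S := by
    ext x
    constructor
    · rintro ⟨⟨z, s⟩, ⟨hzF, hs⟩, rfl⟩
      refine ⟨(z, s), ⟨hzF, hs⟩, ?_⟩
      have hl : (z - s • v) (Fin.last m) = cc - s * α := by
        rw [PiLp.sub_apply, PiLp.smul_apply, smul_eq_mul, hFc z hzF]
      refine Prod.ext ?_ ?_
      · simpa using hl.symm
      · funext i
        simp [PiLp.sub_apply, PiLp.smul_apply]
    · rintro ⟨⟨z, s⟩, ⟨hzF, hs⟩, hp⟩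
      refine ⟨(z, s), ⟨hzF, hs⟩, ?_⟩
      have h1 : cc - s * α = x (Fin.last m) := congrArg Prod.fst hp
      have h2 : ∀ i : Fin m, z i.castSucc - s * v i.castSucc = x i.castSucc :=
        fun i => congrFun (congrArg Prod.snd hp) i
      apply PiLp.ext
      intro i
      induction i using Fin.lastCases with
      | last =>
        simp only [PiLp.sub_apply, PiLp.smul_apply, smul_eq_mul]
        rw [hFc z hzF, ← h1]
      | cast i =>
        simp only [PiLp.sub_apply, PiLp.smul_apply, smul_eq_mul]
        rw [← h2 i]
  have hslice : ∀ t : ℝ, Prod.mk t ⁻¹' S =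
      if t ∈ Icc (cc - r * α) cc then
        (fun ξ : Fin m → ℝ => ξ + ((cc - t) / α) • w) ⁻¹' A1 else (∅ : Set (Fin m → ℝ)) := by
    intro t
    ext ξ
    constructor
    · rintro ⟨⟨z, s⟩, ⟨hzF, hs0, hsr⟩, hp⟩
      have ht : cc - s * α = t := congrArg Prod.fst hp
      have hξ : (fun i : Fin m => z i.castSucc - s * v i.castSucc) = ξ := congrArg Prod.snd hp
      have htmem : t ∈ Icc (cc - r * α) cc := by
        constructor
        · nlinarith
        · nlinarith
      rw [if_pos htmem]
      have hst : s = (cc - t) / α := by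
        rw [eq_div_iff hα.ne']; linarith
      refine ⟨z, hzF, ?_⟩
      funext i
      have hcf := congrFun hξ i
      simp only [hdrop, hw, Pi.add_apply, Pi.smul_apply, smul_eq_mul, ← hst]
      simp only [hdrop] at hcf ⊢
      linarith
    · intro hmem
      by_cases htmem : t ∈ Icc (cc - r * α) cc
      · rw [if_pos htmem] at hmem
        obtain ⟨z, hzF, hz⟩ := hmem
        set s := (cc - t) / α with hsdef
        have hs0 : 0 ≤ s := div_nonneg (by linarith [htmem.2]) hα.le
        have hsr : s ≤ r := by
          rw [hsdef, div_le_iff₀ hα]; nlinarith [htmem.1]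
        refine ⟨(z, s), ⟨hzF, hs0, hsr⟩, ?_⟩
        refine Prod.ext ?_ ?_
        · show cc - s * α = t
          rw [hsdef]; field_simp; ring
        · show (fun i : Fin m => z i.castSucc - s * v i.castSucc) = ξ
          funext i
          have hcf := congrFun hz i
          simp only [hdrop, hw, Pi.add_apply, Pi.smul_apply, smul_eq_mul] at hcf
          linarith
      · rw [if_neg htmem] at hmem; exact absurd hmem (notMem_empty _)
  have hA0 : volume ((EuclideanSpace.measurableEquiv (Fin m)) ⁻¹' A1) = volume A1 :=
    (EuclideanSpace.volume_preserving_measurableEquiv (Fin m)).measure_preimage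
      hA1compact.measurableSet.nullMeasurableSet
  have hFA : snocE m cc '' ((EuclideanSpace.measurableEquiv (Fin m)) ⁻¹' A1) = F := by
    ext x
    constructor
    · rintro ⟨z, hz, rfl⟩
      obtain ⟨y, hyF, hy⟩ := hz
      have hxy : snocE m cc z = y := by
        apply PiLp.ext
        intro i
        induction i using Fin.lastCases with
        | last => rw [snocE_last, hFc y hyF]
        | cast i =>
          rw [snocE_castSucc]
          have hcf := congrFun hy i
          simp only [hdrop, EuclideanSpace.coe_measurableEquiv, WithLp.equiv_apply] at hcf
          exact hcf.symm
      rw [hxy]; exact hyF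
    · intro hxF
      refine ⟨(EuclideanSpace.measurableEquiv (Fin m)).symm (drop x), ?_, ?_⟩
      · show (EuclideanSpace.measurableEquiv (Fin m))
          ((EuclideanSpace.measurableEquiv (Fin m)).symm (drop x)) ∈ A1
        rw [MeasurableEquiv.apply_symm_apply]
        exact ⟨x, hxF, rfl⟩
      · apply PiLp.ext
        intro i
        induction i using Fin.lastCases with
        | last => rw [snocE_last, hFc x hxF]
        | cast i =>
          rw [snocE_castSucc]
          simp [EuclideanSpace.coe_measurableEquiv_symm, WithLp.equiv_symm_apply, hdrop]
  have hA1H : volume A1 ≤ μH[(m : ℝ)] F := by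
    rw [← hA0, ← hFA,
      (isometry_snocE m cc).hausdorffMeasure_image (Or.inl (by positivity)) _]
    exact volume_le_hausdorff m _
  calc volume ((fun p : EuclideanSpace ℝ (Fin (m+1)) × ℝ => p.1 - p.2 • v) '' (F ×ˢ Icc 0 r))
      = ((volume : Measure ℝ).prod (volume : Measure (Fin m → ℝ))) S := by
        rw [hTS]
        exact (measurePreserving_split m).measure_preimage hSmeas.nullMeasurableSet
    _ = ∫⁻ t : ℝ, volume (Prod.mk t ⁻¹' S) := Measure.prod_apply hSmeas
    _ = ∫⁻ t : ℝ, (Icc (cc - r * α) cc).indicator (fun _ => volume A1) t := by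
        congr 1
        funext t
        rw [hslice t]
        by_cases htmem : t ∈ Icc (cc - r * α) cc
        · rw [if_pos htmem, indicator_of_mem htmem]
          exact measure_preimage_add_right volume _ A1
        · rw [if_neg htmem, indicator_of_notMem htmem]; exact measure_empty
    _ = volume A1 * volume (Icc (cc - r * α) cc) := lintegral_indicator_const measurableSet_Icc _
    _ = volume A1 * ENNReal.ofReal (r * α) := by
        rw [Real.volume_Icc]
        congr 1
        ring
    _ ≤ μH[(m : ℝ)] F * ENNReal.ofReal r :=
        mul_le_mul' hA1H (ENNReal.ofReal_le_ofReal (by nlinarith))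
    _ = ENNReal.ofReal r * μH[(m : ℝ)] F := mul_comm _ _

/-- A hyperplane is a null set. -/
lemma hyperplane_null (m : ℕ) (aa : EuclideanSpace ℝ (Fin m)) (haa : aa ≠ 0) (bb : ℝ) :
    volume {x : EuclideanSpace ℝ (Fin m) | ⟪aa, x⟫ = bb} = 0 := by
  set x₀ : EuclideanSpace ℝ (Fin m) := (bb / ‖aa‖^2) • aa with hx₀def
  have hnaa : ‖aa‖ ≠ 0 := norm_ne_zero_iff.2 haa
  have hx₀ : ⟪aa, x₀⟫ = bb := by
    rw [hx₀def, real_inner_smul_right, real_inner_self_eq_norm_sq]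
    field_simp
  have hset : {x : EuclideanSpace ℝ (Fin m) | ⟪aa, x⟫ = bb} =
      (fun y : EuclideanSpace ℝ (Fin m) => y + (-x₀)) ⁻¹'
        ((Submodule.span ℝ {aa})ᗮ : Set (EuclideanSpace ℝ (Fin m))) := by
    ext x
    simp only [mem_setOf_eq, mem_preimage, SetLike.mem_coe,
      Submodule.mem_orthogonal_singleton_iff_inner_right]
    rw [inner_add_right, inner_neg_right, hx₀]
    constructor <;> intro h <;> linarith
  rw [hset, measure_preimage_add_right]
  refine Measure.addHaar_submodule _ _ ?_
  intro htop
  apply haa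
  have : aa ∈ (Submodule.span ℝ {aa})ᗮ := htop ▸ Submodule.mem_top
  have h0 : ⟪aa, aa⟫ = 0 := Submodule.mem_orthogonal_singleton_iff_inner_right.1 this
  exact inner_self_eq_zero.1 h0

/-- The volume of the extrusion of a compact piece of the hyperplane `{⟪aa, x⟫ = bb}` along a
unit vector is controlled by its codimension-one Hausdorff measure. -/
lemma facet_bound (m : ℕ) {F : Set (EuclideanSpace ℝ (Fin (m+1)))} (hF : IsCompact F)
    (aa : EuclideanSpace ℝ (Fin (m+1))) (haa : aa ≠ 0) (bb : ℝ)
    (hFa : ∀ x ∈ F, ⟪aa, x⟫ = bb)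
    (u : EuclideanSpace ℝ (Fin (m+1))) (hu : ‖u‖ = 1)
    {r : ℝ} (hr : 0 ≤ r) :
    volume ((fun p : EuclideanSpace ℝ (Fin (m+1)) × ℝ => p.1 - p.2 • u) '' (F ×ˢ Icc 0 r))
      ≤ ENNReal.ofReal r * μH[(m : ℝ)] F := by
  rcases eq_or_ne ⟪aa, u⟫ 0 with hα0 | hα0
  · have hnull : volume ((fun p : EuclideanSpace ℝ (Fin (m+1)) × ℝ => p.1 - p.2 • u) ''
        (F ×ˢ Icc 0 r)) = 0 := by
      refine measure_mono_null ?_ (hyperplane_null (m+1) aa haa bb)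
      rintro x ⟨⟨z, s⟩, ⟨hzF, hs⟩, rfl⟩
      show ⟪aa, z - s • u⟫ = bb
      rw [inner_sub_right, real_inner_smul_right, hα0, hFa z hzF]
      ring
    rw [hnull]
    exact zero_le
  · -- construct a unit normal with positive inner product against u
    have hnaa : (0:ℝ) < ‖aa‖ := norm_pos_iff.2 haa
    set ε : ℝ := if 0 < ⟪aa, u⟫ then 1 else -1 with hε
    have hεu : 0 < ε * ⟪aa, u⟫ := by
      by_cases h : 0 < ⟪aa, u⟫
      · rw [hε, if_pos h]; linarith
      · rw [hε, if_neg h]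
        have : ⟪aa, u⟫ < 0 := lt_of_le_of_ne (not_lt.1 h) hα0
        nlinarith
    have hεabs : |ε| = 1 := by
      by_cases h : 0 < ⟪aa, u⟫
      · rw [hε, if_pos h]; norm_num
      · rw [hε, if_neg h]; norm_num
    set n : EuclideanSpace ℝ (Fin (m+1)) := (ε * ‖aa‖⁻¹) • aa with hn
    have hnorm : ‖n‖ = 1 := by
      rw [hn, norm_smul, Real.norm_eq_abs, abs_mul, hεabs, one_mul, abs_of_nonneg
        (inv_nonneg.2 hnaa.le)]
      field_simp
    have hnu : 0 < ⟪n, u⟫ := by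
      rw [hn, real_inner_smul_left]
      have : ε * ‖aa‖⁻¹ * ⟪aa, u⟫ = ‖aa‖⁻¹ * (ε * ⟪aa, u⟫) := by ring
      rw [this]
      positivity
    set c : ℝ := (ε * ‖aa‖⁻¹) * bb with hc
    have hFc : ∀ x ∈ F, ⟪n, x⟫ = c := by
      intro x hx
      rw [hn, real_inner_smul_left, hFa x hx]
    -- choose an orthonormal basis whose last vector is n
    have hcard : Module.finrank ℝ (EuclideanSpace ℝ (Fin (m+1))) = Fintype.card (Fin (m+1)) := by
      simp [finrank_euclideanSpace_fin]
    have horth : Orthonormal ℝ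
        (({Fin.last m} : Set (Fin (m+1))).restrict (fun _ => n)) := by
      rw [orthonormal_iff_ite]
      rintro ⟨i, hi⟩ ⟨j, hj⟩
      have hij : i = j := by
        rw [mem_singleton_iff.1 hi, mem_singleton_iff.1 hj]
      have : (⟨i, hi⟩ : ({Fin.last m} : Set (Fin (m+1)))) = ⟨j, hj⟩ := Subtype.ext hij
      rw [this, if_pos rfl]
      show ⟪n, n⟫ = 1
      rw [real_inner_self_eq_norm_sq, hnorm]
      norm_num
    obtain ⟨B, hB⟩ := horth.exists_orthonormalBasis_extension_of_card_eq hcard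
    have hBn : B (Fin.last m) = n := hB _ (mem_singleton _)
    set R := B.repr with hR
    have hRn : R n = EuclideanSpace.single (Fin.last m) 1 := by
      rw [← hBn, hR]
      exact B.repr_self _
    -- last coordinate of R x equals ⟪n, x⟫
    have hlast : ∀ x : EuclideanSpace ℝ (Fin (m+1)), (R x) (Fin.last m) = ⟪n, x⟫ := by
      intro x
      have h1 : ⟪EuclideanSpace.single (Fin.last m) (1:ℝ), R x⟫ = (R x) (Fin.last m) := by
        rw [EuclideanSpace.inner_single_left]
        simp
      rw [← h1, ← hRn, LinearIsometryEquiv.inner_map_map]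
    -- transfer the image set through R
    have hTcomp : IsCompact ((fun p : EuclideanSpace ℝ (Fin (m+1)) × ℝ => p.1 - p.2 • u) ''
        (F ×ˢ Icc 0 r)) := by
      refine (hF.prod isCompact_Icc).image ?_
      exact continuous_fst.sub (continuous_snd.smul continuous_const)
    have him : (fun p : EuclideanSpace ℝ (Fin (m+1)) × ℝ => p.1 - p.2 • (R u)) ''
        ((R '' F) ×ˢ Icc 0 r)
        = R '' ((fun p : EuclideanSpace ℝ (Fin (m+1)) × ℝ => p.1 - p.2 • u) ''
            (F ×ˢ Icc 0 r)) := by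
      ext x
      constructor
      · rintro ⟨⟨z', s⟩, ⟨hz', hs⟩, rfl⟩
        obtain ⟨z, hzF, rfl⟩ := hz'
        refine ⟨z - s • u, ⟨(z, s), ⟨hzF, hs⟩, rfl⟩, ?_⟩
        rw [map_sub, LinearIsometryEquiv.map_smul]
      · rintro ⟨_, ⟨⟨z, s⟩, ⟨hzF, hs⟩, rfl⟩, rfl⟩
        refine ⟨(R z, s), ⟨mem_image_of_mem _ hzF, hs⟩, ?_⟩
        rw [map_sub, LinearIsometryEquiv.map_smul]
    have hpre : ∀ G : Set (EuclideanSpace ℝ (Fin (m+1))), ⇑R '' G = ⇑R.symm ⁻¹' G := by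
      intro G
      ext x
      constructor
      · rintro ⟨y, hy, rfl⟩; simpa using hy
      · intro hx; exact ⟨R.symm x, hx, by simp⟩
    have hvolR : volume ((fun p : EuclideanSpace ℝ (Fin (m+1)) × ℝ => p.1 - p.2 • (R u)) ''
        ((R '' F) ×ˢ Icc 0 r)) =
        volume ((fun p : EuclideanSpace ℝ (Fin (m+1)) × ℝ => p.1 - p.2 • u) ''
          (F ×ˢ Icc 0 r)) := by
      rw [him, hpre]
      exact R.symm.measurePreserving.measure_preimage
        hTcomp.measurableSet.nullMeasurableSet
    have hslab := slab_volume m (hF.image R.continuous) c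
      (by
        rintro _ ⟨z, hzF, rfl⟩
        rw [hlast, hFc z hzF])
      (R u) (by rw [LinearIsometryEquiv.norm_map, hu])
      (by rw [hlast]; exact hnu) hr
    rw [hvolR] at hslab
    refine hslab.trans ?_
    rw [R.isometry.hausdorffMeasure_image (Or.inl (by positivity))]

set_option maxHeartbeats 2000000 in
/-- Controlling the volume of the intersection of a polyhedron and a ball: if a closed
polyhedron `P = ⋂_j {⟨a_j, x⟩ ≤ b_j}` with `k` facets does not contain the origin in its
interior, and every facet intersects the ball `B(0,r)` with `(d−1)`-dimensional Hausdorff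
measure at most `λ·r^d·V_d`, then `P` has uniform probability measure at most `kλr` on
`B(0,r)`. -/
theorem volume_polyhedron_ball_bound (d k : ℕ) (hd : 1 ≤ d)
    (r lam : ℝ) (hr : 0 < r) (hlam : 0 < lam)
    (a : Fin k → EuclideanSpace ℝ (Fin d)) (ha : ∀ j : Fin k, a j ≠ 0)
    (b : Fin k → ℝ)
    (P : Set (EuclideanSpace ℝ (Fin d)))
    (hP : P = ⋂ j : Fin k, {x : EuclideanSpace ℝ (Fin d) | ⟪a j, x⟫ ≤ b j})
    (h0 : (0 : EuclideanSpace ℝ (Fin d)) ∉ interior P)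
    (hfacet : ∀ j : Fin k,
      MeasureTheory.Measure.hausdorffMeasure ((d : ℝ) - 1)
          (P ∩ {x : EuclideanSpace ℝ (Fin d) | ⟪a j, x⟫ = b j} ∩
            Metric.closedBall (0 : EuclideanSpace ℝ (Fin d)) r) ≤
        ENNReal.ofReal (lam * r ^ d *
          (volume (Metric.ball (0 : EuclideanSpace ℝ (Fin d)) 1)).toReal)) :
    (volume (P ∩ Metric.closedBall (0 : EuclideanSpace ℝ (Fin d)) r)).toReal /
        (volume (Metric.closedBall (0 : EuclideanSpace ℝ (Fin d)) r)).toReal ≤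
      k * lam * r := by
  obtain ⟨m, rfl⟩ : ∃ m, d = m + 1 := ⟨d - 1, (Nat.succ_pred_eq_of_pos hd).symm⟩
  have hm : ((m + 1 : ℕ) : ℝ) - 1 = (m : ℝ) := by push_cast; ring
  have hPclosed : IsClosed P := by
    rw [hP]
    exact isClosed_iInter fun j =>
      isClosed_le (Continuous.inner continuous_const continuous_id) continuous_const
  have hPconvex : Convex ℝ P := by
    rw [hP]
    refine convex_iInter fun j => convex_halfSpace_le ?_ _
    exact ⟨fun x y => inner_add_right _ _ _, fun c x => by
      rw [smul_eq_mul, real_inner_smul_right]⟩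
  set V := volume (ball (0 : EuclideanSpace ℝ (Fin (m+1))) 1) with hV
  have hVne : V ≠ 0 := (measure_ball_pos _ _ one_pos).ne'
  have hVtop : V ≠ ⊤ := measure_ball_lt_top.ne
  have hcB : volume (closedBall (0 : EuclideanSpace ℝ (Fin (m+1))) r)
      = ENNReal.ofReal (r ^ (m+1)) * V := by
    rw [Measure.addHaar_closedBall _ _ hr.le, finrank_euclideanSpace_fin]
  have main : volume (P ∩ closedBall (0 : EuclideanSpace ℝ (Fin (m+1))) r)
      ≤ ENNReal.ofReal (((k : ℝ) * lam * r) * (r ^ (m+1) * V.toReal)) := by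
    rcases eq_empty_or_nonempty (interior P) with hint | hint
    · have hfr : volume P = 0 := by
        have hf0 := Convex.addHaar_frontier volume hPconvex
        have hfr2 : frontier P = P := by
          rw [hPclosed.frontier_eq, hint, diff_empty]
        rwa [hfr2] at hf0
      have hz : volume (P ∩ closedBall (0 : EuclideanSpace ℝ (Fin (m+1))) r) = 0 :=
        measure_mono_null inter_subset_left hfr
      rw [hz]
      exact zero_le
    · obtain ⟨f, hf⟩ := geometric_hahn_banach_open_point hPconvex.interior isOpen_interior h0
      obtain ⟨y₀, hy₀⟩ := hint
      set v₀ := (InnerProductSpace.toDual ℝ (EuclideanSpace ℝ (Fin (m+1)))).symm f with hv₀def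
      have hv₀ : ∀ x, ⟪v₀, x⟫ = f x := fun x => InnerProductSpace.toDual_symm_apply
      have hf0 : ∀ x ∈ interior P, f x < 0 := by
        intro x hx
        have := hf x hx
        simpa using this
      have hv₀ne : v₀ ≠ 0 := by
        intro h
        have h1 := hf0 y₀ hy₀
        rw [← hv₀ y₀, h] at h1
        simp at h1
      set u := ‖v₀‖⁻¹ • v₀ with hudef
      have hu : ‖u‖ = 1 := norm_smul_inv_norm hv₀ne
      have hupos : (0:ℝ) < ‖v₀‖⁻¹ := by
        have := norm_pos_iff.2 hv₀ne
        positivity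
      have huP : ∀ x ∈ P, ⟪u, x⟫ ≤ 0 := by
        intro x hx
        have hfx : f x ≤ 0 := by
          by_contra hpos
          push_neg at hpos
          have hd0 : f y₀ < 0 := hf0 y₀ hy₀
          have h1 : (0:ℝ) < f x - f y₀ := by linarith
          set aa : ℝ := f x / (2 * (f x - f y₀)) with haa
          have haa0 : 0 < aa := by positivity
          have haa1 : aa ≤ 1 := by
            rw [haa, div_le_one (by linarith)]
            linarith
          have hmem := hPconvex.combo_interior_closure_mem_interior hy₀
            (subset_closure hx) haa0 (by linarith : (0:ℝ) ≤ 1 - aa) (by ring)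
          have h2 := hf0 _ hmem
          simp only [map_add, _root_.map_smul, smul_eq_mul] at h2
          have h3 : aa * (f x - f y₀) = f x / 2 := by
            rw [haa]; field_simp
          nlinarith
        rw [hudef, real_inner_smul_left, hv₀]
        exact mul_nonpos_of_nonneg_of_nonpos hupos.le hfx
      have hUopen : IsOpen {z : EuclideanSpace ℝ (Fin (m+1)) | ∀ j, ⟪a j, z⟫ < b j} := by
        have hrw : {z : EuclideanSpace ℝ (Fin (m+1)) | ∀ j, ⟪a j, z⟫ < b j} =
            ⋂ j, {z | ⟪a j, z⟫ < b j} := by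
          ext z; simp
        rw [hrw]
        exact isOpen_iInter_of_finite fun j =>
          isOpen_lt (Continuous.inner continuous_const continuous_id) continuous_const
      have hUP : {z : EuclideanSpace ℝ (Fin (m+1)) | ∀ j, ⟪a j, z⟫ < b j} ⊆ P := by
        intro z hz
        rw [hP]
        exact mem_iInter.2 fun j => (hz j).le
      have huG : ∀ y : EuclideanSpace ℝ (Fin (m+1)), (∀ j, ⟪a j, y⟫ < b j) → ⟪u, y⟫ < 0 := by
        intro y hy
        have hyi : y ∈ interior P := interior_maximal hUP hUopen hy
        have := hf0 y hyi
        rw [hudef, real_inner_smul_left, hv₀]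
        exact mul_neg_of_pos_of_neg hupos this
      set T : Fin k → Set (EuclideanSpace ℝ (Fin (m+1))) := fun j =>
        (fun p : EuclideanSpace ℝ (Fin (m+1)) × ℝ => p.1 - p.2 • u) ''
          ((P ∩ {x | ⟪a j, x⟫ = b j} ∩ closedBall 0 r) ×ˢ Icc 0 r) with hT
      have hcover : P ∩ closedBall (0 : EuclideanSpace ℝ (Fin (m+1))) r ⊆ ⋃ j, T j := by
        rintro x ⟨hxP, hxB⟩
        have hvx : ⟪u, x⟫ ≤ 0 := huP x hxP
        have hxnorm : ‖x‖ ≤ r := by rwa [mem_closedBall, dist_zero_right] at hxB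
        set S0 := {t : ℝ | t ∈ Icc 0 (-⟪u, x⟫) ∧ x + t • u ∈ P} with hS0def
        have hS00 : (0:ℝ) ∈ S0 := ⟨⟨le_refl _, neg_nonneg.2 hvx⟩, by simpa using hxP⟩
        have hS0closed : IsClosed S0 := by
          have hrw : S0 = Icc 0 (-⟪u, x⟫) ∩
              ((fun t : ℝ => x + t • u) ⁻¹' P) := rfl
          rw [hrw]
          exact isClosed_Icc.inter (hPclosed.preimage
            (continuous_const.add (continuous_id.smul continuous_const)))
        have hS0cpt : IsCompact S0 :=
          isCompact_Icc.of_isClosed_subset hS0closed fun t ht => ht.1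
        set t₀ := sSup S0 with ht₀def
        have ht₀S := hS0cpt.sSup_mem ⟨0, hS00⟩
        obtain ⟨⟨ht₀0, ht₀le⟩, hyP⟩ := ht₀S
        set y := x + t₀ • u with hy
        have hinner_y : ⟪u, y⟫ = ⟪u, x⟫ + t₀ := by
          rw [hy, inner_add_right, real_inner_smul_right, real_inner_self_eq_norm_sq, hu]
          ring
        have hynorm : ‖y‖ ≤ r := by
          have h1 : ⟪x, t₀ • u⟫ = t₀ * ⟪u, x⟫ := by
            rw [real_inner_smul_right, real_inner_comm]
          have h2 : ‖t₀ • u‖^2 = t₀^2 := by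
            rw [norm_smul, hu, mul_one, Real.norm_eq_abs, sq_abs]
          have hsq : ‖y‖^2 ≤ ‖x‖^2 := by
            rw [hy, norm_add_sq_real, h1, h2]
            nlinarith
          have hsq2 : ‖y‖^2 ≤ r^2 := by nlinarith [norm_nonneg x]
          calc ‖y‖ = Real.sqrt (‖y‖^2) := (Real.sqrt_sq (norm_nonneg y)).symm
            _ ≤ Real.sqrt (r^2) := Real.sqrt_le_sqrt hsq2
            _ = r := Real.sqrt_sq hr.le
        have hyB : y ∈ closedBall (0 : EuclideanSpace ℝ (Fin (m+1))) r := by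
          rwa [mem_closedBall, dist_zero_right]
        have hex : ∃ j, ⟪a j, y⟫ = b j := by
          by_contra hno
          push_neg at hno
          have hylt : ∀ j, ⟪a j, y⟫ < b j := by
            intro j
            refine lt_of_le_of_ne ?_ (hno j)
            have hyP' := hyP
            rw [hP] at hyP'
            exact mem_iInter.1 hyP' j
          have hult : ⟪u, y⟫ < 0 := huG y hylt
          have ht₀lt : t₀ < -⟪u, x⟫ := by rw [hinner_y] at hult; linarith
          obtain ⟨ε, hε, hball⟩ := Metric.isOpen_iff.1 hUopen y hylt
          set t₁ := min (t₀ + ε/2) (-⟪u, x⟫) with ht₁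
          have ht₁ge : t₀ ≤ t₁ := le_min (by linarith) (by linarith)
          have ht₁S : t₁ ∈ S0 := by
            refine ⟨⟨le_trans ht₀0 ht₁ge, min_le_right _ _⟩, ?_⟩
            apply hUP
            apply hball
            rw [mem_ball]
            have hdiff : x + t₁ • u - y = (t₁ - t₀) • u := by
              rw [hy, sub_smul]
              abel
            rw [dist_eq_norm, hdiff, norm_smul, hu, mul_one, Real.norm_eq_abs,
              abs_of_nonneg (by linarith)]
            have h2 : t₁ ≤ t₀ + ε/2 := min_le_left _ _
            linarith
          have hle := le_csSup hS0cpt.bddAbove ht₁S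
          have ht₁gt : t₀ < t₁ := lt_min (by linarith) ht₀lt
          rw [← ht₀def] at hle
          linarith
        obtain ⟨j, hj⟩ := hex
        have ht₀r : t₀ ≤ r := by
          have habs := abs_real_inner_le_norm u x
          rw [hu, one_mul] at habs
          have := abs_le.1 habs
          linarith [this.1, ht₀le]
        refine mem_iUnion.2 ⟨j, (y, t₀), ⟨⟨⟨hyP, hj⟩, hyB⟩, ht₀0, ht₀r⟩, ?_⟩
        show y - t₀ • u = x
        rw [hy]
        exact add_sub_cancel_right _ _
      have hperj : ∀ j, volume (T j) ≤
          ENNReal.ofReal r * ENNReal.ofReal (lam * r ^ (m+1) * V.toReal) := by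
        intro j
        have hFcomp : IsCompact (P ∩ {x | ⟪a j, x⟫ = b j} ∩
            closedBall (0 : EuclideanSpace ℝ (Fin (m+1))) r) := by
          refine (isCompact_closedBall _ _).of_isClosed_subset ?_ inter_subset_right
          exact (hPclosed.inter (isClosed_eq
            (Continuous.inner continuous_const continuous_id) continuous_const)).inter
            isClosed_closedBall
        have hFa : ∀ x ∈ P ∩ {x | ⟪a j, x⟫ = b j} ∩
            closedBall (0 : EuclideanSpace ℝ (Fin (m+1))) r, ⟪a j, x⟫ = b j :=
          fun x hx => hx.1.2
        have h1 := facet_bound m hFcomp (a j) (ha j) (b j) hFa u hu hr.le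
        refine h1.trans ?_
        refine mul_le_mul_right ?_ _
        have h2 := hfacet j
        rw [hm] at h2
        exact h2
      calc volume (P ∩ closedBall (0 : EuclideanSpace ℝ (Fin (m+1))) r)
          ≤ volume (⋃ j, T j) := measure_mono hcover
        _ ≤ ∑' j : Fin k, volume (T j) := measure_iUnion_le T
        _ = ∑ j : Fin k, volume (T j) := tsum_fintype _
        _ ≤ ∑ _j : Fin k, ENNReal.ofReal r * ENNReal.ofReal (lam * r ^ (m+1) * V.toReal) :=
            Finset.sum_le_sum fun j _ => hperj j
        _ = (k : ℕ) • (ENNReal.ofReal r * ENNReal.ofReal (lam * r ^ (m+1) * V.toReal)) := by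
            rw [Finset.sum_const, Finset.card_univ, Fintype.card_fin]
        _ = ENNReal.ofReal (((k : ℝ) * lam * r) * (r ^ (m+1) * V.toReal)) := by
            rw [nsmul_eq_mul, ← ENNReal.ofReal_mul (by positivity),
              ← ENNReal.ofReal_natCast k, ← ENNReal.ofReal_mul (by positivity)]
            congr 1
            ring
  have hdenom : (volume (closedBall (0 : EuclideanSpace ℝ (Fin (m+1))) r)).toReal
      = r ^ (m+1) * V.toReal := by
    rw [hcB, ENNReal.toReal_mul, ENNReal.toReal_ofReal (by positivity)]
  have hVpos : 0 < V.toReal := ENNReal.toReal_pos hVne hVtop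
  have hdpos : 0 < r ^ (m+1) * V.toReal := by positivity
  rw [hdenom, div_le_iff₀ hdpos]
  have hnum : (volume (P ∩ closedBall (0 : EuclideanSpace ℝ (Fin (m+1))) r)).toReal
      ≤ ((k : ℝ) * lam * r) * (r ^ (m+1) * V.toReal) :=
    ENNReal.toReal_le_of_le_ofReal (by positivity) main
  linarith
end
end
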